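/- arXiv:1505.03820 — 8 statements merged into one kernel-verified Lean document; each statement's English description precedes it below -/
import Mathlib

section
/- Let (x_1, y_1, x_2, y_2) be a solution of Model (1) on [0, ∞) with all components nonnegative at t = 0. Set V(t) = ρ_2(x_1(t) + y_1(t)) + ρ_1(x_2(t) + y_2(t)), d = min{d_1, d_2}, and M = sup{ρ_2·u(1 − u/K_1) + ρ_2 d_1 u + ρ_1 r·v(1 − v/K_2) + ρ_1 d_2 v : 0 ≤ u ≤ K_1, 0 ≤ v ≤ K_2}. Then lim sup_{t→∞} V(t) ≤ M/d; in particular Model (1) is bounded in the nonnegative cone. -/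
open Filter

open Set

/-- Last time a continuous function is in a closed set. -/
lemma exists_last_time {a s : ℝ} (f : ℝ → ℝ) (S : Set ℝ) (hS : IsClosed S)
    (hcont : ∀ t ∈ Set.Icc a s, ContinuousAt f t)
    (has : a ≤ s) (hfa : f a ∈ S) (hfs : f s ∉ S) :
    ∃ c, a ≤ c ∧ c < s ∧ f c ∈ S ∧ ∀ t, c < t → t ≤ s → f t ∉ S := by
  set A : Set ℝ := {t | t ∈ Set.Icc a s ∧ f t ∈ S} with hA
  have hAne : A.Nonempty := ⟨a, ⟨le_refl a, has⟩, hfa⟩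
  have hAbdd : BddAbove A := ⟨s, fun t ht => ht.1.2⟩
  set c := sSup A with hc
  have hcc : c ∈ closure A := csSup_mem_closure hAne hAbdd
  have hsubIcc : A ⊆ Set.Icc a s := fun t ht => ht.1
  have hcIcc : c ∈ Set.Icc a s := isClosed_Icc.closure_subset ((closure_mono hsubIcc) hcc)
  have hfc : f c ∈ S := by
    have h1 : ContinuousWithinAt f A c := (hcont c hcIcc).continuousWithinAt
    have h2 := h1.mem_closure_image hcc
    have h3 : closure (f '' A) ⊆ S := hS.closure_subset_iff.2 (by
      rintro w ⟨t, ht, rfl⟩; exact ht.2)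
    exact h3 h2
  have hlast : ∀ t, c < t → t ≤ s → f t ∉ S := by
    intro t hct hts hft
    exact absurd (le_csSup hAbdd ⟨⟨le_trans hcIcc.1 hct.le, hts⟩, hft⟩) (not_le.2 hct)
  have hcs : c < s := lt_of_le_of_ne hcIcc.2 (fun h => hfs (h ▸ hfc))
  exact ⟨c, hcIcc.1, hcs, hfc, hlast⟩

/-- If `f' = f * g` with `g` continuous at zeros of `f`, and `f 0 ≥ 0`, then `f ≥ 0` on `[0, ∞)`. -/
lemma nonneg_of_deriv_mul (f g : ℝ → ℝ)
    (hf : ∀ t : ℝ, 0 ≤ t → HasDerivAt f (f t * g t) t)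
    (hg : ∀ t : ℝ, 0 ≤ t → f t = 0 → ContinuousAt g t)
    (h0 : 0 ≤ f 0) : ∀ t : ℝ, 0 ≤ t → 0 ≤ f t := by
  intro s hs
  by_contra hneg
  push_neg at hneg
  have hcont : ∀ t ∈ Set.Icc (0:ℝ) s, ContinuousAt f t := fun t ht => (hf t ht.1).continuousAt
  obtain ⟨c, hc0, hcs, hfc, hlast⟩ :=
    exists_last_time f (Set.Ici 0) isClosed_Ici hcont hs h0 (by simpa using hneg)
  have hfc0 : f c = 0 := by
    refine le_antisymm ?_ hfc
    have htend : Tendsto f (nhdsWithin c (Set.Ioi c)) (nhds (f c)) :=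
      ((hcont c ⟨hc0, hcs.le⟩).tendsto).mono_left nhdsWithin_le_nhds
    refine le_of_tendsto htend ?_
    filter_upwards [Ioc_mem_nhdsGT hcs] with t ht
    have := hlast t ht.1 ht.2
    simp only [Set.mem_Ici, not_le] at this
    exact this.le
  have hgc : ContinuousAt g c := hg c hc0 hfc0
  obtain ⟨δ, hδ, hball⟩ : ∃ δ > 0, ∀ u : ℝ, |u - c| < δ → |g u| ≤ |g c| + 1 := by
    obtain ⟨δ, hδ, h⟩ := Metric.continuousAt_iff.1 hgc 1 one_pos
    refine ⟨δ, hδ, fun u hu => ?_⟩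
    have h2 := h (show dist u c < δ by rwa [Real.dist_eq])
    rw [Real.dist_eq] at h2
    have := abs_sub_abs_le_abs_sub (g u) (g c)
    linarith
  set C := |g c| + 1 with hC
  set b := min s (c + δ/2) with hb
  have hcb : c < b := lt_min hcs (by linarith)
  have hgron := norm_le_gronwallBound_of_norm_deriv_right_le
    (f := f) (f' := fun t => f t * g t) (δ := 0) (K := C) (ε := 0) (a := c) (b := b)
    (fun t ht => (hcont t ⟨le_trans hc0 ht.1,
      le_trans ht.2 (min_le_left _ _)⟩).continuousWithinAt)
    (fun t ht => (hf t (le_trans hc0 ht.1)).hasDerivWithinAt)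
    (by rw [hfc0]; simp)
    (fun t ht => by
      have hgt : |g t| ≤ C := by
        refine hball t ?_
        have h1 : t < c + δ/2 := lt_of_lt_of_le ht.2 (min_le_right _ _)
        rw [abs_of_nonneg (by linarith [ht.1] : (0:ℝ) ≤ t - c)]
        linarith
      have h3 : ‖f t * g t‖ = |f t| * |g t| := by rw [Real.norm_eq_abs, abs_mul]
      rw [h3, Real.norm_eq_abs]
      calc |f t| * |g t| ≤ |f t| * C := mul_le_mul_of_nonneg_left hgt (abs_nonneg _)
        _ = C * |f t| + 0 := by ring)
  have hb2 := hgron b ⟨hcb.le, le_refl b⟩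
  rw [gronwallBound_ε0_δ0] at hb2
  have hfb : f b = 0 := by
    have := norm_nonneg (f b)
    have : ‖f b‖ = 0 := le_antisymm hb2 this
    simpa using this
  exact hlast b hcb (min_le_left _ _) (by simp [hfb])

/-- If `f' ≤ -c < 0` whenever `f ≥ b`, then eventually `f ≤ b`. -/
lemma eventually_le_of_decay (f f' : ℝ → ℝ) (b c : ℝ) (hc : 0 < c)
    (hf : ∀ t : ℝ, 0 ≤ t → HasDerivAt f (f' t) t)
    (hdec : ∀ t : ℝ, 0 ≤ t → b ≤ f t → f' t ≤ -c) :
    ∃ T : ℝ, 0 ≤ T ∧ ∀ t, T ≤ t → f t ≤ b := by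
  have hstep1 : ∃ T : ℝ, 0 ≤ T ∧ f T ≤ b := by
    by_contra h
    push_neg at h
    have hanti : AntitoneOn (fun t => f t + c * t) (Set.Ici (0:ℝ)) := by
      apply antitoneOn_of_deriv_nonpos (convex_Ici 0)
      · exact fun t ht =>
          (((hf t ht).add ((hasDerivAt_id t).const_mul c)).continuousAt).continuousWithinAt
      · intro t ht
        rw [interior_Ici] at ht
        exact ((hf t ht.le).add ((hasDerivAt_id t).const_mul c)).differentiableAt.differentiableWithinAt
      · intro t ht
        rw [interior_Ici] at ht
        have hD : HasDerivAt (fun t => f t + c * t) (f' t + c * 1) t :=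
          (hf t ht.le).add ((hasDerivAt_id t).const_mul c)
        rw [hD.deriv]
        have := hdec t ht.le (h t ht.le).le
        linarith
    have hf0 : b < f 0 := h 0 le_rfl
    have hdiv : 0 < (f 0 - b)/c := div_pos (by linarith) hc
    have hT0 : 0 ≤ (f 0 - b)/c + 1 := by linarith
    have h1 := hanti (Set.mem_Ici.2 (le_refl (0:ℝ))) (Set.mem_Ici.2 hT0) hT0
    simp only [mul_zero, add_zero] at h1
    have hcT : c * ((f 0 - b)/c + 1) = (f 0 - b) + c := by
      rw [mul_add, mul_one, mul_div_cancel₀ _ hc.ne']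
    have := h ((f 0 - b)/c + 1) hT0
    linarith
  obtain ⟨T, hT0, hTb⟩ := hstep1
  refine ⟨T, hT0, fun s hTs => ?_⟩
  by_contra hbs
  push_neg at hbs
  have hcont : ∀ t ∈ Set.Icc T s, ContinuousAt f t :=
    fun t ht => (hf t (le_trans hT0 ht.1)).continuousAt
  obtain ⟨c', hc'T, hc's, hfc', hlast⟩ :=
    exists_last_time f (Set.Iic b) isClosed_Iic hcont hTs hTb (by simpa using hbs)
  have hanti : AntitoneOn f (Set.Icc c' s) := by
    apply antitoneOn_of_deriv_nonpos (convex_Icc _ _)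
    · exact fun t ht => (hcont t ⟨le_trans hc'T ht.1, ht.2⟩).continuousWithinAt
    · intro t ht
      rw [interior_Icc] at ht
      exact (hf t (le_trans hT0 (le_trans hc'T ht.1.le))).differentiableAt.differentiableWithinAt
    · intro t ht
      rw [interior_Icc] at ht
      have h0t : (0:ℝ) ≤ t := le_trans hT0 (le_trans hc'T ht.1.le)
      rw [(hf t h0t).deriv]
      have hbt : b ≤ f t := by
        have := hlast t ht.1 ht.2.le
        simp only [Set.mem_Iic, not_le] at this
        exact this.le
      linarith [hdec t h0t hbt]
  have h2 := hanti (Set.left_mem_Icc.2 hc's.le) (Set.right_mem_Icc.2 hc's.le) hc's.le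
  have : f c' ≤ b := hfc'
  linarith

/-- If `V' + d V ≤ A` eventually and `V ≥ 0`, then `limsup V ≤ A/d`. -/
lemma limsup_le_of_decay (V V' : ℝ → ℝ) (T A d : ℝ) (hd : 0 < d) (hT : 0 ≤ T)
    (hV : ∀ t : ℝ, 0 ≤ t → HasDerivAt V (V' t) t)
    (hb : ∀ t : ℝ, T ≤ t → V' t + d * V t ≤ A)
    (hlb : ∀ t : ℝ, 0 ≤ t → 0 ≤ V t) :
    limsup V atTop ≤ A / d := by
  set h : ℝ → ℝ := fun t => (V t - A / d) * Real.exp (d * t) with hh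
  have hder : ∀ t : ℝ, 0 ≤ t →
      HasDerivAt h ((V' t + d * V t - A) * Real.exp (d * t)) t := by
    intro t ht
    have h1 : HasDerivAt (fun t : ℝ => Real.exp (d * t)) (Real.exp (d * t) * (d * 1)) t :=
      HasDerivAt.exp ((hasDerivAt_id t).const_mul d)
    have h2 := ((hV t ht).sub_const (A / d)).mul h1
    have hAd : A / d * d = A := div_mul_cancel₀ A hd.ne'
    exact h2.congr_deriv (by linear_combination (-Real.exp (d * t)) * hAd)
  have hanti : AntitoneOn h (Set.Ici T) := by
    apply antitoneOn_of_deriv_nonpos (convex_Ici T)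
    · exact fun t ht => (hder t (le_trans hT ht)).continuousAt.continuousWithinAt
    · intro t ht
      rw [interior_Ici] at ht
      exact (hder t (le_trans hT ht.le)).differentiableAt.differentiableWithinAt
    · intro t ht
      rw [interior_Ici] at ht
      rw [(hder t (le_trans hT ht.le)).deriv]
      have h3 := hb t ht.le
      have h4 := Real.exp_pos (d * t)
      nlinarith
  have hVle : ∀ t, T ≤ t → V t ≤ A / d + h T * Real.exp (-(d * t)) := by
    intro t hTt
    have h1 : h t ≤ h T := hanti (Set.mem_Ici.2 (le_refl T)) (Set.mem_Ici.2 hTt) hTt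
    have h3 : V t - A / d = h t * Real.exp (-(d * t)) := by
      rw [hh]
      simp only [Real.exp_neg]
      rw [mul_assoc, mul_inv_cancel₀ (Real.exp_ne_zero _), mul_one]
    have h5 : h t * Real.exp (-(d * t)) ≤ h T * Real.exp (-(d * t)) :=
      mul_le_mul_of_nonneg_right h1 (Real.exp_nonneg _)
    linarith
  have hco : IsCoboundedUnder (· ≤ ·) atTop V :=
    isCoboundedUnder_le_of_eventually_le atTop (x := 0) (eventually_atTop.2 ⟨0, hlb⟩)
  refine le_of_forall_pos_le_add fun ε hε => ?_
  refine limsup_le_of_le hco ?_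
  have htail : Tendsto (fun t : ℝ => h T * Real.exp (-(d * t))) atTop (nhds 0) := by
    have h4 : Tendsto (fun t : ℝ => d * t) atTop atTop :=
      Tendsto.const_mul_atTop hd tendsto_id
    have h5 : Tendsto (fun t : ℝ => Real.exp (-(d * t))) atTop (nhds 0) := by
      simp only [Real.exp_neg]
      exact (Real.tendsto_exp_atTop.comp h4).inv_tendsto_atTop
    have := h5.const_mul (h T)
    simpa using this
  have hev : ∀ᶠ t in atTop, h T * Real.exp (-(d * t)) < ε :=
    htail.eventually_lt_const hε
  filter_upwards [hev, eventually_ge_atTop T] with t h5 h6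
  have := hVle t h6
  linarith

set_option maxHeartbeats 1000000 in
/-- **Ultimate boundedness of Model (1).**
Along any solution of Model (1) with nonnegative initial conditions, the
weighted total population `V(t) = ρ₂(x₁(t)+y₁(t)) + ρ₁(x₂(t)+y₂(t))` satisfies
`limsup_{t→∞} V(t) ≤ M/d`, where `d = min{d₁, d₂}` and `M` is the supremum of
`ρ₂·u(1 − u/K₁) + ρ₂d₁u + ρ₁·r·v(1 − v/K₂) + ρ₁d₂v` over `0 ≤ u ≤ K₁`,
`0 ≤ v ≤ K₂`. -/
theorem model1_ultimately_bounded
    (r a1 a2 K1 K2 d1 d2 ρ1 ρ2 : ℝ)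
    (hr : 0 < r) (ha1 : 0 < a1) (ha2 : 0 < a2) (hK1 : 0 < K1) (hK2 : 0 < K2)
    (hd1 : 0 < d1) (hd2 : 0 < d2) (hρ1 : 0 ≤ ρ1) (hρ2 : 0 ≤ ρ2)
    (x1 y1 x2 y2 : ℝ → ℝ)
    (hx1 : ∀ t : ℝ, 0 ≤ t → HasDerivAt x1
      (x1 t * (1 - x1 t / K1) - a1 * x1 t * y1 t / (1 + x1 t)) t)
    (hy1 : ∀ t : ℝ, 0 ≤ t → HasDerivAt y1
      (a1 * x1 t * y1 t / (1 + x1 t) - d1 * y1 t +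
        ρ1 * (a1 * x1 t * y1 t * y2 t / (1 + x1 t) -
              a2 * x2 t * y1 t * y2 t / (1 + x2 t))) t)
    (hx2 : ∀ t : ℝ, 0 ≤ t → HasDerivAt x2
      (r * x2 t * (1 - x2 t / K2) - a2 * x2 t * y2 t / (1 + x2 t)) t)
    (hy2 : ∀ t : ℝ, 0 ≤ t → HasDerivAt y2
      (a2 * x2 t * y2 t / (1 + x2 t) - d2 * y2 t +
        ρ2 * (a2 * x2 t * y1 t * y2 t / (1 + x2 t) -
              a1 * x1 t * y1 t * y2 t / (1 + x1 t))) t)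
    (hx10 : 0 ≤ x1 0) (hy10 : 0 ≤ y1 0) (hx20 : 0 ≤ x2 0) (hy20 : 0 ≤ y2 0)
    (V : ℝ → ℝ)
    (hV : ∀ t : ℝ, V t = ρ2 * (x1 t + y1 t) + ρ1 * (x2 t + y2 t))
    (d M : ℝ)
    (hd : d = min d1 d2)
    (hM : M = sSup {w : ℝ | ∃ u v : ℝ, 0 ≤ u ∧ u ≤ K1 ∧ 0 ≤ v ∧ v ≤ K2 ∧
      w = ρ2 * (u * (1 - u / K1)) + ρ2 * d1 * u +
          ρ1 * (r * (v * (1 - v / K2))) + ρ1 * d2 * v}) :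
    limsup V atTop ≤ M / d := by
  have hd0 : 0 < d := by rw [hd]; exact lt_min hd1 hd2
  have hdd1 : d ≤ d1 := hd ▸ min_le_left _ _
  have hdd2 : d ≤ d2 := hd ▸ min_le_right _ _
  -- nonnegativity of all components
  have hx1n : ∀ t : ℝ, 0 ≤ t → 0 ≤ x1 t := by
    apply nonneg_of_deriv_mul x1 (fun t => (1 - x1 t / K1) - a1 * y1 t / (1 + x1 t))
    · intro t ht; convert hx1 t ht using 1; ring
    · intro t ht h0
      have hcx : ContinuousAt x1 t := (hx1 t ht).continuousAt
      have hcy : ContinuousAt y1 t := (hy1 t ht).continuousAt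
      have hden : (fun s => 1 + x1 s) t ≠ 0 := by simp [h0]
      exact (continuousAt_const.sub (hcx.div_const _)).sub
        ((continuousAt_const.mul hcy).div (continuousAt_const.add hcx) hden)
    · exact hx10
  have hx2n : ∀ t : ℝ, 0 ≤ t → 0 ≤ x2 t := by
    apply nonneg_of_deriv_mul x2 (fun t => r * (1 - x2 t / K2) - a2 * y2 t / (1 + x2 t))
    · intro t ht; convert hx2 t ht using 1; ring
    · intro t ht h0
      have hcx : ContinuousAt x2 t := (hx2 t ht).continuousAt
      have hcy : ContinuousAt y2 t := (hy2 t ht).continuousAt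
      have hden : (fun s => 1 + x2 s) t ≠ 0 := by simp [h0]
      exact (continuousAt_const.mul (continuousAt_const.sub (hcx.div_const _))).sub
        ((continuousAt_const.mul hcy).div (continuousAt_const.add hcx) hden)
    · exact hx20
  have hy1n : ∀ t : ℝ, 0 ≤ t → 0 ≤ y1 t := by
    apply nonneg_of_deriv_mul y1 (fun t => a1 * x1 t / (1 + x1 t) - d1 +
      ρ1 * (a1 * x1 t * y2 t / (1 + x1 t) - a2 * x2 t * y2 t / (1 + x2 t)))
    · intro t ht; convert hy1 t ht using 1; ring
    · intro t ht _
      have hcx1 : ContinuousAt x1 t := (hx1 t ht).continuousAt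
      have hcx2 : ContinuousAt x2 t := (hx2 t ht).continuousAt
      have hcy2 : ContinuousAt y2 t := (hy2 t ht).continuousAt
      have hden1 : (fun s => 1 + x1 s) t ≠ 0 := by
        have := hx1n t ht; simp only []; intro h; linarith [this]
      have hden2 : (fun s => 1 + x2 s) t ≠ 0 := by
        have := hx2n t ht; simp only []; intro h; linarith [this]
      exact (((continuousAt_const.mul hcx1).div (continuousAt_const.add hcx1) hden1).sub
        continuousAt_const).add (continuousAt_const.mul
          ((((continuousAt_const.mul hcx1).mul hcy2).div (continuousAt_const.add hcx1) hden1).sub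
           (((continuousAt_const.mul hcx2).mul hcy2).div (continuousAt_const.add hcx2) hden2)))
    · exact hy10
  have hy2n : ∀ t : ℝ, 0 ≤ t → 0 ≤ y2 t := by
    apply nonneg_of_deriv_mul y2 (fun t => a2 * x2 t / (1 + x2 t) - d2 +
      ρ2 * (a2 * x2 t * y1 t / (1 + x2 t) - a1 * x1 t * y1 t / (1 + x1 t)))
    · intro t ht; convert hy2 t ht using 1; ring
    · intro t ht _
      have hcx1 : ContinuousAt x1 t := (hx1 t ht).continuousAt
      have hcx2 : ContinuousAt x2 t := (hx2 t ht).continuousAt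
      have hcy1 : ContinuousAt y1 t := (hy1 t ht).continuousAt
      have hden1 : (fun s => 1 + x1 s) t ≠ 0 := by
        have := hx1n t ht; simp only []; intro h; linarith [this]
      have hden2 : (fun s => 1 + x2 s) t ≠ 0 := by
        have := hx2n t ht; simp only []; intro h; linarith [this]
      exact (((continuousAt_const.mul hcx2).div (continuousAt_const.add hcx2) hden2).sub
        continuousAt_const).add (continuousAt_const.mul
          ((((continuousAt_const.mul hcx2).mul hcy1).div (continuousAt_const.add hcx2) hden2).sub
           (((continuousAt_const.mul hcx1).mul hcy1).div (continuousAt_const.add hcx1) hden1)))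
    · exact hy20
  -- eventual bounds on x1, x2
  have hx1K : ∀ ε : ℝ, 0 < ε → ∃ T, 0 ≤ T ∧ ∀ t, T ≤ t → x1 t ≤ K1 + ε := by
    intro ε hε
    apply eventually_le_of_decay x1 _ (K1 + ε) ((K1 + ε) * ε / K1) (by positivity) hx1
    intro t ht hge
    have hx := hx1n t ht
    have hy := hy1n t ht
    have h1 : 0 ≤ a1 * x1 t * y1 t / (1 + x1 t) := by positivity
    have key : x1 t * (K1 - x1 t) ≤ -((K1 + ε) * ε) := by
      have hw : 0 ≤ x1 t - (K1 + ε) := sub_nonneg.2 hge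
      nlinarith [mul_nonneg hw hε.le, mul_nonneg hw hK1.le, sq_nonneg (x1 t - (K1 + ε))]
    have h2 : x1 t * (1 - x1 t / K1) ≤ -((K1 + ε) * ε / K1) := by
      have e1 : x1 t * (1 - x1 t / K1) = x1 t * (K1 - x1 t) / K1 := by
        field_simp
      rw [e1, show -((K1 + ε) * ε / K1) = -((K1 + ε) * ε) / K1 from by ring]
      gcongr
    linarith
  have hx2K : ∀ ε : ℝ, 0 < ε → ∃ T, 0 ≤ T ∧ ∀ t, T ≤ t → x2 t ≤ K2 + ε := by
    intro ε hε
    apply eventually_le_of_decay x2 _ (K2 + ε) (r * ((K2 + ε) * ε) / K2) (by positivity) hx2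
    intro t ht hge
    have hx := hx2n t ht
    have hy := hy2n t ht
    have h1 : 0 ≤ a2 * x2 t * y2 t / (1 + x2 t) := by positivity
    have key : x2 t * (K2 - x2 t) ≤ -((K2 + ε) * ε) := by
      have hw : 0 ≤ x2 t - (K2 + ε) := sub_nonneg.2 hge
      nlinarith [mul_nonneg hw hε.le, mul_nonneg hw hK2.le, sq_nonneg (x2 t - (K2 + ε))]
    have key2 : r * (x2 t * (K2 - x2 t)) ≤ r * -((K2 + ε) * ε) :=
      mul_le_mul_of_nonneg_left key hr.le
    have h2 : r * x2 t * (1 - x2 t / K2) ≤ -(r * ((K2 + ε) * ε) / K2) := by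
      have e1 : r * x2 t * (1 - x2 t / K2) = r * (x2 t * (K2 - x2 t)) / K2 := by
        field_simp
      rw [e1, show -(r * ((K2 + ε) * ε) / K2) = (r * -((K2 + ε) * ε)) / K2 from by ring]
      gcongr
    linarith
  -- substitute V
  obtain rfl : V = fun t => ρ2 * (x1 t + y1 t) + ρ1 * (x2 t + y2 t) := funext hV
  -- derivative of V
  have hVd : ∀ t : ℝ, 0 ≤ t →
      HasDerivAt (fun t => ρ2 * (x1 t + y1 t) + ρ1 * (x2 t + y2 t))
        (ρ2 * (x1 t * (1 - x1 t / K1) - d1 * y1 t)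
          + ρ1 * (r * x2 t * (1 - x2 t / K2) - d2 * y2 t)) t := by
    intro t ht
    have h := (((hx1 t ht).add (hy1 t ht)).const_mul ρ2).add
      (((hx2 t ht).add (hy2 t ht)).const_mul ρ1)
    exact h.congr_deriv (by ring)
  -- V is nonnegative
  have hVnn : ∀ t : ℝ, 0 ≤ t → 0 ≤ ρ2 * (x1 t + y1 t) + ρ1 * (x2 t + y2 t) := by
    intro t ht
    have := hx1n t ht; have := hy1n t ht; have := hx2n t ht; have := hy2n t ht
    have h1 : 0 ≤ ρ2 * (x1 t + y1 t) := mul_nonneg hρ2 (by linarith)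
    have h2 : 0 ≤ ρ1 * (x2 t + y2 t) := mul_nonneg hρ1 (by linarith)
    linarith
  -- bounded above supremum set
  have hBdd : BddAbove {w : ℝ | ∃ u v : ℝ, 0 ≤ u ∧ u ≤ K1 ∧ 0 ≤ v ∧ v ≤ K2 ∧
      w = ρ2 * (u * (1 - u / K1)) + ρ2 * d1 * u +
          ρ1 * (r * (v * (1 - v / K2))) + ρ1 * d2 * v} := by
    refine ⟨ρ2 * K1 + ρ2 * d1 * K1 + ρ1 * (r * K2) + ρ1 * d2 * K2, ?_⟩
    rintro w ⟨u, v, h1, h2, h3, h4, rfl⟩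
    have g1 : u * (1 - u / K1) ≤ K1 := by
      nlinarith [mul_nonneg h1 (div_nonneg h1 hK1.le)]
    have g2 : v * (1 - v / K2) ≤ K2 := by
      nlinarith [mul_nonneg h3 (div_nonneg h3 hK2.le)]
    have e1 := mul_le_mul_of_nonneg_left g1 hρ2
    have e2 := mul_le_mul_of_nonneg_left h2 (mul_nonneg hρ2 hd1.le)
    have e3 := mul_le_mul_of_nonneg_left g2 hr.le
    have e4 := mul_le_mul_of_nonneg_left e3 hρ1
    have e5 := mul_le_mul_of_nonneg_left h4 (mul_nonneg hρ1 hd2.le)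
    linarith [e1, e2, e4, e5]
  have hMem : ∀ u v : ℝ, 0 ≤ u → u ≤ K1 → 0 ≤ v → v ≤ K2 →
      ρ2 * (u * (1 - u / K1)) + ρ2 * d1 * u +
        ρ1 * (r * (v * (1 - v / K2))) + ρ1 * d2 * v ≤ M := by
    intro u v h1 h2 h3 h4
    rw [hM]
    exact le_csSup hBdd ⟨u, v, h1, h2, h3, h4, rfl⟩
  -- main ε-argument
  refine le_of_forall_pos_le_add fun δ hδ => ?_
  obtain ⟨ε, hε0, hεle⟩ : ∃ ε : ℝ, 0 < ε ∧ (ρ2 * d1 + ρ1 * d2) * ε ≤ d * δ := by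
    refine ⟨d * δ / (ρ2 * d1 + ρ1 * d2 + 1), by positivity, ?_⟩
    have hC1 : (0:ℝ) < ρ2 * d1 + ρ1 * d2 + 1 := by positivity
    calc (ρ2 * d1 + ρ1 * d2) * (d * δ / (ρ2 * d1 + ρ1 * d2 + 1))
        ≤ (ρ2 * d1 + ρ1 * d2 + 1) * (d * δ / (ρ2 * d1 + ρ1 * d2 + 1)) := by
          have : (0:ℝ) ≤ d * δ / (ρ2 * d1 + ρ1 * d2 + 1) := by positivity
          nlinarith
      _ = d * δ := by rw [mul_comm, div_mul_cancel₀ _ hC1.ne']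
  obtain ⟨T1, hT10, hT1⟩ := hx1K ε hε0
  obtain ⟨T2, hT20, hT2⟩ := hx2K ε hε0
  have hkey : ∀ t : ℝ, max T1 T2 ≤ t →
      (ρ2 * (x1 t * (1 - x1 t / K1) - d1 * y1 t)
        + ρ1 * (r * x2 t * (1 - x2 t / K2) - d2 * y2 t))
        + d * (ρ2 * (x1 t + y1 t) + ρ1 * (x2 t + y2 t)) ≤
        M + (ρ2 * d1 + ρ1 * d2) * ε := by
    intro t hTt
    have h0t : (0:ℝ) ≤ t := le_trans hT10 (le_trans (le_max_left _ _) hTt)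
    have hu0 := hx1n t h0t
    have hv0 := hx2n t h0t
    have hb1 := hy1n t h0t
    have hb2 := hy2n t h0t
    have huK : x1 t ≤ K1 + ε := hT1 t (le_trans (le_max_left _ _) hTt)
    have hvK : x2 t ≤ K2 + ε := hT2 t (le_trans (le_max_right _ _) hTt)
    have hmid : (ρ2 * (x1 t * (1 - x1 t / K1) - d1 * y1 t)
        + ρ1 * (r * x2 t * (1 - x2 t / K2) - d2 * y2 t))
        + d * (ρ2 * (x1 t + y1 t) + ρ1 * (x2 t + y2 t)) ≤
        ρ2 * (x1 t * (1 - x1 t / K1)) + ρ2 * d1 * x1 t +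
        ρ1 * (r * (x2 t * (1 - x2 t / K2))) + ρ1 * d2 * x2 t := by
      nlinarith [mul_nonneg (mul_nonneg hρ2 (by linarith : (0:ℝ) ≤ d1 - d)) hb1,
        mul_nonneg (mul_nonneg hρ1 (by linarith : (0:ℝ) ≤ d2 - d)) hb2,
        mul_nonneg (mul_nonneg hρ2 (by linarith : (0:ℝ) ≤ d1 - d)) hu0,
        mul_nonneg (mul_nonneg hρ1 (by linarith : (0:ℝ) ≤ d2 - d)) hv0]
    have hA1 : ρ2 * (x1 t * (1 - x1 t / K1)) + ρ2 * d1 * x1 t ≤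
        ρ2 * (min (x1 t) K1 * (1 - min (x1 t) K1 / K1)) + ρ2 * d1 * min (x1 t) K1 +
        ρ2 * d1 * ε := by
      rcases le_total (x1 t) K1 with h | h
      · rw [min_eq_left h]
        nlinarith [mul_nonneg (mul_nonneg hρ2 hd1.le) hε0.le]
      · rw [min_eq_right h, div_self hK1.ne']
        have h5 : x1 t * (1 - x1 t / K1) ≤ 0 := by
          have h6 : 1 - x1 t / K1 ≤ 0 := by
            rw [sub_nonpos]; exact (one_le_div hK1).2 h
          exact mul_nonpos_of_nonneg_of_nonpos hu0 h6
        nlinarith [mul_nonneg hρ2 (neg_nonneg.2 h5),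
          mul_nonneg (mul_nonneg hρ2 hd1.le) (by linarith : (0:ℝ) ≤ K1 + ε - x1 t)]
    have hA2 : ρ1 * (r * (x2 t * (1 - x2 t / K2))) + ρ1 * d2 * x2 t ≤
        ρ1 * (r * (min (x2 t) K2 * (1 - min (x2 t) K2 / K2))) + ρ1 * d2 * min (x2 t) K2 +
        ρ1 * d2 * ε := by
      rcases le_total (x2 t) K2 with h | h
      · rw [min_eq_left h]
        nlinarith [mul_nonneg (mul_nonneg hρ1 hd2.le) hε0.le]
      · rw [min_eq_right h, div_self hK2.ne']
        have h5 : x2 t * (1 - x2 t / K2) ≤ 0 := by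
          have h6 : 1 - x2 t / K2 ≤ 0 := by
            rw [sub_nonpos]; exact (one_le_div hK2).2 h
          exact mul_nonpos_of_nonneg_of_nonpos hv0 h6
        nlinarith [mul_nonneg (mul_nonneg hρ1 hr.le) (neg_nonneg.2 h5),
          mul_nonneg (mul_nonneg hρ1 hd2.le) (by linarith : (0:ℝ) ≤ K2 + ε - x2 t)]
    have hMem' := hMem (min (x1 t) K1) (min (x2 t) K2)
      (le_min hu0 hK1.le) (min_le_right _ _) (le_min hv0 hK2.le) (min_le_right _ _)
    nlinarith [hmid, hA1, hA2, hMem']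
  have hlim := limsup_le_of_decay _ _ (max T1 T2) (M + (ρ2 * d1 + ρ1 * d2) * ε) d hd0
    (le_trans hT10 (le_max_left _ _)) hVd hkey hVnn
  have hfin : (M + (ρ2 * d1 + ρ1 * d2) * ε) / d ≤ M / d + δ := by
    rw [div_le_iff₀ hd0,
      show (M / d + δ) * d = M + δ * d from by rw [add_mul, div_mul_cancel₀ _ hd0.ne']]
    nlinarith [hεle]
  exact le_trans hlim hfin
end

section
/- Suppose a_iK_i/(1+K_i) < d_i for both i = 1 and i = 2 (equivalently μ_i > K_i, where μ_i = d_i/(a_i − d_i) when a_i > d_i). Then the boundary equilibrium (K_1, 0, K_2, 0) of Model (1) is globally asymptotically stable: every solution of Model (1) on [0, ∞) with x_1(0) > 0, x_2(0) > 0, y_1(0) ≥ 0, y_2(0) ≥ 0 satisfies (x_1(t), y_1(t), x_2(t), y_2(t)) → (K_1, 0, K_2, 0) as t → ∞. -/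
open Filter Set Real

private lemma abs_sub_le_abs_add_abs (A B : ℝ) : |A - B| ≤ |A| + |B| := by
  rw [sub_eq_add_neg]
  simpa [abs_neg] using abs_add_le A (-B)

private lemma gz_aux (z z' : ℝ → ℝ) (M b : ℝ)
    (hd : ∀ t ∈ Icc (0:ℝ) b, HasDerivAt z (z' t) t)
    (hb : ∀ t ∈ Icc (0:ℝ) b, |z' t| ≤ M * |z t|)
    (h0 : z 0 = 0) : ∀ t ∈ Icc (0:ℝ) b, z t = 0 := by
  intro t ht
  have hcont : ContinuousOn z (Icc (0:ℝ) b) :=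
    fun s hs => (hd s hs).continuousAt.continuousWithinAt
  have key := norm_le_gronwallBound_of_norm_deriv_right_le (f := z) (f' := z')
    (δ := 0) (K := M) (ε := 0) (a := 0) (b := b) hcont
    (fun s hs => (hd s (Ico_subset_Icc_self hs)).hasDerivWithinAt)
    (by simp [h0])
    (fun s hs => by simpa [Real.norm_eq_abs] using hb s (Ico_subset_Icc_self hs)) t ht
  rw [gronwallBound_ε0] at key
  simp only [zero_mul, Real.norm_eq_abs] at key
  exact abs_eq_zero.mp (le_antisymm key (abs_nonneg _))

private lemma gz_rev (z z' : ℝ → ℝ) (M b : ℝ) (hb0 : 0 ≤ b)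
    (hd : ∀ t ∈ Icc (0:ℝ) b, HasDerivAt z (z' t) t)
    (hbnd : ∀ t ∈ Icc (0:ℝ) b, |z' t| ≤ M * |z t|)
    (h0 : z b = 0) : z 0 = 0 := by
  have key := gz_aux (fun s => z (b - s)) (fun s => z' (b - s) * (-1)) M b ?_ ?_ ?_
  · have := key b ⟨hb0, le_refl b⟩
    simpa using this
  · intro s hs
    have hmem : b - s ∈ Icc (0:ℝ) b := ⟨by linarith [hs.2], by linarith [hs.1]⟩
    exact (hd _ hmem).comp s ((hasDerivAt_id s).const_sub b)
  · intro s hs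
    have hmem : b - s ∈ Icc (0:ℝ) b := ⟨by linarith [hs.2], by linarith [hs.1]⟩
    simpa [abs_mul] using hbnd _ hmem
  · simpa using h0

private lemma pos_on (z z' : ℝ → ℝ)
    (hd : ∀ t : ℝ, 0 ≤ t → HasDerivAt z (z' t) t)
    (hb : ∀ b : ℝ, 0 < b → (∀ t ∈ Icc (0:ℝ) b, 0 ≤ z t) →
      ∃ M, ∀ t ∈ Icc (0:ℝ) b, |z' t| ≤ M * |z t|)
    (h0 : 0 < z 0) : ∀ t : ℝ, 0 ≤ t → 0 < z t := by
  intro t ht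
  by_contra hle
  push_neg at hle
  have ht0 : 0 < t := by
    rcases ht.eq_or_lt with h | h
    · rw [← h] at hle; linarith
    · exact h
  have hcont : ContinuousOn z (Icc (0:ℝ) t) :=
    fun s hs => (hd s hs.1).continuousAt.continuousWithinAt
  obtain ⟨s, hs, hzs⟩ : ∃ s ∈ Icc (0:ℝ) t, z s = 0 := by
    have h00 : (0:ℝ) ∈ Icc (z t) (z 0) := ⟨hle, h0.le⟩
    obtain ⟨s, hs, hzs⟩ := intermediate_value_Icc' ht0.le hcont h00
    exact ⟨s, hs, hzs⟩
  set S := Icc (0:ℝ) t ∩ z ⁻¹' {0} with hSdef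
  have hSne : S.Nonempty := ⟨s, hs, hzs⟩
  have hSclosed : IsClosed S :=
    hcont.preimage_isClosed_of_isClosed isClosed_Icc (isClosed_singleton (x := (0:ℝ)))
  have hSbdd : BddBelow S := ⟨0, fun u hu => hu.1.1⟩
  have hs0S : sInf S ∈ S := hSclosed.csInf_mem hSne hSbdd
  set s0 := sInf S with hs0def
  have hs0t : s0 ∈ Icc (0:ℝ) t := hs0S.1
  have hzs0 : z s0 = 0 := hs0S.2
  have hpos : ∀ u ∈ Icc (0:ℝ) s0, 0 ≤ z u := by
    intro u hu
    by_contra hneg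
    push_neg at hneg
    have hcont' : ContinuousOn z (Icc (0:ℝ) u) :=
      fun v hv => (hd v hv.1).continuousAt.continuousWithinAt
    have h00 : (0:ℝ) ∈ Icc (z u) (z 0) := ⟨hneg.le, h0.le⟩
    obtain ⟨w, hw, hzw⟩ := intermediate_value_Icc' hu.1 hcont' h00
    have hwS : w ∈ S := ⟨⟨hw.1, le_trans hw.2 (le_trans hu.2 hs0t.2)⟩, hzw⟩
    have : s0 ≤ w := csInf_le hSbdd hwS
    have hws0 : w = s0 := le_antisymm (le_trans hw.2 hu.2) this
    have hus0 : u = s0 := le_antisymm hu.2 (le_trans this hw.2)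
    rw [hus0, hzs0] at hneg
    linarith
  have hs00 : 0 < s0 := by
    rcases hs0t.1.eq_or_lt with h | h
    · rw [← h] at hzs0; linarith
    · exact h
  obtain ⟨M, hM⟩ := hb s0 hs00 hpos
  have := gz_rev z z' M s0 hs00.le (fun u hu => hd u hu.1) hM hzs0
  linarith

private lemma nonneg_on (z z' : ℝ → ℝ)
    (hd : ∀ t : ℝ, 0 ≤ t → HasDerivAt z (z' t) t)
    (hb : ∀ b : ℝ, 0 < b → ∃ M, ∀ t ∈ Icc (0:ℝ) b, |z' t| ≤ M * |z t|)
    (h0 : 0 ≤ z 0) : ∀ t : ℝ, 0 ≤ t → 0 ≤ z t := by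
  rcases h0.eq_or_lt with h | h
  · intro t ht
    rcases ht.eq_or_lt with h' | h'
    · rw [← h']; linarith
    · obtain ⟨M, hM⟩ := hb t h'
      have := gz_aux z z' M t (fun u hu => hd u hu.1) hM h.symm t ⟨ht, le_refl t⟩
      linarith [this]
  · intro t ht
    exact (pos_on z z' hd (fun b hb' _ => hb b hb') h t ht).le

private lemma stays_le (u u' : ℝ → ℝ) (C T : ℝ)
    (hd : ∀ t : ℝ, T ≤ t → HasDerivAt u (u' t) t)
    (hneg : ∀ t : ℝ, T ≤ t → C ≤ u t → u' t < 0)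
    (hstart : u T ≤ C) : ∀ t : ℝ, T ≤ t → u t ≤ C := by
  intro t2 ht2
  by_contra hgt
  push_neg at hgt
  have hT2 : T < t2 := by
    rcases ht2.eq_or_lt with h | h
    · rw [← h] at hgt; linarith
    · exact h
  have hcont : ∀ s : ℝ, T ≤ s → ContinuousAt u s := fun s hs => (hd s hs).continuousAt
  have hcontOn : ContinuousOn u (Icc T t2) := fun s hs => (hcont s hs.1).continuousWithinAt
  set S := Icc T t2 ∩ u ⁻¹' (Iic C) with hSdef
  have hSne : S.Nonempty := ⟨T, ⟨le_refl T, hT2.le⟩, hstart⟩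
  have hSclosed : IsClosed S := hcontOn.preimage_isClosed_of_isClosed isClosed_Icc isClosed_Iic
  have hSbdd : BddAbove S := ⟨t2, fun s hs => hs.1.2⟩
  have hs0S : sSup S ∈ S := hSclosed.csSup_mem hSne hSbdd
  set s0 := sSup S with hs0def
  have hs0T : T ≤ s0 := hs0S.1.1
  have hs0C : u s0 ≤ C := hs0S.2
  have hs0t2 : s0 < t2 := by
    rcases hs0S.1.2.eq_or_lt with h | h
    · rw [h] at hs0C; linarith
    · exact h
  have habove : ∀ x ∈ Ioc s0 t2, C < u x := by
    intro x hx
    by_contra h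
    push_neg at h
    have hxS : x ∈ S := ⟨⟨le_trans hs0T hx.1.le, hx.2⟩, h⟩
    exact absurd (le_csSup hSbdd hxS) (not_le.2 hx.1)
  have hanti : StrictAntiOn u (Icc s0 t2) := by
    apply strictAntiOn_of_deriv_neg (convex_Icc _ _)
    · exact fun x hx => (hcont x (le_trans hs0T hx.1)).continuousWithinAt
    · intro x hx
      rw [interior_Icc] at hx
      have hTx : T ≤ x := le_trans hs0T hx.1.le
      rw [(hd x hTx).deriv]
      exact hneg x hTx (habove x ⟨hx.1, hx.2.le⟩).le
  have hle : u t2 ≤ u s0 := by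
    have htend : Tendsto u (nhdsWithin s0 (Ioi s0)) (nhds (u s0)) :=
      (hcont s0 hs0T).tendsto.mono_left nhdsWithin_le_nhds
    apply ge_of_tendsto htend
    filter_upwards [Ioo_mem_nhdsGT_of_mem ⟨le_refl s0, hs0t2⟩] with x hx
    exact (hanti ⟨hx.1.le, hx.2.le⟩ ⟨hs0t2.le, le_refl t2⟩ hx.2).le
  linarith

private lemma reaches_le (u u' : ℝ → ℝ) (C c T : ℝ) (hc : 0 < c)
    (hd : ∀ t : ℝ, T ≤ t → HasDerivAt u (u' t) t)
    (hneg : ∀ t : ℝ, T ≤ t → C ≤ u t → u' t ≤ -c) :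
    ∃ t, T ≤ t ∧ u t ≤ C := by
  by_contra h
  push_neg at h
  have hg : ∀ t : ℝ, T ≤ t → HasDerivAt (fun s => u s + c * s) (u' t + c) t :=
    fun t ht => by
      have h := (hd t ht).add ((hasDerivAt_id' t).const_mul c)
      rw [mul_one] at h
      exact h
  have hmono : AntitoneOn (fun s => u s + c * s) (Ici T) := by
    apply antitoneOn_of_deriv_nonpos (convex_Ici T)
    · exact fun x hx => ((hg x hx).continuousAt).continuousWithinAt
    · intro x hx
      rw [interior_Ici] at hx
      exact ((hg x hx.le).differentiableAt).differentiableWithinAt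
    · intro x hx
      rw [interior_Ici] at hx
      rw [(hg x hx.le).deriv]
      linarith [hneg x hx.le (h x hx.le).le]
  set t := T + (u T - C) / c + 1 with htdef
  have hTC : C < u T := h T (le_refl T)
  have hdivnn : 0 ≤ (u T - C) / c := div_nonneg (by linarith) hc.le
  have hTt : T ≤ t := by rw [htdef]; linarith
  have hm := hmono (self_mem_Ici) (mem_Ici.2 hTt) hTt
  simp only at hm
  have hct : c * (t - T) = (u T - C) + c := by
    rw [htdef]; field_simp; ring
  have hut : u t ≤ C - c := by nlinarith [hm, hct]
  linarith [h t hTt]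

private lemma ev_stays_le (u u' : ℝ → ℝ) (C c T : ℝ) (hc : 0 < c)
    (hd : ∀ t : ℝ, T ≤ t → HasDerivAt u (u' t) t)
    (hneg : ∀ t : ℝ, T ≤ t → C ≤ u t → u' t ≤ -c) :
    ∃ T', T ≤ T' ∧ ∀ t, T' ≤ t → u t ≤ C := by
  obtain ⟨T', hT', hle⟩ := reaches_le u u' C c T hc hd hneg
  refine ⟨T', hT', stays_le u u' C T' (fun t ht => hd t (hT'.trans ht))
    (fun t ht hC => lt_of_le_of_lt (hneg t (hT'.trans ht) hC) (by linarith)) hle⟩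

private lemma stays_ge (u u' : ℝ → ℝ) (C T : ℝ)
    (hd : ∀ t : ℝ, T ≤ t → HasDerivAt u (u' t) t)
    (hpos : ∀ t : ℝ, T ≤ t → u t ≤ C → 0 < u' t)
    (hstart : C ≤ u T) : ∀ t : ℝ, T ≤ t → C ≤ u t := by
  have key := stays_le (fun s => -u s) (fun s => -u' s) (-C) T
    (fun t ht => (hd t ht).neg)
    (fun t ht hC => by
      have hC' : -C ≤ -u t := hC
      have h1 : u t ≤ C := by linarith
      show -u' t < 0
      linarith [hpos t ht h1])
    (show -u T ≤ -C by linarith)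
  intro t ht
  have h2 : -u t ≤ -C := key t ht
  linarith

private lemma reaches_ge_growth (u u' : ℝ → ℝ) (C ε T : ℝ) (hε : 0 < ε)
    (hd : ∀ t : ℝ, T ≤ t → HasDerivAt u (u' t) t)
    (hposT : 0 < u T)
    (hgrow : ∀ t : ℝ, T ≤ t → u t ≤ C → ε * u t ≤ u' t) :
    ∃ t, T ≤ t ∧ C ≤ u t := by
  by_contra h
  push_neg at h
  have hw : ∀ t : ℝ, T ≤ t → HasDerivAt (fun s => u s * Real.exp (-ε * s))
      (u' t * Real.exp (-ε * t) + u t * (Real.exp (-ε * t) * (-ε))) t := by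
    intro t ht
    have he : HasDerivAt (fun s : ℝ => Real.exp (-ε * s)) (Real.exp (-ε * t) * (-ε)) t := by
      have := (Real.hasDerivAt_exp (-ε * t)).comp t ((hasDerivAt_id t).const_mul (-ε))
      simpa [Function.comp_def, mul_comm] using this
    exact (hd t ht).mul he
  have hmono : MonotoneOn (fun s => u s * Real.exp (-ε * s)) (Ici T) := by
    apply monotoneOn_of_deriv_nonneg (convex_Ici T)
    · exact fun x hx => ((hw x hx).continuousAt).continuousWithinAt
    · intro x hx
      rw [interior_Ici] at hx
      exact ((hw x hx.le).differentiableAt).differentiableWithinAt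
    · intro x hx
      rw [interior_Ici] at hx
      rw [(hw x hx.le).deriv]
      have := hgrow x hx.le (h x hx.le).le
      nlinarith [Real.exp_pos (-ε * x)]
  -- pick t := T + C / (u T) / ε
  rcases le_or_gt C (u T) with hC | hC
  · exact absurd hC (not_le.2 (h T (le_refl T)))
  set t := T + C / u T / ε with htdef
  have hCpos : 0 < C := lt_trans hposT hC
  have hq : 0 ≤ C / u T / ε := by positivity
  have hTt : T ≤ t := by rw [htdef]; linarith
  have hm := hmono (self_mem_Ici) (mem_Ici.2 hTt) hTt
  simp only at hm
  have hexp : Real.exp (-ε * T) = Real.exp (ε * (t - T)) * Real.exp (-ε * t) := by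
    rw [← Real.exp_add]; ring_nf
  have hut : u T * Real.exp (ε * (t - T)) ≤ u t := by
    have hpos2 := Real.exp_pos (-ε * t)
    rw [hexp] at hm
    nlinarith [hm, hpos2]
  have huT : u T ≠ 0 := ne_of_gt hposT
  have hlin : ε * (t - T) = C / u T := by
    rw [htdef]
    have h3 : T + C / u T / ε - T = C / u T / ε := by ring
    rw [h3, mul_comm, div_mul_cancel₀ _ (ne_of_gt hε)]
  have hexpge : C / u T + 1 ≤ Real.exp (ε * (t - T)) := by
    rw [hlin]; linarith [Real.add_one_le_exp (C / u T)]
  have hfin : C < u t := by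
    have h1 : u T * (C / u T + 1) ≤ u T * Real.exp (ε * (t - T)) :=
      mul_le_mul_of_nonneg_left hexpge hposT.le
    have h2 : u T * (C / u T + 1) = C + u T := by field_simp
    nlinarith [hut]
  linarith [h t hTt]

private lemma tendsto_zero_of_decay (v v' : ℝ → ℝ) (δ T : ℝ) (hδ : 0 < δ)
    (hd : ∀ t : ℝ, T ≤ t → HasDerivAt v (v' t) t)
    (hnn : ∀ t : ℝ, T ≤ t → 0 ≤ v t)
    (hdec : ∀ t : ℝ, T ≤ t → v' t ≤ -δ * v t) :
    Tendsto v atTop (nhds 0) := by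
  have hw : ∀ t : ℝ, T ≤ t → HasDerivAt (fun s => v s * Real.exp (δ * s))
      (v' t * Real.exp (δ * t) + v t * (Real.exp (δ * t) * δ)) t := by
    intro t ht
    have he : HasDerivAt (fun s : ℝ => Real.exp (δ * s)) (Real.exp (δ * t) * δ) t := by
      have := (Real.hasDerivAt_exp (δ * t)).comp t ((hasDerivAt_id t).const_mul δ)
      simpa [Function.comp_def, mul_comm] using this
    exact (hd t ht).mul he
  have hmono : AntitoneOn (fun s => v s * Real.exp (δ * s)) (Ici T) := by
    apply antitoneOn_of_deriv_nonpos (convex_Ici T)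
    · exact fun x hx => ((hw x hx).continuousAt).continuousWithinAt
    · intro x hx
      rw [interior_Ici] at hx
      exact ((hw x hx.le).differentiableAt).differentiableWithinAt
    · intro x hx
      rw [interior_Ici] at hx
      rw [(hw x hx.le).deriv]
      have h1 := hdec x hx.le
      have h2 := hnn x hx.le
      nlinarith [Real.exp_pos (δ * x)]
  have hub : ∀ t : ℝ, T ≤ t → v t ≤ (v T * Real.exp (δ * T)) * Real.exp (-(δ * t)) := by
    intro t ht
    have hm := hmono (self_mem_Ici) (mem_Ici.2 ht) ht
    simp only at hm
    have hpos2 := Real.exp_pos (δ * t)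
    have hinv : Real.exp (-(δ * t)) = (Real.exp (δ * t))⁻¹ := Real.exp_neg _
    rw [hinv, ← div_eq_mul_inv, le_div_iff₀ hpos2]
    exact hm
  have h1 : Tendsto (fun t : ℝ => (v T * Real.exp (δ * T)) * Real.exp (-(δ * t))) atTop (nhds 0) := by
    have h2 : Tendsto (fun t : ℝ => Real.exp (-(δ * t))) atTop (nhds 0) := by
      apply Real.tendsto_exp_neg_atTop_nhds_zero.comp
      exact Tendsto.const_mul_atTop hδ tendsto_id
    simpa using h2.const_mul (v T * Real.exp (δ * T))
  apply tendsto_of_tendsto_of_tendsto_of_le_of_le' tendsto_const_nhds h1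
  · filter_upwards [eventually_ge_atTop T] with t ht using hnn t ht
  · filter_upwards [eventually_ge_atTop T] with t ht using hub t ht

private lemma ar_upper (rr K e u p : ℝ) (hrr : 0 < rr) (hK : 0 < K) (he : 0 < e)
    (hu : K + e ≤ u) (hp : 0 ≤ p) :
    rr * u * (1 - u / K) - p ≤ -(rr * (K + e) * e / K) := by
  rw [← sub_nonneg]
  have expand : -(rr * (K + e) * e / K) - (rr * u * (1 - u / K) - p)
      = (rr * u * (u - K) - rr * (K + e) * e) / K + p := by
    field_simp
    ring
  rw [expand]
  have h1 : 0 ≤ rr * u * (u - K) - rr * (K + e) * e := by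
    nlinarith [mul_nonneg (mul_nonneg hrr.le (show 0 ≤ u - (K + e) by linarith))
        (show 0 ≤ u - K by linarith),
      mul_nonneg (mul_nonneg hrr.le (show 0 ≤ K + e by linarith))
        (show 0 ≤ u - (K + e) by linarith)]
  have := div_nonneg h1 hK.le
  linarith

private lemma ar_grow (rr K e u p : ℝ) (hrr : 0 < rr) (hK : 0 < K) (he : 0 < e)
    (hu : 0 < u) (hule : u ≤ K - e) (hp : p ≤ rr * e / (2 * K) * u) :
    rr * e / (2 * K) * u ≤ rr * u * (1 - u / K) - p := by
  rw [← sub_nonneg]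
  have expand : rr * u * (1 - u / K) - p - rr * e / (2 * K) * u
      = (rr * u * (2 * K - 2 * u) - rr * e * u) / (2 * K) - p := by
    field_simp
    ring
  rw [expand]
  have hp' : 2 * K * p ≤ rr * e * u := by
    have h2 : 2 * K * (rr * e / (2 * K) * u) = rr * e * u := by field_simp
    nlinarith [mul_le_mul_of_nonneg_left hp (show (0:ℝ) ≤ 2 * K by linarith)]
  have h1 : rr * e * u + 2 * K * p ≤ rr * u * (2 * K - 2 * u) := by
    nlinarith [mul_nonneg (mul_nonneg hrr.le hu.le) (show 0 ≤ 2 * K - 2 * u - 2 * e by linarith)]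
  rw [sub_nonneg, le_div_iff₀ (show (0:ℝ) < 2 * K by linarith)]
  linarith

private lemma ar_f_nonneg (a u : ℝ) (ha : 0 < a) (hu : 0 < u) : 0 ≤ a * u / (1 + u) := by
  have h1 : (0:ℝ) < 1 + u := by linarith
  positivity

private lemma ar_f_le (a u : ℝ) (ha : 0 < a) (hu : 0 < u) : a * u / (1 + u) ≤ a := by
  have h1 : (0:ℝ) < 1 + u := by linarith
  rw [div_le_iff₀ h1]
  nlinarith

private lemma ar_fsmall (a K d ε u : ℝ) (ha : 0 < a) (hK : 0 < K) (hd : 0 < d)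
    (hlt : a * K / (1 + K) < d) (hε : ε = (d - a * K / (1 + K)) / (2 * a))
    (hu : 0 < u) (hule : u ≤ K + ε) :
    a * u / (1 + u) ≤ d - (d - a * K / (1 + K)) / 2 := by
  set B := a * K / (1 + K) with hB
  have hK1 : (0:ℝ) < 1 + K := by linarith
  have hBval : B * (1 + K) = a * K := by rw [hB]; field_simp
  have hB0 : 0 ≤ B := by rw [hB]; positivity
  have hε0 : 0 < ε := by rw [hε]; exact div_pos (by linarith) (by linarith)
  have hεval : 2 * a * ε = d - B := by rw [hε]; field_simp
  have h1u : (0:ℝ) < 1 + u := by linarith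
  rw [div_le_iff₀ h1u]
  have hend : 2 * a * (K + ε) ≤ (d + B) * (1 + (K + ε)) := by
    nlinarith [hBval, hεval, hB0, mul_nonneg (show 0 ≤ d - B by linarith) hK.le,
      mul_nonneg (show 0 ≤ d + B by linarith) hε0.le]
  have hG : 2 * (a * u) ≤ (d + B) * (1 + u) := by
    nlinarith [hend, mul_nonneg (show 0 ≤ K + ε - u by linarith) (show 0 ≤ d + B by linarith),
      mul_nonneg hu.le (show 0 ≤ (d + B) * (1 + (K + ε)) - 2 * a * (K + ε) by linarith)]
  linarith

private lemma ar_pred_le (a u v c : ℝ) (ha : 0 < a) (hu : 0 < u) (hv : 0 ≤ v)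
    (hc : a * v ≤ c) : a * u * v / (1 + u) ≤ c * u := by
  have h1 : (0:ℝ) < 1 + u := by linarith
  rw [div_le_iff₀ h1]
  have hc0 : 0 ≤ c := le_trans (mul_nonneg ha.le hv) hc
  nlinarith [mul_le_mul_of_nonneg_left hc hu.le,
    mul_nonneg hc0 (mul_nonneg hu.le hu.le)]

private lemma ev_small (v : ℝ → ℝ) (h : Tendsto v atTop (nhds 0)) (e : ℝ) (he : 0 < e) :
    ∃ T, 0 ≤ T ∧ ∀ t, T ≤ t → |v t| ≤ e := by
  obtain ⟨N, hN⟩ := (Metric.tendsto_atTop.1 h) e he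
  refine ⟨max N 0, le_max_right _ _, fun t ht => ?_⟩
  have := hN t (le_trans (le_max_left _ _) ht)
  rw [Real.dist_eq, sub_zero] at this
  exact this.le

private lemma logistic_upper (x p : ℝ → ℝ) (rr K : ℝ) (hrr : 0 < rr) (hK : 0 < K)
    (hd : ∀ t : ℝ, 0 ≤ t → HasDerivAt x (rr * x t * (1 - x t / K) - p t) t)
    (hp : ∀ t : ℝ, 0 ≤ t → 0 ≤ p t) :
    ∀ e : ℝ, 0 < e → ∃ T, 0 ≤ T ∧ ∀ t, T ≤ t → x t ≤ K + e := by
  intro e he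
  obtain ⟨T, hT0, hT⟩ := ev_stays_le x (fun t => rr * x t * (1 - x t / K) - p t) (K + e)
    (rr * (K + e) * e / K) 0 (by positivity) hd
    (fun t ht hC => ar_upper rr K e (x t) (p t) hrr hK he hC (hp t ht))
  exact ⟨T, hT0, hT⟩

private lemma logistic_tendsto (x p : ℝ → ℝ) (rr K : ℝ) (hrr : 0 < rr) (hK : 0 < K)
    (hd : ∀ t : ℝ, 0 ≤ t → HasDerivAt x (rr * x t * (1 - x t / K) - p t) t)
    (hxpos : ∀ t : ℝ, 0 ≤ t → 0 < x t)
    (hp : ∀ t : ℝ, 0 ≤ t → 0 ≤ p t)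
    (hpx : ∀ e : ℝ, 0 < e → ∃ T, 0 ≤ T ∧ ∀ t, T ≤ t → p t ≤ e * x t) :
    Tendsto x atTop (nhds K) := by
  rw [Metric.tendsto_atTop]
  intro ε hε
  set e := min (ε / 2) (K / 2) with hedef
  have he : 0 < e := lt_min (by linarith) (by linarith)
  have heK : e < K := lt_of_le_of_lt (min_le_right _ _) (by linarith)
  obtain ⟨Tu, hTu0, hTu⟩ := logistic_upper x p rr K hrr hK hd hp e he
  obtain ⟨Tp, hTp0, hTp⟩ := hpx (rr * e / (2 * K)) (by positivity)
  have hgrow : ∀ t : ℝ, Tp ≤ t → x t ≤ K - e →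
      (rr * e / (2 * K)) * x t ≤ rr * x t * (1 - x t / K) - p t := by
    intro t ht hxle
    exact ar_grow rr K e (x t) (p t) hrr hK he (hxpos t (le_trans hTp0 ht)) hxle (hTp t ht)
  obtain ⟨t1, ht1, hx1⟩ := reaches_ge_growth x (fun t => rr * x t * (1 - x t / K) - p t)
    (K - e) (rr * e / (2 * K)) Tp (by positivity)
    (fun t ht => hd t (le_trans hTp0 ht)) (hxpos Tp hTp0) hgrow
  have hstay : ∀ t : ℝ, t1 ≤ t → K - e ≤ x t := by
    apply stays_ge x (fun t => rr * x t * (1 - x t / K) - p t) (K - e) t1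
      (fun t ht => hd t (le_trans (le_trans hTp0 ht1) ht)) _ hx1
    intro t ht hle
    have h2 := hgrow t (le_trans ht1 ht) hle
    have h3 := hxpos t (le_trans hTp0 (le_trans ht1 ht))
    calc (0:ℝ) < (rr * e / (2 * K)) * x t := by positivity
      _ ≤ _ := h2
  refine ⟨max Tu t1, fun t ht => ?_⟩
  have h1 := hTu t (le_trans (le_max_left _ _) ht)
  have h2 := hstay t (le_trans (le_max_right _ _) ht)
  rw [Real.dist_eq, abs_sub_lt_iff]
  have he2 : e ≤ ε / 2 := min_le_left _ _
  constructor <;> linarith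

set_option maxHeartbeats 1000000 in
/-- **Global stability of the predator-free equilibrium of Model (1).**
If `aᵢKᵢ/(1+Kᵢ) < dᵢ` for `i = 1, 2` (equivalently `μᵢ > Kᵢ`), then every
solution of Model (1) with `x₁(0) > 0`, `x₂(0) > 0`, `y₁(0) ≥ 0`, `y₂(0) ≥ 0`
converges to `(K₁, 0, K₂, 0)` as `t → ∞`. -/
theorem model1_global_stability_predator_free
    (r a1 a2 K1 K2 d1 d2 ρ1 ρ2 : ℝ)
    (hr : 0 < r) (ha1 : 0 < a1) (ha2 : 0 < a2) (hK1 : 0 < K1) (hK2 : 0 < K2)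
    (hd1 : 0 < d1) (hd2 : 0 < d2) (hρ1 : 0 ≤ ρ1) (hρ2 : 0 ≤ ρ2)
    (hμ1 : a1 * K1 / (1 + K1) < d1) (hμ2 : a2 * K2 / (1 + K2) < d2)
    (x1 y1 x2 y2 : ℝ → ℝ)
    (hx1 : ∀ t : ℝ, 0 ≤ t → HasDerivAt x1
      (x1 t * (1 - x1 t / K1) - a1 * x1 t * y1 t / (1 + x1 t)) t)
    (hy1 : ∀ t : ℝ, 0 ≤ t → HasDerivAt y1
      (a1 * x1 t * y1 t / (1 + x1 t) - d1 * y1 t +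
        ρ1 * (a1 * x1 t * y1 t * y2 t / (1 + x1 t) -
              a2 * x2 t * y1 t * y2 t / (1 + x2 t))) t)
    (hx2 : ∀ t : ℝ, 0 ≤ t → HasDerivAt x2
      (r * x2 t * (1 - x2 t / K2) - a2 * x2 t * y2 t / (1 + x2 t)) t)
    (hy2 : ∀ t : ℝ, 0 ≤ t → HasDerivAt y2
      (a2 * x2 t * y2 t / (1 + x2 t) - d2 * y2 t +
        ρ2 * (a2 * x2 t * y1 t * y2 t / (1 + x2 t) -
              a1 * x1 t * y1 t * y2 t / (1 + x1 t))) t)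
    (hx10 : 0 < x1 0) (hy10 : 0 ≤ y1 0) (hx20 : 0 < x2 0) (hy20 : 0 ≤ y2 0) :
    Tendsto x1 atTop (nhds K1) ∧ Tendsto y1 atTop (nhds 0) ∧
      Tendsto x2 atTop (nhds K2) ∧ Tendsto y2 atTop (nhds 0) := by
  have hcx1 : ∀ t : ℝ, 0 ≤ t → ContinuousAt x1 t := fun t ht => (hx1 t ht).continuousAt
  have hcy1 : ∀ t : ℝ, 0 ≤ t → ContinuousAt y1 t := fun t ht => (hy1 t ht).continuousAt
  have hcx2 : ∀ t : ℝ, 0 ≤ t → ContinuousAt x2 t := fun t ht => (hx2 t ht).continuousAt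
  have hcy2 : ∀ t : ℝ, 0 ≤ t → ContinuousAt y2 t := fun t ht => (hy2 t ht).continuousAt
  have hbd : ∀ g : ℝ → ℝ, (∀ t : ℝ, 0 ≤ t → ContinuousAt g t) → ∀ b : ℝ,
      ∃ M, 0 ≤ M ∧ ∀ t ∈ Icc (0:ℝ) b, |g t| ≤ M := by
    intro g hg b
    obtain ⟨M, hM⟩ := isCompact_Icc.exists_bound_of_continuousOn
      (fun t ht => (hg t ht.1).continuousWithinAt)
    refine ⟨max M 0, le_max_right _ _, fun t ht => ?_⟩
    have := hM t ht
    rw [Real.norm_eq_abs] at this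
    exact le_trans this (le_max_left _ _)
  -- positivity of x1
  have hx1pos : ∀ t : ℝ, 0 ≤ t → 0 < x1 t := by
    apply pos_on x1 _ hx1 _ hx10
    intro b hb hnn
    obtain ⟨X, hX0, hX⟩ := hbd x1 hcx1 b
    obtain ⟨Y, hY0, hY⟩ := hbd y1 hcy1 b
    refine ⟨1 + X / K1 + a1 * Y, fun t ht => ?_⟩
    have h0t := hnn t ht
    have hXt := hX t ht
    have hYt := hY t ht
    have hax : |x1 t| = x1 t := abs_of_nonneg h0t
    have e1 : |x1 t * (1 - x1 t / K1)| ≤ x1 t * (1 + X / K1) := by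
      rw [abs_mul, hax]
      apply mul_le_mul_of_nonneg_left _ h0t
      have hdiv : x1 t / K1 ≤ X / K1 := by
        gcongr
        linarith [le_abs_self (x1 t), hXt]
      have hdiv0 : 0 ≤ x1 t / K1 := div_nonneg h0t hK1.le
      have hdiv2 : 0 ≤ X / K1 := div_nonneg hX0 hK1.le
      rw [abs_le]
      constructor <;> linarith
    have e2 : |a1 * x1 t * y1 t / (1 + x1 t)| ≤ x1 t * (a1 * Y) := by
      have hden : (0:ℝ) < 1 + x1 t := by linarith
      rw [abs_div, abs_of_pos hden]
      have h5 : |a1 * x1 t * y1 t| / (1 + x1 t) ≤ |a1 * x1 t * y1 t| :=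
        div_le_self (abs_nonneg _) (by linarith)
      have h6 : |a1 * x1 t * y1 t| = a1 * x1 t * |y1 t| := by
        rw [abs_mul, abs_mul, abs_of_nonneg ha1.le, hax]
      have h7 : a1 * x1 t * |y1 t| ≤ a1 * x1 t * Y :=
        mul_le_mul_of_nonneg_left hYt (mul_nonneg ha1.le h0t)
      calc |a1 * x1 t * y1 t| / (1 + x1 t) ≤ |a1 * x1 t * y1 t| := h5
        _ = a1 * x1 t * |y1 t| := h6
        _ ≤ a1 * x1 t * Y := h7
        _ = x1 t * (a1 * Y) := by ring
    calc |x1 t * (1 - x1 t / K1) - a1 * x1 t * y1 t / (1 + x1 t)|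
        ≤ |x1 t * (1 - x1 t / K1)| + |a1 * x1 t * y1 t / (1 + x1 t)| :=
          abs_sub_le_abs_add_abs _ _
      _ ≤ x1 t * (1 + X / K1) + x1 t * (a1 * Y) := add_le_add e1 e2
      _ = (1 + X / K1 + a1 * Y) * |x1 t| := by rw [hax]; ring
  -- positivity of x2
  have hx2pos : ∀ t : ℝ, 0 ≤ t → 0 < x2 t := by
    apply pos_on x2 _ hx2 _ hx20
    intro b hb hnn
    obtain ⟨X, hX0, hX⟩ := hbd x2 hcx2 b
    obtain ⟨Y, hY0, hY⟩ := hbd y2 hcy2 b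
    refine ⟨r * (1 + X / K2) + a2 * Y, fun t ht => ?_⟩
    have h0t := hnn t ht
    have hXt := hX t ht
    have hYt := hY t ht
    have hax : |x2 t| = x2 t := abs_of_nonneg h0t
    have e1 : |r * x2 t * (1 - x2 t / K2)| ≤ x2 t * (r * (1 + X / K2)) := by
      rw [abs_mul, abs_mul, abs_of_nonneg hr.le, hax]
      have hdiv : x2 t / K2 ≤ X / K2 := by
        gcongr
        linarith [le_abs_self (x2 t), hXt]
      have hdiv0 : 0 ≤ x2 t / K2 := div_nonneg h0t hK2.le
      have hdiv2 : 0 ≤ X / K2 := div_nonneg hX0 hK2.le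
      have h8 : |1 - x2 t / K2| ≤ 1 + X / K2 := by
        rw [abs_le]; constructor <;> linarith
      calc r * x2 t * |1 - x2 t / K2| ≤ r * x2 t * (1 + X / K2) :=
            mul_le_mul_of_nonneg_left h8 (mul_nonneg hr.le h0t)
        _ = x2 t * (r * (1 + X / K2)) := by ring
    have e2 : |a2 * x2 t * y2 t / (1 + x2 t)| ≤ x2 t * (a2 * Y) := by
      have hden : (0:ℝ) < 1 + x2 t := by linarith
      rw [abs_div, abs_of_pos hden]
      have h5 : |a2 * x2 t * y2 t| / (1 + x2 t) ≤ |a2 * x2 t * y2 t| :=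
        div_le_self (abs_nonneg _) (by linarith)
      have h6 : |a2 * x2 t * y2 t| = a2 * x2 t * |y2 t| := by
        rw [abs_mul, abs_mul, abs_of_nonneg ha2.le, hax]
      have h7 : a2 * x2 t * |y2 t| ≤ a2 * x2 t * Y :=
        mul_le_mul_of_nonneg_left hYt (mul_nonneg ha2.le h0t)
      calc |a2 * x2 t * y2 t| / (1 + x2 t) ≤ |a2 * x2 t * y2 t| := h5
        _ = a2 * x2 t * |y2 t| := h6
        _ ≤ a2 * x2 t * Y := h7
        _ = x2 t * (a2 * Y) := by ring
    calc |r * x2 t * (1 - x2 t / K2) - a2 * x2 t * y2 t / (1 + x2 t)|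
        ≤ |r * x2 t * (1 - x2 t / K2)| + |a2 * x2 t * y2 t / (1 + x2 t)| :=
          abs_sub_le_abs_add_abs _ _
      _ ≤ x2 t * (r * (1 + X / K2)) + x2 t * (a2 * Y) := add_le_add e1 e2
      _ = (r * (1 + X / K2) + a2 * Y) * |x2 t| := by rw [hax]; ring
  -- nonnegativity of y1
  have hy1nn : ∀ t : ℝ, 0 ≤ t → 0 ≤ y1 t := by
    apply nonneg_on y1 _ hy1 _ hy10
    intro b hb
    obtain ⟨Y2, hY20, hY2⟩ := hbd y2 hcy2 b
    refine ⟨a1 + d1 + ρ1 * ((a1 + a2) * Y2), fun t ht => ?_⟩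
    have ht0 : (0:ℝ) ≤ t := ht.1
    have hx1t := hx1pos t ht0
    have hx2t := hx2pos t ht0
    have her : a1 * x1 t * y1 t / (1 + x1 t) - d1 * y1 t +
        ρ1 * (a1 * x1 t * y1 t * y2 t / (1 + x1 t) - a2 * x2 t * y1 t * y2 t / (1 + x2 t))
        = y1 t * (a1 * x1 t / (1 + x1 t) - d1 +
            ρ1 * ((a1 * x1 t / (1 + x1 t) - a2 * x2 t / (1 + x2 t)) * y2 t)) := by
      ring
    rw [her, abs_mul, mul_comm]
    apply mul_le_mul_of_nonneg_right _ (abs_nonneg _)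
    have hf1a := ar_f_nonneg a1 (x1 t) ha1 hx1t
    have hf1b := ar_f_le a1 (x1 t) ha1 hx1t
    have hf2a := ar_f_nonneg a2 (x2 t) ha2 hx2t
    have hf2b := ar_f_le a2 (x2 t) ha2 hx2t
    have hy2t := hY2 t ht
    have habs : |(a1 * x1 t / (1 + x1 t) - a2 * x2 t / (1 + x2 t)) * y2 t| ≤ (a1 + a2) * Y2 := by
      rw [abs_mul]
      apply mul_le_mul _ hy2t (abs_nonneg _) (by linarith)
      rw [abs_le]; constructor <;> linarith
    have h8 := abs_le.mp habs
    have h9 : ρ1 * ((a1 * x1 t / (1 + x1 t) - a2 * x2 t / (1 + x2 t)) * y2 t)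
        ≤ ρ1 * ((a1 + a2) * Y2) := mul_le_mul_of_nonneg_left h8.2 hρ1
    have h10 : -(ρ1 * ((a1 + a2) * Y2)) ≤
        ρ1 * ((a1 * x1 t / (1 + x1 t) - a2 * x2 t / (1 + x2 t)) * y2 t) := by
      have := mul_le_mul_of_nonneg_left h8.1 hρ1
      linarith
    rw [abs_le]
    constructor <;> linarith
  -- nonnegativity of y2
  have hy2nn : ∀ t : ℝ, 0 ≤ t → 0 ≤ y2 t := by
    apply nonneg_on y2 _ hy2 _ hy20
    intro b hb
    obtain ⟨Y1, hY10, hY1⟩ := hbd y1 hcy1 b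
    refine ⟨a2 + d2 + ρ2 * ((a1 + a2) * Y1), fun t ht => ?_⟩
    have ht0 : (0:ℝ) ≤ t := ht.1
    have hx1t := hx1pos t ht0
    have hx2t := hx2pos t ht0
    have her : a2 * x2 t * y2 t / (1 + x2 t) - d2 * y2 t +
        ρ2 * (a2 * x2 t * y1 t * y2 t / (1 + x2 t) - a1 * x1 t * y1 t * y2 t / (1 + x1 t))
        = y2 t * (a2 * x2 t / (1 + x2 t) - d2 +
            ρ2 * ((a2 * x2 t / (1 + x2 t) - a1 * x1 t / (1 + x1 t)) * y1 t)) := by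
      ring
    rw [her, abs_mul, mul_comm]
    apply mul_le_mul_of_nonneg_right _ (abs_nonneg _)
    have hf1a := ar_f_nonneg a1 (x1 t) ha1 hx1t
    have hf1b := ar_f_le a1 (x1 t) ha1 hx1t
    have hf2a := ar_f_nonneg a2 (x2 t) ha2 hx2t
    have hf2b := ar_f_le a2 (x2 t) ha2 hx2t
    have hy1t := hY1 t ht
    have habs : |(a2 * x2 t / (1 + x2 t) - a1 * x1 t / (1 + x1 t)) * y1 t| ≤ (a1 + a2) * Y1 := by
      rw [abs_mul]
      apply mul_le_mul _ hy1t (abs_nonneg _) (by linarith)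
      rw [abs_le]; constructor <;> linarith
    have h8 := abs_le.mp habs
    have h9 : ρ2 * ((a2 * x2 t / (1 + x2 t) - a1 * x1 t / (1 + x1 t)) * y1 t)
        ≤ ρ2 * ((a1 + a2) * Y1) := mul_le_mul_of_nonneg_left h8.2 hρ2
    have h10 : -(ρ2 * ((a1 + a2) * Y1)) ≤
        ρ2 * ((a2 * x2 t / (1 + x2 t) - a1 * x1 t / (1 + x1 t)) * y1 t) := by
      have := mul_le_mul_of_nonneg_left h8.1 hρ2
      linarith
    rw [abs_le]
    constructor <;> linarith
  -- predation terms nonneg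
  have hp1nn : ∀ t : ℝ, 0 ≤ t → 0 ≤ a1 * x1 t * y1 t / (1 + x1 t) := by
    intro t ht
    have h1 := hx1pos t ht
    have h2 := hy1nn t ht
    have h3 : (0:ℝ) < 1 + x1 t := by linarith
    positivity
  have hp2nn : ∀ t : ℝ, 0 ≤ t → 0 ≤ a2 * x2 t * y2 t / (1 + x2 t) := by
    intro t ht
    have h1 := hx2pos t ht
    have h2 := hy2nn t ht
    have h3 : (0:ℝ) < 1 + x2 t := by linarith
    positivity
  -- logistic-form derivatives
  have hx1d : ∀ t : ℝ, 0 ≤ t → HasDerivAt x1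
      (1 * x1 t * (1 - x1 t / K1) - (fun s => a1 * x1 s * y1 s / (1 + x1 s)) t) t := by
    intro t ht
    have h := hx1 t ht
    simpa only [one_mul] using h
  have hx2d : ∀ t : ℝ, 0 ≤ t → HasDerivAt x2
      (r * x2 t * (1 - x2 t / K2) - (fun s => a2 * x2 s * y2 s / (1 + x2 s)) t) t :=
    fun t ht => hx2 t ht
  -- eventual upper bounds on x1, x2
  have hδ1 : 0 < d1 - a1 * K1 / (1 + K1) := by linarith
  have hδ2 : 0 < d2 - a2 * K2 / (1 + K2) := by linarith
  have hε1 : 0 < (d1 - a1 * K1 / (1 + K1)) / (2 * a1) := div_pos hδ1 (by linarith)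
  have hε2 : 0 < (d2 - a2 * K2 / (1 + K2)) / (2 * a2) := div_pos hδ2 (by linarith)
  obtain ⟨T1, hT10, hT1⟩ := logistic_upper x1 (fun s => a1 * x1 s * y1 s / (1 + x1 s)) 1 K1
    one_pos hK1 hx1d hp1nn ((d1 - a1 * K1 / (1 + K1)) / (2 * a1)) hε1
  obtain ⟨T2, hT20, hT2⟩ := logistic_upper x2 (fun s => a2 * x2 s * y2 s / (1 + x2 s)) r K2
    hr hK2 hx2d hp2nn ((d2 - a2 * K2 / (1 + K2)) / (2 * a2)) hε2
  set T0 := max T1 T2 with hT0def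
  have hT00 : (0:ℝ) ≤ T0 := le_trans hT10 (le_max_left _ _)
  set δ := min ((d1 - a1 * K1 / (1 + K1)) / 2) ((d2 - a2 * K2 / (1 + K2)) / 2) with hδdef
  have hδpos : 0 < δ := lt_min (by linarith) (by linarith)
  have hf1d : ∀ t : ℝ, T0 ≤ t → a1 * x1 t / (1 + x1 t) - d1 ≤ -δ := by
    intro t ht
    have h0t : (0:ℝ) ≤ t := le_trans hT00 ht
    have hup := hT1 t (le_trans (le_max_left _ _) ht)
    have := ar_fsmall a1 K1 d1 ((d1 - a1 * K1 / (1 + K1)) / (2 * a1)) (x1 t)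
      ha1 hK1 hd1 hμ1 rfl (hx1pos t h0t) hup
    have hm : δ ≤ (d1 - a1 * K1 / (1 + K1)) / 2 := min_le_left _ _
    linarith
  have hf2d : ∀ t : ℝ, T0 ≤ t → a2 * x2 t / (1 + x2 t) - d2 ≤ -δ := by
    intro t ht
    have h0t : (0:ℝ) ≤ t := le_trans hT00 ht
    have hup := hT2 t (le_trans (le_max_right _ _) ht)
    have := ar_fsmall a2 K2 d2 ((d2 - a2 * K2 / (1 + K2)) / (2 * a2)) (x2 t)
      ha2 hK2 hd2 hμ2 rfl (hx2pos t h0t) hup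
    have hm : δ ≤ (d2 - a2 * K2 / (1 + K2)) / 2 := min_le_right _ _
    linarith
  -- the Lyapunov-type function V = ρ2 y1 + ρ1 y2
  have hVd : ∀ t : ℝ, 0 ≤ t → HasDerivAt (fun s => ρ2 * y1 s + ρ1 * y2 s)
      (ρ2 * (a1 * x1 t * y1 t / (1 + x1 t) - d1 * y1 t +
        ρ1 * (a1 * x1 t * y1 t * y2 t / (1 + x1 t) -
              a2 * x2 t * y1 t * y2 t / (1 + x2 t))) +
       ρ1 * (a2 * x2 t * y2 t / (1 + x2 t) - d2 * y2 t +
        ρ2 * (a2 * x2 t * y1 t * y2 t / (1 + x2 t) -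
              a1 * x1 t * y1 t * y2 t / (1 + x1 t)))) t :=
    fun t ht => ((hy1 t ht).const_mul ρ2).add ((hy2 t ht).const_mul ρ1)
  have hVnn : ∀ t : ℝ, 0 ≤ t → 0 ≤ ρ2 * y1 t + ρ1 * y2 t := fun t ht =>
    add_nonneg (mul_nonneg hρ2 (hy1nn t ht)) (mul_nonneg hρ1 (hy2nn t ht))
  have hVineq : ∀ t : ℝ, T0 ≤ t →
      ρ2 * (a1 * x1 t * y1 t / (1 + x1 t) - d1 * y1 t +
        ρ1 * (a1 * x1 t * y1 t * y2 t / (1 + x1 t) -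
              a2 * x2 t * y1 t * y2 t / (1 + x2 t))) +
      ρ1 * (a2 * x2 t * y2 t / (1 + x2 t) - d2 * y2 t +
        ρ2 * (a2 * x2 t * y1 t * y2 t / (1 + x2 t) -
              a1 * x1 t * y1 t * y2 t / (1 + x1 t)))
      ≤ -δ * (ρ2 * y1 t + ρ1 * y2 t) := by
    intro t ht
    have h0t : (0:ℝ) ≤ t := le_trans hT00 ht
    have hident : ρ2 * (a1 * x1 t * y1 t / (1 + x1 t) - d1 * y1 t +
        ρ1 * (a1 * x1 t * y1 t * y2 t / (1 + x1 t) -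
              a2 * x2 t * y1 t * y2 t / (1 + x2 t))) +
      ρ1 * (a2 * x2 t * y2 t / (1 + x2 t) - d2 * y2 t +
        ρ2 * (a2 * x2 t * y1 t * y2 t / (1 + x2 t) -
              a1 * x1 t * y1 t * y2 t / (1 + x1 t)))
      = ρ2 * y1 t * (a1 * x1 t / (1 + x1 t) - d1) +
        ρ1 * y2 t * (a2 * x2 t / (1 + x2 t) - d2) := by ring
    rw [hident]
    have h1 : ρ2 * y1 t * (a1 * x1 t / (1 + x1 t) - d1) ≤ ρ2 * y1 t * (-δ) :=
      mul_le_mul_of_nonneg_left (hf1d t ht) (mul_nonneg hρ2 (hy1nn t h0t))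
    have h2 : ρ1 * y2 t * (a2 * x2 t / (1 + x2 t) - d2) ≤ ρ1 * y2 t * (-δ) :=
      mul_le_mul_of_nonneg_left (hf2d t ht) (mul_nonneg hρ1 (hy2nn t h0t))
    linarith [h1, h2]
  have hVtend : Tendsto (fun s => ρ2 * y1 s + ρ1 * y2 s) atTop (nhds 0) := by
    apply tendsto_zero_of_decay (fun s => ρ2 * y1 s + ρ1 * y2 s) _ δ T0 hδpos
      (fun t ht => hVd t (le_trans hT00 ht)) (fun t ht => hVnn t (le_trans hT00 ht)) hVineq
  -- eventual smallness of V
  have hsum : (0:ℝ) < a1 + a2 := by linarith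
  obtain ⟨T3', hT3'0, hT3'⟩ := ev_small (fun s => ρ2 * y1 s + ρ1 * y2 s) hVtend
    (δ / (2 * (a1 + a2))) (by positivity)
  set T3 := max T3' T0 with hT3def
  have hT30 : (0:ℝ) ≤ T3 := le_trans hT3'0 (le_max_left _ _)
  have hVsmall : ∀ t : ℝ, T3 ≤ t → ρ2 * y1 t + ρ1 * y2 t ≤ δ / (2 * (a1 + a2)) := by
    intro t ht
    have := hT3' t (le_trans (le_max_left _ _) ht)
    exact le_trans (le_abs_self _) this
  have hη : δ / (2 * (a1 + a2)) * (a1 + a2) = δ / 2 := by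
    field_simp
  -- decay of y1
  have hy1dec : ∀ t : ℝ, T3 ≤ t →
      a1 * x1 t * y1 t / (1 + x1 t) - d1 * y1 t +
        ρ1 * (a1 * x1 t * y1 t * y2 t / (1 + x1 t) -
              a2 * x2 t * y1 t * y2 t / (1 + x2 t)) ≤ -(δ / 2) * y1 t := by
    intro t ht
    have hT0t : T0 ≤ t := le_trans (le_max_right _ _) ht
    have h0t : (0:ℝ) ≤ t := le_trans hT00 hT0t
    have hident : a1 * x1 t * y1 t / (1 + x1 t) - d1 * y1 t +
        ρ1 * (a1 * x1 t * y1 t * y2 t / (1 + x1 t) -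
              a2 * x2 t * y1 t * y2 t / (1 + x2 t))
        = y1 t * (a1 * x1 t / (1 + x1 t) - d1) +
          y1 t * (ρ1 * y2 t * (a1 * x1 t / (1 + x1 t) - a2 * x2 t / (1 + x2 t))) := by ring
    rw [hident]
    have hf1b := ar_f_le a1 (x1 t) ha1 (hx1pos t h0t)
    have hf2a := ar_f_nonneg a2 (x2 t) ha2 (hx2pos t h0t)
    have hc1 : a1 * x1 t / (1 + x1 t) - a2 * x2 t / (1 + x2 t) ≤ a1 + a2 := by linarith
    have hc2 : 0 ≤ ρ1 * y2 t := mul_nonneg hρ1 (hy2nn t h0t)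
    have hc3 : ρ1 * y2 t * (a1 * x1 t / (1 + x1 t) - a2 * x2 t / (1 + x2 t))
        ≤ ρ1 * y2 t * (a1 + a2) := mul_le_mul_of_nonneg_left hc1 hc2
    have hc4 : ρ1 * y2 t ≤ δ / (2 * (a1 + a2)) := by
      have := hVsmall t ht
      have h5 : 0 ≤ ρ2 * y1 t := mul_nonneg hρ2 (hy1nn t h0t)
      linarith
    have hc5 : ρ1 * y2 t * (a1 + a2) ≤ δ / (2 * (a1 + a2)) * (a1 + a2) :=
      mul_le_mul_of_nonneg_right hc4 (by linarith)
    have hc6 : ρ1 * y2 t * (a1 * x1 t / (1 + x1 t) - a2 * x2 t / (1 + x2 t)) ≤ δ / 2 := by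
      rw [hη] at hc5
      linarith
    have hy1t := hy1nn t h0t
    have hc7 : y1 t * (ρ1 * y2 t * (a1 * x1 t / (1 + x1 t) - a2 * x2 t / (1 + x2 t)))
        ≤ y1 t * (δ / 2) := mul_le_mul_of_nonneg_left hc6 hy1t
    have hc8 : y1 t * (a1 * x1 t / (1 + x1 t) - d1) ≤ y1 t * (-δ) :=
      mul_le_mul_of_nonneg_left (hf1d t hT0t) hy1t
    linarith [hc7, hc8]
  have hy1tend : Tendsto y1 atTop (nhds 0) := by
    apply tendsto_zero_of_decay y1 _ (δ / 2) T3 (by linarith)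
      (fun t ht => hy1 t (le_trans hT30 ht)) (fun t ht => hy1nn t (le_trans hT30 ht)) hy1dec
  -- decay of y2
  have hy2dec : ∀ t : ℝ, T3 ≤ t →
      a2 * x2 t * y2 t / (1 + x2 t) - d2 * y2 t +
        ρ2 * (a2 * x2 t * y1 t * y2 t / (1 + x2 t) -
              a1 * x1 t * y1 t * y2 t / (1 + x1 t)) ≤ -(δ / 2) * y2 t := by
    intro t ht
    have hT0t : T0 ≤ t := le_trans (le_max_right _ _) ht
    have h0t : (0:ℝ) ≤ t := le_trans hT00 hT0t
    have hident : a2 * x2 t * y2 t / (1 + x2 t) - d2 * y2 t +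
        ρ2 * (a2 * x2 t * y1 t * y2 t / (1 + x2 t) -
              a1 * x1 t * y1 t * y2 t / (1 + x1 t))
        = y2 t * (a2 * x2 t / (1 + x2 t) - d2) +
          y2 t * (ρ2 * y1 t * (a2 * x2 t / (1 + x2 t) - a1 * x1 t / (1 + x1 t))) := by ring
    rw [hident]
    have hf2b := ar_f_le a2 (x2 t) ha2 (hx2pos t h0t)
    have hf1a := ar_f_nonneg a1 (x1 t) ha1 (hx1pos t h0t)
    have hc1 : a2 * x2 t / (1 + x2 t) - a1 * x1 t / (1 + x1 t) ≤ a1 + a2 := by linarith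
    have hc2 : 0 ≤ ρ2 * y1 t := mul_nonneg hρ2 (hy1nn t h0t)
    have hc3 : ρ2 * y1 t * (a2 * x2 t / (1 + x2 t) - a1 * x1 t / (1 + x1 t))
        ≤ ρ2 * y1 t * (a1 + a2) := mul_le_mul_of_nonneg_left hc1 hc2
    have hc4 : ρ2 * y1 t ≤ δ / (2 * (a1 + a2)) := by
      have := hVsmall t ht
      have h5 : 0 ≤ ρ1 * y2 t := mul_nonneg hρ1 (hy2nn t h0t)
      linarith
    have hc5 : ρ2 * y1 t * (a1 + a2) ≤ δ / (2 * (a1 + a2)) * (a1 + a2) :=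
      mul_le_mul_of_nonneg_right hc4 (by linarith)
    have hc6 : ρ2 * y1 t * (a2 * x2 t / (1 + x2 t) - a1 * x1 t / (1 + x1 t)) ≤ δ / 2 := by
      rw [hη] at hc5
      linarith
    have hy2t := hy2nn t h0t
    have hc7 : y2 t * (ρ2 * y1 t * (a2 * x2 t / (1 + x2 t) - a1 * x1 t / (1 + x1 t)))
        ≤ y2 t * (δ / 2) := mul_le_mul_of_nonneg_left hc6 hy2t
    have hc8 : y2 t * (a2 * x2 t / (1 + x2 t) - d2) ≤ y2 t * (-δ) :=
      mul_le_mul_of_nonneg_left (hf2d t hT0t) hy2t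
    linarith [hc7, hc8]
  have hy2tend : Tendsto y2 atTop (nhds 0) := by
    apply tendsto_zero_of_decay y2 _ (δ / 2) T3 (by linarith)
      (fun t ht => hy2 t (le_trans hT30 ht)) (fun t ht => hy2nn t (le_trans hT30 ht)) hy2dec
  -- convergence of x1
  have hpx1 : ∀ e : ℝ, 0 < e → ∃ T, 0 ≤ T ∧ ∀ t, T ≤ t →
      a1 * x1 t * y1 t / (1 + x1 t) ≤ e * x1 t := by
    intro e he
    obtain ⟨T, hT0, hT⟩ := ev_small y1 hy1tend (e / a1) (by positivity)
    refine ⟨T, hT0, fun t ht => ?_⟩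
    have h0t := le_trans hT0 ht
    apply ar_pred_le a1 (x1 t) (y1 t) e ha1 (hx1pos t h0t) (hy1nn t h0t)
    have h5 := hT t ht
    rw [abs_of_nonneg (hy1nn t h0t)] at h5
    rw [← le_div_iff₀' ha1]
    exact h5
  have hx1tend : Tendsto x1 atTop (nhds K1) :=
    logistic_tendsto x1 (fun s => a1 * x1 s * y1 s / (1 + x1 s)) 1 K1 one_pos hK1
      hx1d hx1pos hp1nn hpx1
  have hpx2 : ∀ e : ℝ, 0 < e → ∃ T, 0 ≤ T ∧ ∀ t, T ≤ t →
      a2 * x2 t * y2 t / (1 + x2 t) ≤ e * x2 t := by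
    intro e he
    obtain ⟨T, hT0, hT⟩ := ev_small y2 hy2tend (e / a2) (by positivity)
    refine ⟨T, hT0, fun t ht => ?_⟩
    have h0t := le_trans hT0 ht
    apply ar_pred_le a2 (x2 t) (y2 t) e ha2 (hx2pos t h0t) (hy2nn t h0t)
    have h5 := hT t ht
    rw [abs_of_nonneg (hy2nn t h0t)] at h5
    rw [← le_div_iff₀' ha2]
    exact h5
  have hx2tend : Tendsto x2 atTop (nhds K2) :=
    logistic_tendsto x2 (fun s => a2 * x2 s * y2 s / (1 + x2 s)) r K2 hr hK2
      hx2d hx2pos hp2nn hpx2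
  exact ⟨hx1tend, hy1tend, hx2tend, hy2tend⟩
end

section
/- For each i = 1, 2, prey x_i of Model (1) is persistent for all r > 0: there exist constants 0 < b < B (depending only on the parameters) such that every solution of Model (1) on [0, ∞) with x_i(0) > 0 and all other components nonnegative at t = 0 satisfies b ≤ lim inf_{t→∞} x_i(t) ≤ lim sup_{t→∞} x_i(t) ≤ B. -/
open Filter Set Real

/-- Monotonicity from nonnegative derivative on an interval. -/
lemma mono_of_hasDerivAt {f f' : ℝ → ℝ} {a b : ℝ} (hab : a ≤ b)
    (hf : ∀ t ∈ Set.Icc a b, HasDerivAt f (f' t) t)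
    (h0 : ∀ t ∈ Set.Icc a b, 0 ≤ f' t) : f a ≤ f b := by
  have hm : MonotoneOn f (Set.Icc a b) := by
    apply monotoneOn_of_hasDerivWithinAt_nonneg (convex_Icc a b)
      (fun t ht => (hf t ht).continuousAt.continuousWithinAt)
      (f' := f')
    · intro t ht
      rw [interior_Icc] at ht
      exact ((hf t (Set.mem_Icc_of_Ioo ht)).hasDerivWithinAt)
    · intro t ht
      rw [interior_Icc] at ht
      exact h0 t (Set.mem_Icc_of_Ioo ht)
  exact hm (Set.left_mem_Icc.2 hab) (Set.right_mem_Icc.2 hab) hab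

/-- If `γ x ≤ x'` on `[s,t]`, then `x s * exp (γ (t-s)) ≤ x t`. -/
lemma exp_lower {x fx : ℝ → ℝ} {s t γ : ℝ} (hst : s ≤ t)
    (hd : ∀ u ∈ Set.Icc s t, HasDerivAt x (fx u) u)
    (h : ∀ u ∈ Set.Icc s t, γ * x u ≤ fx u) :
    x s * Real.exp (γ * (t - s)) ≤ x t := by
  have hg : ∀ u ∈ Set.Icc s t,
      HasDerivAt (fun u => x u * Real.exp (-γ * u))
        (fx u * Real.exp (-γ * u) + x u * (Real.exp (-γ * u) * -γ)) u := by
    intro u hu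
    have h1 : HasDerivAt (fun y : ℝ => -γ * y) (-γ) u := by
      simpa using (hasDerivAt_id u).const_mul (-γ)
    exact (hd u hu).mul h1.exp
  have hmono := mono_of_hasDerivAt hst hg ?_
  · have h1 : x s * Real.exp (-γ * s) ≤ x t * Real.exp (-γ * t) := hmono
    rw [show γ * (t - s) = -γ * s - -γ * t by ring, Real.exp_sub, ← mul_div_assoc,
      div_le_iff₀ (Real.exp_pos _)]
    exact h1
  · intro u hu
    have := h u hu
    have e := (Real.exp_pos (-γ * u)).le
    nlinarith [Real.exp_pos (-γ * u)]

lemma exp_upper {x fx : ℝ → ℝ} {s t γ : ℝ} (hst : s ≤ t)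
    (hd : ∀ u ∈ Set.Icc s t, HasDerivAt x (fx u) u)
    (h : ∀ u ∈ Set.Icc s t, fx u ≤ γ * x u) :
    x t ≤ x s * Real.exp (γ * (t - s)) := by
  have := exp_lower (x := fun u => -x u) (fx := fun u => -fx u) (γ := γ) hst
    (fun u hu => (hd u hu).neg) (fun u hu => by have := h u hu; simp; linarith)
  simp only [neg_mul] at this
  nlinarith [this]

/-- Linear decay: `V' ≤ C - δ V` gives eventual bound `C/δ + 1`. -/
lemma eventually_le_of_decay_s6 {V fV : ℝ → ℝ} {T C δ : ℝ} (hδ : 0 < δ)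
    (hd : ∀ t, T ≤ t → HasDerivAt V (fV t) t)
    (h : ∀ t, T ≤ t → fV t ≤ C - δ * V t) :
    ∀ᶠ t in atTop, V t ≤ C / δ + 1 := by
  have key : ∀ t, T ≤ t → V t ≤ C / δ + (V T - C / δ) * Real.exp (-δ * (t - T)) := by
    intro t ht
    have := exp_upper (x := fun u => V u - C / δ) (fx := fV) (γ := -δ) ht
      (fun u hu => (hd u hu.1).sub_const _)
      (fun u hu => by
        have h1 := h u hu.1
        have e : -δ * ((fun u => V u - C / δ) u) = C - δ * V u := by
          field_simp; ring
        rw [e]; exact h1)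
    linarith [this]
  have htend : Tendsto (fun t => (V T - C / δ) * Real.exp (-δ * (t - T))) atTop (nhds 0) := by
    have h1 : Tendsto (fun t : ℝ => -δ * (t - T)) atTop atBot := by
      have h2 : Tendsto (fun t : ℝ => t - T) atTop atTop :=
        tendsto_atTop_add_const_right _ _ tendsto_id
      exact h2.const_mul_atTop_of_neg (by linarith)
    have h3 : Tendsto (fun t : ℝ => Real.exp (-δ * (t - T))) atTop (nhds 0) :=
      Real.tendsto_exp_atBot.comp h1
    have h4 := h3.const_mul (V T - C / δ)
    simpa using h4
  have hev : ∀ᶠ t in atTop, (V T - C / δ) * Real.exp (-δ * (t - T)) ≤ 1 :=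
    htend.eventually_le_const (by norm_num)
  filter_upwards [hev, eventually_ge_atTop T] with t h1 h2
  linarith [key t h2]

/-- Right-limit bound: if `f < c` just to the right of `s`, then `f s ≤ c`. -/
lemma right_lim_le {f : ℝ → ℝ} {s b c : ℝ} (hsb : s < b) (hc : ContinuousAt f s)
    (h : ∀ u, s < u → u ≤ b → f u < c) : f s ≤ c := by
  have htend : Tendsto f (nhdsWithin s (Set.Ioi s)) (nhds (f s)) :=
    hc.continuousWithinAt
  have hev : ∀ᶠ u in nhdsWithin s (Set.Ioi s), f u ≤ c := by
    filter_upwards [Ioo_mem_nhdsGT_of_mem (Set.left_mem_Ico.2 hsb)] with u hu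
    exact (h u hu.1 hu.2.le).le
  exact le_of_tendsto htend hev

/-- Last crossing point from above. -/
lemma last_crossing {f : ℝ → ℝ} {a b c : ℝ} (hab : a ≤ b)
    (hc : ∀ u ∈ Set.Icc a b, ContinuousAt f u)
    (hfa : c ≤ f a) (hfb : f b < c) :
    ∃ s, a ≤ s ∧ s < b ∧ f s = c ∧ ∀ u, s < u → u ≤ b → f u < c := by
  set S := Set.Icc a b ∩ f ⁻¹' Set.Ici c with hS
  have hcont : ContinuousOn f (Set.Icc a b) :=
    fun u hu => (hc u hu).continuousWithinAt
  have hclosed : IsClosed S :=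
    hcont.preimage_isClosed_of_isClosed isClosed_Icc isClosed_Ici
  have hne : S.Nonempty := ⟨a, Set.left_mem_Icc.2 hab, hfa⟩
  have hbdd : BddAbove S := ⟨b, fun u hu => hu.1.2⟩
  set s := sSup S with hs
  have hmem : s ∈ S := hclosed.csSup_mem hne hbdd
  have hsa : a ≤ s := hmem.1.1
  have hsb : s ≤ b := hmem.1.2
  have hsb' : s < b := by
    rcases hsb.lt_or_eq with h | h
    · exact h
    · exact absurd (h ▸ hmem.2 : c ≤ f b) (not_le.2 hfb)
  have hlt : ∀ u, s < u → u ≤ b → f u < c := by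
    intro u hsu hub
    by_contra hcon
    push_neg at hcon
    have : u ∈ S := ⟨⟨hsa.trans hsu.le, hub⟩, hcon⟩
    exact absurd (le_csSup hbdd this) (not_le.2 hsu)
  have hfs : f s = c :=
    le_antisymm (right_lim_le hsb' (hc s hmem.1) hlt) hmem.2
  exact ⟨s, hsa, hsb', hfs, hlt⟩

/-- If `z' = z·H` with `H` bounded and `z s ≥ 0`, then `z` stays nonnegative. -/
lemma stay_nonneg {z H : ℝ → ℝ} {s e C : ℝ} (hse : s ≤ e)
    (hd : ∀ t ∈ Set.Icc s e, HasDerivAt z (z t * H t) t)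
    (hH : ∀ t ∈ Set.Icc s e, |H t| ≤ C) (hz : 0 ≤ z s) :
    ∀ t ∈ Set.Icc s e, 0 ≤ z t := by
  by_contra hcon
  push_neg at hcon
  obtain ⟨τ, hτ, hzτ⟩ := hcon
  have hsτ : s ≤ τ := hτ.1
  have hsub : Set.Icc s τ ⊆ Set.Icc s e := Set.Icc_subset_Icc le_rfl hτ.2
  set S := Set.Icc s τ ∩ z ⁻¹' Set.Ici 0 with hS
  have hcont : ContinuousOn z (Set.Icc s τ) :=
    fun u hu => ((hd u (hsub hu)).continuousAt).continuousWithinAt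
  have hclosed : IsClosed S :=
    hcont.preimage_isClosed_of_isClosed isClosed_Icc isClosed_Ici
  have hne : S.Nonempty := ⟨s, Set.left_mem_Icc.2 hsτ, hz⟩
  have hbdd : BddAbove S := ⟨τ, fun u hu => hu.1.2⟩
  set s' := sSup S with hs'
  have hmem : s' ∈ S := hclosed.csSup_mem hne hbdd
  have hs'τ : s' < τ := by
    rcases hmem.1.2.lt_or_eq with h | h
    · exact h
    · exact absurd (h ▸ hmem.2 : (0:ℝ) ≤ z τ) (not_le.2 hzτ)
  have hneg : ∀ u, s' < u → u ≤ τ → z u < 0 := by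
    intro u hsu hub
    by_contra hcon2
    push_neg at hcon2
    have : u ∈ S := ⟨⟨hmem.1.1.trans hsu.le, hub⟩, hcon2⟩
    exact absurd (le_csSup hbdd this) (not_le.2 hsu)
  have hz0 : z s' = 0 :=
    le_antisymm (right_lim_le hs'τ (hd s' (hsub hmem.1)).continuousAt
      (fun u h1 h2 => hneg u h1 h2)) hmem.2
  have hlow := exp_lower (x := z) (fx := fun u => z u * H u) (γ := C) hs'τ.le
    (fun u hu => hd u (hsub (Set.Icc_subset_Icc hmem.1.1 le_rfl hu)))
    (fun u hu => by
      have hue : u ∈ Set.Icc s e := hsub (Set.Icc_subset_Icc hmem.1.1 le_rfl hu)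
      have hzle : z u ≤ 0 := by
        rcases hu.1.lt_or_eq with h | h
        · exact (hneg u h hu.2).le
        · rw [← h, hz0]
      have hHle := (abs_le.1 (hH u hue)).2
      show C * z u ≤ z u * H u
      nlinarith)
  rw [hz0, zero_mul] at hlow
  exact absurd hlow (not_le.2 hzτ)

lemma left_lim_ge {f : ℝ → ℝ} {t1 : ℝ} (h0 : 0 < t1) (hc : ContinuousAt f t1)
    (h : ∀ u, 0 ≤ u → u < t1 → 0 ≤ f u) : 0 ≤ f t1 := by
  have htend : Tendsto f (nhdsWithin t1 (Set.Iio t1)) (nhds (f t1)) :=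
    hc.continuousWithinAt
  have hev : ∀ᶠ u in nhdsWithin t1 (Set.Iio t1), 0 ≤ f u := by
    filter_upwards [Ioo_mem_nhdsLT_of_mem (Set.right_mem_Ioc.2 h0)] with u hu
    exact h u hu.1.le hu.2
  exact ge_of_tendsto htend hev

section System

variable {r a1 a2 K1 K2 d1 d2 ρ1 ρ2 : ℝ} {x1 y1 x2 y2 : ℝ → ℝ}

/-- Nonnegativity of all components of Model (1). -/
lemma sys_nonneg
    (hdx1 : ∀ t : ℝ, 0 ≤ t → HasDerivAt x1
      (x1 t * (1 - x1 t / K1) - a1 * x1 t * y1 t / (1 + x1 t)) t)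
    (hdy1 : ∀ t : ℝ, 0 ≤ t → HasDerivAt y1
      (a1 * x1 t * y1 t / (1 + x1 t) - d1 * y1 t +
        ρ1 * (a1 * x1 t * y1 t * y2 t / (1 + x1 t) -
              a2 * x2 t * y1 t * y2 t / (1 + x2 t))) t)
    (hdx2 : ∀ t : ℝ, 0 ≤ t → HasDerivAt x2
      (r * x2 t * (1 - x2 t / K2) - a2 * x2 t * y2 t / (1 + x2 t)) t)
    (hdy2 : ∀ t : ℝ, 0 ≤ t → HasDerivAt y2
      (a2 * x2 t * y2 t / (1 + x2 t) - d2 * y2 t +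
        ρ2 * (a2 * x2 t * y1 t * y2 t / (1 + x2 t) -
              a1 * x1 t * y1 t * y2 t / (1 + x1 t))) t)
    (hx10 : 0 ≤ x1 0) (hy10 : 0 ≤ y1 0) (hx20 : 0 ≤ x2 0) (hy20 : 0 ≤ y2 0) :
    ∀ t : ℝ, 0 ≤ t → 0 ≤ x1 t ∧ 0 ≤ y1 t ∧ 0 ≤ x2 t ∧ 0 ≤ y2 t := by
  intro T hT
  by_contra hcon
  -- set of bad times in [0, T]
  set N := {t : ℝ | t ∈ Set.Icc 0 T ∧
    (x1 t < 0 ∨ y1 t < 0 ∨ x2 t < 0 ∨ y2 t < 0)} with hN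
  have hTN : T ∈ N := by
    refine ⟨Set.right_mem_Icc.2 hT, ?_⟩
    by_contra h2
    push_neg at h2
    exact hcon ⟨h2.1, h2.2.1, h2.2.2.1, h2.2.2.2⟩
  have hne : N.Nonempty := ⟨T, hTN⟩
  have hbdd : BddBelow N := ⟨0, fun u hu => hu.1.1⟩
  set t1 := sInf N with ht1
  have ht1mem : 0 ≤ t1 := le_csInf hne (fun u hu => hu.1.1)
  have ht1T : t1 ≤ T := csInf_le hbdd hTN
  have hband : ∀ u, 0 ≤ u → u < t1 →
      0 ≤ x1 u ∧ 0 ≤ y1 u ∧ 0 ≤ x2 u ∧ 0 ≤ y2 u := by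
    intro u hu hut
    by_contra h2
    have huN : u ∈ N := by
      refine ⟨⟨hu, le_trans hut.le ht1T⟩, ?_⟩
      by_contra h3
      push_neg at h3
      exact h2 ⟨h3.1, h3.2.1, h3.2.2.1, h3.2.2.2⟩
    exact absurd (csInf_le hbdd huN) (not_le.2 hut)
  -- all components are nonneg at t1
  have hPt1 : 0 ≤ x1 t1 ∧ 0 ≤ y1 t1 ∧ 0 ≤ x2 t1 ∧ 0 ≤ y2 t1 := by
    rcases eq_or_lt_of_le ht1mem with h0 | h0
    · rw [← h0]; exact ⟨hx10, hy10, hx20, hy20⟩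
    · exact ⟨left_lim_ge h0 (hdx1 t1 ht1mem).continuousAt
          (fun u hu hut => (hband u hu hut).1),
        left_lim_ge h0 (hdy1 t1 ht1mem).continuousAt
          (fun u hu hut => (hband u hu hut).2.1),
        left_lim_ge h0 (hdx2 t1 ht1mem).continuousAt
          (fun u hu hut => (hband u hu hut).2.2.1),
        left_lim_ge h0 (hdy2 t1 ht1mem).continuousAt
          (fun u hu hut => (hband u hu hut).2.2.2)⟩
  have ht1N : t1 ∉ N := by
    intro hmem
    rcases hmem.2 with h | h | h | h
    · exact absurd hPt1.1 (not_le.2 h)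
    · exact absurd hPt1.2.1 (not_le.2 h)
    · exact absurd hPt1.2.2.1 (not_le.2 h)
    · exact absurd hPt1.2.2.2 (not_le.2 h)
  have ht1T' : t1 < T := lt_of_le_of_ne ht1T (fun h => ht1N (h ▸ hTN))
  -- find η > 0 with good control on [t1, t1+η]
  have hev : ∀ᶠ u in nhds t1, -(1/2 : ℝ) < x1 u ∧ -(1/2 : ℝ) < x2 u := by
    have e1 : ∀ᶠ u in nhds t1, -(1/2 : ℝ) < x1 u :=
      (hdx1 t1 ht1mem).continuousAt.eventually_const_lt (by linarith [hPt1.1])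
    have e2 : ∀ᶠ u in nhds t1, -(1/2 : ℝ) < x2 u :=
      (hdx2 t1 ht1mem).continuousAt.eventually_const_lt (by linarith [hPt1.2.2.1])
    exact e1.and e2
  rw [Metric.eventually_nhds_iff] at hev
  obtain ⟨ε, hε, hball⟩ := hev
  set η := min (ε / 2) (T - t1) with hη
  have hη0 : 0 < η := lt_min (by linarith) (by linarith)
  have hI : ∀ u ∈ Set.Icc t1 (t1 + η), -(1/2 : ℝ) < x1 u ∧ -(1/2 : ℝ) < x2 u := by
    intro u hu
    apply hball
    rw [Real.dist_eq, abs_lt]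
    constructor <;>
      [linarith [hu.1, hε]; linarith [hu.2, min_le_left (ε/2) (T - t1), hη0]]
  have hIT : t1 + η ≤ T := by
    have := min_le_right (ε / 2) (T - t1); linarith
  have hI0 : ∀ u ∈ Set.Icc t1 (t1 + η), (0:ℝ) ≤ u :=
    fun u hu => le_trans ht1mem hu.1
  -- continuity of components on the interval
  have hcx1 : ContinuousOn x1 (Set.Icc t1 (t1 + η)) :=
    fun u hu => ((hdx1 u (hI0 u hu)).continuousAt).continuousWithinAt
  have hcy1 : ContinuousOn y1 (Set.Icc t1 (t1 + η)) :=
    fun u hu => ((hdy1 u (hI0 u hu)).continuousAt).continuousWithinAt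
  have hcx2 : ContinuousOn x2 (Set.Icc t1 (t1 + η)) :=
    fun u hu => ((hdx2 u (hI0 u hu)).continuousAt).continuousWithinAt
  have hcy2 : ContinuousOn y2 (Set.Icc t1 (t1 + η)) :=
    fun u hu => ((hdy2 u (hI0 u hu)).continuousAt).continuousWithinAt
  have hden1 : ∀ u ∈ Set.Icc t1 (t1 + η), (1 + x1 u) ≠ 0 :=
    fun u hu h => by have h2 := (hI u hu).1; linarith
  have hden2 : ∀ u ∈ Set.Icc t1 (t1 + η), (1 + x2 u) ≠ 0 :=
    fun u hu h => by have h2 := (hI u hu).2; linarith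
  have hcd1 : ContinuousOn (fun u => 1 + x1 u) (Set.Icc t1 (t1 + η)) :=
    continuousOn_const.add hcx1
  have hcd2 : ContinuousOn (fun u => 1 + x2 u) (Set.Icc t1 (t1 + η)) :=
    continuousOn_const.add hcx2
  -- the four ratio functions
  have hcH1 : ContinuousOn (fun u => (1 - x1 u / K1) - a1 * y1 u / (1 + x1 u))
      (Set.Icc t1 (t1 + η)) :=
    (continuousOn_const.sub (hcx1.div_const K1)).sub
      ((continuousOn_const.mul hcy1).div hcd1 hden1)
  have hcH2 : ContinuousOn (fun u => a1 * x1 u / (1 + x1 u) - d1 +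
      ρ1 * (a1 * x1 u * y2 u / (1 + x1 u) - a2 * x2 u * y2 u / (1 + x2 u)))
      (Set.Icc t1 (t1 + η)) :=
    (((continuousOn_const.mul hcx1).div hcd1 hden1).sub continuousOn_const).add
      (continuousOn_const.mul
        ((((continuousOn_const.mul hcx1).mul hcy2).div hcd1 hden1).sub
          (((continuousOn_const.mul hcx2).mul hcy2).div hcd2 hden2)))
  have hcH3 : ContinuousOn (fun u => r * (1 - x2 u / K2) - a2 * y2 u / (1 + x2 u))
      (Set.Icc t1 (t1 + η)) :=
    (continuousOn_const.mul (continuousOn_const.sub (hcx2.div_const K2))).sub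
      ((continuousOn_const.mul hcy2).div hcd2 hden2)
  have hcH4 : ContinuousOn (fun u => a2 * x2 u / (1 + x2 u) - d2 +
      ρ2 * (a2 * x2 u * y1 u / (1 + x2 u) - a1 * x1 u * y1 u / (1 + x1 u)))
      (Set.Icc t1 (t1 + η)) :=
    (((continuousOn_const.mul hcx2).div hcd2 hden2).sub continuousOn_const).add
      (continuousOn_const.mul
        ((((continuousOn_const.mul hcx2).mul hcy1).div hcd2 hden2).sub
          (((continuousOn_const.mul hcx1).mul hcy1).div hcd1 hden1)))
  obtain ⟨C1, hC1⟩ := (isCompact_Icc).exists_bound_of_continuousOn hcH1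
  obtain ⟨C2, hC2⟩ := (isCompact_Icc).exists_bound_of_continuousOn hcH2
  obtain ⟨C3, hC3⟩ := (isCompact_Icc).exists_bound_of_continuousOn hcH3
  obtain ⟨C4, hC4⟩ := (isCompact_Icc).exists_bound_of_continuousOn hcH4
  simp only [Real.norm_eq_abs] at hC1 hC2 hC3 hC4
  have hstay1 : ∀ u ∈ Set.Icc t1 (t1 + η), 0 ≤ x1 u := by
    apply stay_nonneg (H := fun u => (1 - x1 u / K1) - a1 * y1 u / (1 + x1 u))
      (C := C1) (by linarith) _ hC1 hPt1.1
    intro u hu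
    have h := hdx1 u (hI0 u hu)
    have e : x1 u * (1 - x1 u / K1) - a1 * x1 u * y1 u / (1 + x1 u)
        = x1 u * ((1 - x1 u / K1) - a1 * y1 u / (1 + x1 u)) := by ring
    rwa [e] at h
  have hstay2 : ∀ u ∈ Set.Icc t1 (t1 + η), 0 ≤ y1 u := by
    apply stay_nonneg (H := fun u => a1 * x1 u / (1 + x1 u) - d1 +
        ρ1 * (a1 * x1 u * y2 u / (1 + x1 u) - a2 * x2 u * y2 u / (1 + x2 u)))
      (C := C2) (by linarith) _ hC2 hPt1.2.1
    intro u hu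
    have h := hdy1 u (hI0 u hu)
    have e : a1 * x1 u * y1 u / (1 + x1 u) - d1 * y1 u +
        ρ1 * (a1 * x1 u * y1 u * y2 u / (1 + x1 u) -
              a2 * x2 u * y1 u * y2 u / (1 + x2 u))
        = y1 u * (a1 * x1 u / (1 + x1 u) - d1 +
            ρ1 * (a1 * x1 u * y2 u / (1 + x1 u) - a2 * x2 u * y2 u / (1 + x2 u))) := by
      ring
    rwa [e] at h
  have hstay3 : ∀ u ∈ Set.Icc t1 (t1 + η), 0 ≤ x2 u := by
    apply stay_nonneg (H := fun u => r * (1 - x2 u / K2) - a2 * y2 u / (1 + x2 u))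
      (C := C3) (by linarith) _ hC3 hPt1.2.2.1
    intro u hu
    have h := hdx2 u (hI0 u hu)
    have e : r * x2 u * (1 - x2 u / K2) - a2 * x2 u * y2 u / (1 + x2 u)
        = x2 u * (r * (1 - x2 u / K2) - a2 * y2 u / (1 + x2 u)) := by ring
    rwa [e] at h
  have hstay4 : ∀ u ∈ Set.Icc t1 (t1 + η), 0 ≤ y2 u := by
    apply stay_nonneg (H := fun u => a2 * x2 u / (1 + x2 u) - d2 +
        ρ2 * (a2 * x2 u * y1 u / (1 + x2 u) - a1 * x1 u * y1 u / (1 + x1 u)))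
      (C := C4) (by linarith) _ hC4 hPt1.2.2.2
    intro u hu
    have h := hdy2 u (hI0 u hu)
    have e : a2 * x2 u * y2 u / (1 + x2 u) - d2 * y2 u +
        ρ2 * (a2 * x2 u * y1 u * y2 u / (1 + x2 u) -
              a1 * x1 u * y1 u * y2 u / (1 + x1 u))
        = y2 u * (a2 * x2 u / (1 + x2 u) - d2 +
            ρ2 * (a2 * x2 u * y1 u / (1 + x2 u) - a1 * x1 u * y1 u / (1 + x1 u))) := by
      ring
    rwa [e] at h
  -- contradiction: there is a bad point in [t1, t1+η]
  have hlt : sInf N < t1 + η := by rw [← ht1]; linarith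
  obtain ⟨n, hnN, hn⟩ := exists_lt_of_csInf_lt hne hlt
  have hn1 : t1 ≤ n := csInf_le hbdd hnN
  have hnI : n ∈ Set.Icc t1 (t1 + η) := ⟨hn1, hn.le⟩
  rcases hnN.2 with h | h | h | h
  · exact absurd (hstay1 n hnI) (not_le.2 h)
  · exact absurd (hstay2 n hnI) (not_le.2 h)
  · exact absurd (hstay3 n hnI) (not_le.2 h)
  · exact absurd (hstay4 n hnI) (not_le.2 h)

end System

/-- Strict positivity of a prey component. -/
lemma prey_pos {g K a : ℝ} {x y : ℝ → ℝ}
    (hd : ∀ t : ℝ, 0 ≤ t →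
      HasDerivAt x (g * x t * (1 - x t / K) - a * x t * y t / (1 + x t)) t)
    (hcy : ∀ t : ℝ, 0 ≤ t → ContinuousAt y t)
    (hnnx : ∀ t : ℝ, 0 ≤ t → 0 ≤ x t) (hnny : ∀ t : ℝ, 0 ≤ t → 0 ≤ y t)
    (hx0 : 0 < x 0) : ∀ t : ℝ, 0 ≤ t → 0 < x t := by
  intro t ht
  rcases eq_or_lt_of_le ht with h0 | h0
  · rwa [← h0]
  set H : ℝ → ℝ := fun u => g * (1 - x u / K) - a * y u / (1 + x u) with hH
  have hsub : ∀ u ∈ Set.Icc (0:ℝ) t, (0:ℝ) ≤ u := fun u hu => hu.1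
  have hden : ∀ u ∈ Set.Icc (0:ℝ) t, (1 + x u) ≠ 0 :=
    fun u hu h => by have := hnnx u hu.1; linarith
  have hcx : ContinuousOn x (Set.Icc 0 t) :=
    fun u hu => ((hd u hu.1).continuousAt).continuousWithinAt
  have hcH : ContinuousOn H (Set.Icc 0 t) :=
    (continuousOn_const.mul (continuousOn_const.sub (hcx.div_const K))).sub
      ((continuousOn_const.mul
        (fun u hu => (hcy u hu.1).continuousWithinAt)).div
        (continuousOn_const.add hcx) hden)
  obtain ⟨C, hC⟩ := (isCompact_Icc).exists_bound_of_continuousOn hcH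
  simp only [Real.norm_eq_abs] at hC
  have hd' : ∀ u ∈ Set.Icc (0:ℝ) t, HasDerivAt x (x u * H u) u := by
    intro u hu
    have h := hd u hu.1
    have e : g * x u * (1 - x u / K) - a * x u * y u / (1 + x u)
        = x u * H u := by rw [hH]; ring
    rwa [e] at h
  have hlow := exp_lower (x := x) (fx := fun u => x u * H u) (γ := -C) ht
    hd' (fun u hu => by
      have h1 := hnnx u hu.1
      have h2 := (abs_le.1 (hC u hu)).1
      show -C * x u ≤ x u * H u
      nlinarith)
  have : 0 < x 0 * Real.exp (-C * (t - 0)) := mul_pos hx0 (Real.exp_pos _)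
  linarith

lemma logistic_bound {g K δ : ℝ} (hg : 0 < g) (hK : 0 < K) (x : ℝ) :
    g * x * (1 - x / K) + δ * x ≤ K * (g + δ)^2 / (4 * g) := by
  rw [show g * x * (1 - x / K) + δ * x
      = (4 * g * (g * x * (K - x)) + 4 * g * (δ * x * K)) / (4 * g * K) by
        field_simp,
    div_le_div_iff₀ (by positivity) (by positivity)]
  nlinarith [mul_nonneg (mul_nonneg (by positivity : (0:ℝ) ≤ 4 * g * K) hg.le)
    (sq_nonneg (2 * g * x - K * (g + δ))), hg, hK, mul_pos hg hK]

/-- Eventual upper bound for a prey component. -/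
lemma prey_upper {g K a : ℝ} {x y : ℝ → ℝ} (hg : 0 < g) (hK : 0 < K)
    (hd : ∀ t : ℝ, 0 ≤ t →
      HasDerivAt x (g * x t * (1 - x t / K) - a * x t * y t / (1 + x t)) t)
    (hnnx : ∀ t : ℝ, 0 ≤ t → 0 ≤ x t) (hnny : ∀ t : ℝ, 0 ≤ t → 0 ≤ y t)
    (ha : 0 < a) :
    ∀ᶠ t in atTop, x t ≤ K + 1 := by
  have hdec := eventually_le_of_decay_s6 (V := x)
    (fV := fun t => g * x t * (1 - x t / K) - a * x t * y t / (1 + x t))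
    (T := 0) (C := g * K) (δ := g) hg (fun t ht => hd t ht)
    (fun t ht => by
      have h1 := hnnx t ht
      have h2 := hnny t ht
      have h3 : (0:ℝ) ≤ a * x t * y t / (1 + x t) :=
        div_nonneg (by positivity) (by linarith)
      show g * x t * (1 - x t / K) - a * x t * y t / (1 + x t) ≤ g * K - g * x t
      have h4 : g * x t * (1 - x t / K) ≤ g * K - g * x t := by
        rw [show g * x t * (1 - x t / K) = (g * x t * (K - x t)) / K by
              field_simp; try ring,
          div_le_iff₀ hK]
        nlinarith [mul_nonneg hg.le (sq_nonneg (x t - K))]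
      linarith)
  have he : g * K / g + 1 = K + 1 := by
    rw [mul_comm, mul_div_assoc, div_self hg.ne', mul_one]
  rwa [he] at hdec

section YBounds

variable {r a1 a2 K1 K2 d1 d2 ρ1 ρ2 : ℝ}

/-- Solution predicate for Model (1). -/
def IsSol (r a1 a2 K1 K2 d1 d2 ρ1 ρ2 : ℝ) (x1 y1 x2 y2 : ℝ → ℝ) : Prop :=
  (∀ t : ℝ, 0 ≤ t → HasDerivAt x1
      (x1 t * (1 - x1 t / K1) - a1 * x1 t * y1 t / (1 + x1 t)) t) ∧
  (∀ t : ℝ, 0 ≤ t → HasDerivAt y1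
      (a1 * x1 t * y1 t / (1 + x1 t) - d1 * y1 t +
        ρ1 * (a1 * x1 t * y1 t * y2 t / (1 + x1 t) -
              a2 * x2 t * y1 t * y2 t / (1 + x2 t))) t) ∧
  (∀ t : ℝ, 0 ≤ t → HasDerivAt x2
      (r * x2 t * (1 - x2 t / K2) - a2 * x2 t * y2 t / (1 + x2 t)) t) ∧
  (∀ t : ℝ, 0 ≤ t → HasDerivAt y2
      (a2 * x2 t * y2 t / (1 + x2 t) - d2 * y2 t +
        ρ2 * (a2 * x2 t * y1 t * y2 t / (1 + x2 t) -
              a1 * x1 t * y1 t * y2 t / (1 + x1 t))) t)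


/-- Cross bound for predator 1. -/
lemma ybound1 (hr : 0 < r) (ha1 : 0 < a1) (ha2 : 0 < a2) (hK1 : 0 < K1)
    (hK2 : 0 < K2) (hd1 : 0 < d1) (hd2 : 0 < d2) (hρ1 : 0 ≤ ρ1) (hρ2 : 0 ≤ ρ2)
    {x1 y1 x2 y2 : ℝ → ℝ} {Y2 T : ℝ} (hY2 : 0 ≤ Y2) (hT : 0 ≤ T)
    (hsol : IsSol r a1 a2 K1 K2 d1 d2 ρ1 ρ2 x1 y1 x2 y2)
    (hnn : ∀ t : ℝ, 0 ≤ t → 0 ≤ x1 t ∧ 0 ≤ y1 t ∧ 0 ≤ x2 t ∧ 0 ≤ y2 t)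
    (hcross : ∀ t : ℝ, T ≤ t → ρ1 * y2 t ≤ ρ1 * Y2) :
    ∀ᶠ t in atTop, y1 t ≤ (1 + ρ1 * Y2) * (K1 * (1 + d1)^2 / 4) / d1 + 1 := by
  set c := 1 + ρ1 * Y2 with hc
  have hc0 : 0 ≤ c := by positivity
  have hdec := eventually_le_of_decay_s6
    (V := fun t => y1 t + c * x1 t)
    (fV := fun t => (a1 * x1 t * y1 t / (1 + x1 t) - d1 * y1 t +
        ρ1 * (a1 * x1 t * y1 t * y2 t / (1 + x1 t) -
              a2 * x2 t * y1 t * y2 t / (1 + x2 t))) +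
      c * (x1 t * (1 - x1 t / K1) - a1 * x1 t * y1 t / (1 + x1 t)))
    (T := T) (C := c * (K1 * (1 + d1)^2 / 4)) (δ := d1) hd1
    (fun t ht => (hsol.2.1 t (hT.trans ht)).add ((hsol.1 t (hT.trans ht)).const_mul c))
    (fun t ht => by
      have ht0 : (0:ℝ) ≤ t := hT.trans ht
      obtain ⟨hx1, hy1, hx2, hy2⟩ := hnn t ht0
      have hA : (0:ℝ) ≤ a1 * x1 t * y1 t / (1 + x1 t) :=
        div_nonneg (by positivity) (by linarith)
      have hQ : (0:ℝ) ≤ a2 * x2 t * y1 t * y2 t / (1 + x2 t) :=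
        div_nonneg (by positivity) (by linarith)
      have h1 : (ρ1 * y2 t - ρ1 * Y2) * (a1 * x1 t * y1 t / (1 + x1 t)) ≤ 0 :=
        mul_nonpos_of_nonpos_of_nonneg (by linarith [hcross t ht]) hA
      have lb := logistic_bound (g := 1) (δ := d1) one_pos hK1 (x1 t)
      norm_num at lb
      have h2 : c * (x1 t * (1 - x1 t / K1)) ≤ c * (K1 * (1 + d1)^2 / 4 - d1 * x1 t) :=
        mul_le_mul_of_nonneg_left (by linarith) hc0
      have e : (a1 * x1 t * y1 t / (1 + x1 t) - d1 * y1 t +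
          ρ1 * (a1 * x1 t * y1 t * y2 t / (1 + x1 t) -
                a2 * x2 t * y1 t * y2 t / (1 + x2 t))) +
          c * (x1 t * (1 - x1 t / K1) - a1 * x1 t * y1 t / (1 + x1 t))
          = (ρ1 * y2 t - ρ1 * Y2) * (a1 * x1 t * y1 t / (1 + x1 t))
            - ρ1 * (a2 * x2 t * y1 t * y2 t / (1 + x2 t)) - d1 * y1 t
            + c * (x1 t * (1 - x1 t / K1)) := by rw [hc]; ring
      beta_reduce
      show _ ≤ c * (K1 * (1 + d1)^2 / 4) - d1 * (y1 t + c * x1 t)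
      rw [e]
      have h3 : 0 ≤ ρ1 * (a2 * x2 t * y1 t * y2 t / (1 + x2 t)) :=
        mul_nonneg hρ1 hQ
      nlinarith [h1, h2, h3])
  filter_upwards [hdec, eventually_ge_atTop (0:ℝ)] with t h ht0
  have hx1 := (hnn t ht0).1
  have : 0 ≤ c * x1 t := mul_nonneg hc0 hx1
  calc y1 t ≤ y1 t + c * x1 t := by linarith
    _ ≤ c * (K1 * (1 + d1)^2 / 4) / d1 + 1 := h
    _ = (1 + ρ1 * Y2) * (K1 * (1 + d1)^2 / 4) / d1 + 1 := by rw [hc]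

/-- Cross bound for predator 2. -/
lemma ybound2 (hr : 0 < r) (ha1 : 0 < a1) (ha2 : 0 < a2) (hK1 : 0 < K1)
    (hK2 : 0 < K2) (hd1 : 0 < d1) (hd2 : 0 < d2) (hρ1 : 0 ≤ ρ1) (hρ2 : 0 ≤ ρ2)
    {x1 y1 x2 y2 : ℝ → ℝ} {Y1 T : ℝ} (hY1 : 0 ≤ Y1) (hT : 0 ≤ T)
    (hsol : IsSol r a1 a2 K1 K2 d1 d2 ρ1 ρ2 x1 y1 x2 y2)
    (hnn : ∀ t : ℝ, 0 ≤ t → 0 ≤ x1 t ∧ 0 ≤ y1 t ∧ 0 ≤ x2 t ∧ 0 ≤ y2 t)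
    (hcross : ∀ t : ℝ, T ≤ t → ρ2 * y1 t ≤ ρ2 * Y1) :
    ∀ᶠ t in atTop, y2 t ≤ (1 + ρ2 * Y1) * (K2 * (r + d2)^2 / (4 * r)) / d2 + 1 := by
  set c := 1 + ρ2 * Y1 with hc
  have hc0 : 0 ≤ c := by positivity
  have hdec := eventually_le_of_decay_s6
    (V := fun t => y2 t + c * x2 t)
    (fV := fun t => (a2 * x2 t * y2 t / (1 + x2 t) - d2 * y2 t +
        ρ2 * (a2 * x2 t * y1 t * y2 t / (1 + x2 t) -
              a1 * x1 t * y1 t * y2 t / (1 + x1 t))) +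
      c * (r * x2 t * (1 - x2 t / K2) - a2 * x2 t * y2 t / (1 + x2 t)))
    (T := T) (C := c * (K2 * (r + d2)^2 / (4 * r))) (δ := d2) hd2
    (fun t ht => (hsol.2.2.2 t (hT.trans ht)).add ((hsol.2.2.1 t (hT.trans ht)).const_mul c))
    (fun t ht => by
      have ht0 : (0:ℝ) ≤ t := hT.trans ht
      obtain ⟨hx1, hy1, hx2, hy2⟩ := hnn t ht0
      have hA : (0:ℝ) ≤ a2 * x2 t * y2 t / (1 + x2 t) :=
        div_nonneg (by positivity) (by linarith)
      have hQ : (0:ℝ) ≤ a1 * x1 t * y1 t * y2 t / (1 + x1 t) :=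
        div_nonneg (by positivity) (by linarith)
      have h1 : (ρ2 * y1 t - ρ2 * Y1) * (a2 * x2 t * y2 t / (1 + x2 t)) ≤ 0 :=
        mul_nonpos_of_nonpos_of_nonneg (by linarith [hcross t ht]) hA
      have lb := logistic_bound (g := r) (δ := d2) hr hK2 (x2 t)
      have h2 : c * (r * x2 t * (1 - x2 t / K2)) ≤
          c * (K2 * (r + d2)^2 / (4 * r) - d2 * x2 t) :=
        mul_le_mul_of_nonneg_left (by linarith) hc0
      have e : (a2 * x2 t * y2 t / (1 + x2 t) - d2 * y2 t +
          ρ2 * (a2 * x2 t * y1 t * y2 t / (1 + x2 t) -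
                a1 * x1 t * y1 t * y2 t / (1 + x1 t))) +
          c * (r * x2 t * (1 - x2 t / K2) - a2 * x2 t * y2 t / (1 + x2 t))
          = (ρ2 * y1 t - ρ2 * Y1) * (a2 * x2 t * y2 t / (1 + x2 t))
            - ρ2 * (a1 * x1 t * y1 t * y2 t / (1 + x1 t)) - d2 * y2 t
            + c * (r * x2 t * (1 - x2 t / K2)) := by rw [hc]; ring
      beta_reduce
      show _ ≤ c * (K2 * (r + d2)^2 / (4 * r)) - d2 * (y2 t + c * x2 t)
      rw [e]
      have h3 : 0 ≤ ρ2 * (a1 * x1 t * y1 t * y2 t / (1 + x1 t)) :=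
        mul_nonneg hρ2 hQ
      nlinarith [h1, h2, h3])
  filter_upwards [hdec, eventually_ge_atTop (0:ℝ)] with t h ht0
  have hx2 := (hnn t ht0).2.2.1
  have : 0 ≤ c * x2 t := mul_nonneg hc0 hx2
  calc y2 t ≤ y2 t + c * x2 t := by linarith
    _ ≤ c * (K2 * (r + d2)^2 / (4 * r)) / d2 + 1 := h
    _ = (1 + ρ2 * Y1) * (K2 * (r + d2)^2 / (4 * r)) / d2 + 1 := by rw [hc]

/-- Both migrations positive: joint Lyapunov bound. -/
lemma ybound_both (hr : 0 < r) (ha1 : 0 < a1) (ha2 : 0 < a2) (hK1 : 0 < K1)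
    (hK2 : 0 < K2) (hd1 : 0 < d1) (hd2 : 0 < d2) (hρ1 : 0 < ρ1) (hρ2 : 0 < ρ2)
    {x1 y1 x2 y2 : ℝ → ℝ}
    (hsol : IsSol r a1 a2 K1 K2 d1 d2 ρ1 ρ2 x1 y1 x2 y2)
    (hnn : ∀ t : ℝ, 0 ≤ t → 0 ≤ x1 t ∧ 0 ≤ y1 t ∧ 0 ≤ x2 t ∧ 0 ≤ y2 t) :
    ∀ᶠ t in atTop,
      y1 t ≤ ((ρ2 * (K1 * (1 + min d1 d2)^2 / 4) +
        ρ1 * (K2 * (r + min d1 d2)^2 / (4 * r))) / min d1 d2 + 1) / ρ2 ∧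
      y2 t ≤ ((ρ2 * (K1 * (1 + min d1 d2)^2 / 4) +
        ρ1 * (K2 * (r + min d1 d2)^2 / (4 * r))) / min d1 d2 + 1) / ρ1 := by
  set δ := min d1 d2 with hδdef
  have hδ : 0 < δ := lt_min hd1 hd2
  set C := ρ2 * (K1 * (1 + δ)^2 / 4) + ρ1 * (K2 * (r + δ)^2 / (4 * r)) with hC
  have hdec := eventually_le_of_decay_s6
    (V := fun t => ρ2 * (x1 t + y1 t) + ρ1 * (x2 t + y2 t))
    (fV := fun t => ρ2 * ((x1 t * (1 - x1 t / K1) - a1 * x1 t * y1 t / (1 + x1 t)) +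
        (a1 * x1 t * y1 t / (1 + x1 t) - d1 * y1 t +
          ρ1 * (a1 * x1 t * y1 t * y2 t / (1 + x1 t) -
                a2 * x2 t * y1 t * y2 t / (1 + x2 t)))) +
      ρ1 * ((r * x2 t * (1 - x2 t / K2) - a2 * x2 t * y2 t / (1 + x2 t)) +
        (a2 * x2 t * y2 t / (1 + x2 t) - d2 * y2 t +
          ρ2 * (a2 * x2 t * y1 t * y2 t / (1 + x2 t) -
                a1 * x1 t * y1 t * y2 t / (1 + x1 t)))))
    (T := 0) (C := C) (δ := δ) hδ
    (fun t ht => (((hsol.1 t ht).add (hsol.2.1 t ht)).const_mul ρ2).add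
      (((hsol.2.2.1 t ht).add (hsol.2.2.2 t ht)).const_mul ρ1))
    (fun t ht => by
      obtain ⟨hx1, hy1, hx2, hy2⟩ := hnn t ht
      have lb1 := logistic_bound (g := 1) (δ := δ) one_pos hK1 (x1 t)
      norm_num at lb1
      have lb2 := logistic_bound (g := r) (δ := δ) hr hK2 (x2 t)
      have e : ρ2 * ((x1 t * (1 - x1 t / K1) - a1 * x1 t * y1 t / (1 + x1 t)) +
          (a1 * x1 t * y1 t / (1 + x1 t) - d1 * y1 t +
            ρ1 * (a1 * x1 t * y1 t * y2 t / (1 + x1 t) -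
                  a2 * x2 t * y1 t * y2 t / (1 + x2 t)))) +
          ρ1 * ((r * x2 t * (1 - x2 t / K2) - a2 * x2 t * y2 t / (1 + x2 t)) +
            (a2 * x2 t * y2 t / (1 + x2 t) - d2 * y2 t +
              ρ2 * (a2 * x2 t * y1 t * y2 t / (1 + x2 t) -
                    a1 * x1 t * y1 t * y2 t / (1 + x1 t))))
          = ρ2 * (x1 t * (1 - x1 t / K1) - d1 * y1 t) +
            ρ1 * (r * x2 t * (1 - x2 t / K2) - d2 * y2 t) := by ring
      beta_reduce
      show _ ≤ C - δ * (ρ2 * (x1 t + y1 t) + ρ1 * (x2 t + y2 t))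
      rw [e, hC]
      have h1 : ρ2 * (x1 t * (1 - x1 t / K1)) ≤
          ρ2 * (K1 * (1 + δ)^2 / 4 - δ * x1 t) :=
        mul_le_mul_of_nonneg_left (by linarith) hρ2.le
      have h2 : ρ1 * (r * x2 t * (1 - x2 t / K2)) ≤
          ρ1 * (K2 * (r + δ)^2 / (4 * r) - δ * x2 t) :=
        mul_le_mul_of_nonneg_left (by linarith) hρ1.le
      have h3 : ρ2 * ((δ - d1) * y1 t) ≤ 0 :=
        mul_nonpos_of_nonneg_of_nonpos hρ2.le
          (mul_nonpos_of_nonpos_of_nonneg (by linarith [min_le_left d1 d2]) hy1)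
      have h4 : ρ1 * ((δ - d2) * y2 t) ≤ 0 :=
        mul_nonpos_of_nonneg_of_nonpos hρ1.le
          (mul_nonpos_of_nonpos_of_nonneg (by linarith [min_le_right d1 d2]) hy2)
      nlinarith [h1, h2, h3, h4])
  filter_upwards [hdec, eventually_ge_atTop (0:ℝ)] with t h ht0
  obtain ⟨hx1, hy1, hx2, hy2⟩ := hnn t ht0
  have hV1 : ρ2 * y1 t ≤ C / δ + 1 := by nlinarith [h]
  have hV2 : ρ1 * y2 t ≤ C / δ + 1 := by nlinarith [h]
  constructor
  · rw [le_div_iff₀ hρ2]; linarith [hV1]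
  · rw [le_div_iff₀ hρ1]; linarith [hV2]

/-- Uniform eventual bounds on the predators. -/
lemma ybounds_exist
    (hr : 0 < r) (ha1 : 0 < a1) (ha2 : 0 < a2) (hK1 : 0 < K1) (hK2 : 0 < K2)
    (hd1 : 0 < d1) (hd2 : 0 < d2) (hρ1 : 0 ≤ ρ1) (hρ2 : 0 ≤ ρ2) :
    ∃ Y1 Y2 : ℝ, 0 < Y1 ∧ 0 < Y2 ∧ ∀ x1 y1 x2 y2 : ℝ → ℝ,
      IsSol r a1 a2 K1 K2 d1 d2 ρ1 ρ2 x1 y1 x2 y2 →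
      (∀ t : ℝ, 0 ≤ t → 0 ≤ x1 t ∧ 0 ≤ y1 t ∧ 0 ≤ x2 t ∧ 0 ≤ y2 t) →
      (∀ᶠ t in atTop, y1 t ≤ Y1 ∧ y2 t ≤ Y2) := by
  by_cases hc1 : ρ1 = 0
  · refine ⟨(1 + ρ1 * 0) * (K1 * (1 + d1)^2 / 4) / d1 + 1,
      (1 + ρ2 * ((1 + ρ1 * 0) * (K1 * (1 + d1)^2 / 4) / d1 + 1)) *
        (K2 * (r + d2)^2 / (4 * r)) / d2 + 1, by positivity, by positivity, ?_⟩
    intro x1 y1 x2 y2 hsol hnn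
    have ev1 := ybound1 hr ha1 ha2 hK1 hK2 hd1 hd2 hρ1 hρ2 (Y2 := 0) (T := 0)
      le_rfl le_rfl hsol hnn (fun t ht => by rw [hc1]; simp)
    obtain ⟨T, hTy1⟩ := eventually_atTop.1 ev1
    have ev2 := ybound2 hr ha1 ha2 hK1 hK2 hd1 hd2 hρ1 hρ2
      (Y1 := (1 + ρ1 * 0) * (K1 * (1 + d1)^2 / 4) / d1 + 1) (T := max T 0)
      (by positivity) (le_max_right _ _) hsol hnn
      (fun t ht => mul_le_mul_of_nonneg_left (hTy1 t ((le_max_left _ _).trans ht)) hρ2)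
    exact ev1.and ev2
  by_cases hc2 : ρ2 = 0
  · refine ⟨(1 + ρ1 * ((1 + ρ2 * 0) * (K2 * (r + d2)^2 / (4 * r)) / d2 + 1)) *
        (K1 * (1 + d1)^2 / 4) / d1 + 1,
      (1 + ρ2 * 0) * (K2 * (r + d2)^2 / (4 * r)) / d2 + 1,
      by positivity, by positivity, ?_⟩
    intro x1 y1 x2 y2 hsol hnn
    have ev2 := ybound2 hr ha1 ha2 hK1 hK2 hd1 hd2 hρ1 hρ2 (Y1 := 0) (T := 0)
      le_rfl le_rfl hsol hnn (fun t ht => by rw [hc2]; simp)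
    obtain ⟨T, hTy2⟩ := eventually_atTop.1 ev2
    have ev1 := ybound1 hr ha1 ha2 hK1 hK2 hd1 hd2 hρ1 hρ2
      (Y2 := (1 + ρ2 * 0) * (K2 * (r + d2)^2 / (4 * r)) / d2 + 1) (T := max T 0)
      (by positivity) (le_max_right _ _) hsol hnn
      (fun t ht => mul_le_mul_of_nonneg_left (hTy2 t ((le_max_left _ _).trans ht)) hρ1)
    exact ev1.and ev2
  · have hρ1' : 0 < ρ1 := lt_of_le_of_ne hρ1 (Ne.symm hc1)
    have hρ2' : 0 < ρ2 := lt_of_le_of_ne hρ2 (Ne.symm hc2)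
    have hδ : 0 < min d1 d2 := lt_min hd1 hd2
    have hC0 : 0 ≤ ρ2 * (K1 * (1 + min d1 d2)^2 / 4) +
        ρ1 * (K2 * (r + min d1 d2)^2 / (4 * r)) := by positivity
    refine ⟨((ρ2 * (K1 * (1 + min d1 d2)^2 / 4) +
        ρ1 * (K2 * (r + min d1 d2)^2 / (4 * r))) / min d1 d2 + 1) / ρ2,
      ((ρ2 * (K1 * (1 + min d1 d2)^2 / 4) +
        ρ1 * (K2 * (r + min d1 d2)^2 / (4 * r))) / min d1 d2 + 1) / ρ1,
      by positivity, by positivity, ?_⟩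
    intro x1 y1 x2 y2 hsol hnn
    exact ybound_both hr ha1 ha2 hK1 hK2 hd1 hd2 hρ1' hρ2' hsol hnn

end YBounds

section Persist

set_option maxHeartbeats 1000000 in
/-- The heart of the persistence argument. -/
lemma persist_core {x y fx fy : ℝ → ℝ} {g a d Y ε Ts : ℝ}
    (hg : 0 < g) (ha : 0 < a) (hd : 0 < d) (hY : 0 < Y) (hε : 0 < ε) (hTs : 0 ≤ Ts)
    (hdx : ∀ t, Ts ≤ t → HasDerivAt x (fx t) t)
    (hdy : ∀ t, Ts ≤ t → HasDerivAt y (fy t) t)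
    (hx : ∀ t, Ts ≤ t → 0 < x t)
    (hy : ∀ t, Ts ≤ t → 0 ≤ y t)
    (hyY : ∀ t, Ts ≤ t → y t ≤ Y)
    (hfy : ∀ t, Ts ≤ t → x t ≤ ε → fy t ≤ -(d/2) * y t)
    (hfx1 : ∀ t, Ts ≤ t → x t ≤ ε → -(a*Y) * x t ≤ fx t)
    (hfx2 : ∀ t, Ts ≤ t → x t ≤ ε → y t ≤ g/(4*a) → (g/4) * x t ≤ fx t) :
    ∀ᶠ t in atTop,
      ε * Real.exp (-(a * Y * ((2/d) * Real.log (4*a*Y/g + 1) +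
        (4/g) * (a * Y * ((2/d) * Real.log (4*a*Y/g + 1)) + 1)))) ≤ x t := by
  obtain ⟨C, hC⟩ : ∃ C : ℝ, C = a * Y := ⟨_, rfl⟩
  obtain ⟨T0, hT0⟩ : ∃ T0 : ℝ, T0 = (2/d) * Real.log (4*a*Y/g + 1) := ⟨_, rfl⟩
  obtain ⟨T1, hT1⟩ : ∃ T1 : ℝ, T1 = (4/g) * (C * T0 + 1) := ⟨_, rfl⟩
  have hCpos : 0 < C := by rw [hC]; positivity
  have hArg : (1:ℝ) < 4*a*Y/g + 1 := by
    have : (0:ℝ) < 4*a*Y/g := by positivity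
    linarith
  have hT0pos : 0 < T0 := by
    rw [hT0]
    have := Real.log_pos hArg
    positivity
  have hT1pos : 0 < T1 := by rw [hT1]; positivity
  have hfx1' : ∀ t, Ts ≤ t → x t ≤ ε → -C * x t ≤ fx t := by
    intro t h1 h2; rw [hC]; exact hfx1 t h1 h2
  -- decay of y while x stays below ε
  have ydecay : ∀ s u, Ts ≤ s → s ≤ u → (∀ v, s ≤ v → v ≤ u → x v ≤ ε) →
      y u ≤ Y * Real.exp (-(d/2) * (u - s)) := by
    intro s u hs hsu hreg
    have := exp_upper (x := y) (fx := fy) (γ := -(d/2)) hsu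
      (fun v hv => hdy v (hs.trans hv.1))
      (fun v hv => by
        have h1 := hfy v (hs.trans hv.1) (hreg v hv.1 hv.2)
        linarith)
    calc y u ≤ y s * Real.exp (-(d/2) * (u - s)) := this
      _ ≤ Y * Real.exp (-(d/2) * (u - s)) :=
        mul_le_mul_of_nonneg_right (hyY s hs) (Real.exp_pos _).le
  have ysmall : ∀ s u, Ts ≤ s → s + T0 ≤ u → (∀ v, s ≤ v → v ≤ u → x v ≤ ε) →
      y u ≤ g / (4*a) := by
    intro s u hs hsu hreg
    have hsu' : s ≤ u := by linarith
    have h1 := ydecay s u hs hsu' hreg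
    have h2 : Real.exp (-(d/2) * (u - s)) ≤ Real.exp (-(d/2) * T0) := by
      apply Real.exp_le_exp.2
      nlinarith
    have h3 : Real.exp (-(d/2) * T0) = (4*a*Y/g + 1)⁻¹ := by
      rw [show -(d/2) * T0 = -Real.log (4*a*Y/g + 1) by
        rw [hT0]; field_simp]
      rw [Real.exp_neg, Real.exp_log (by linarith)]
    have h4 : Y * Real.exp (-(d/2) * (u - s)) ≤ Y * (4*a*Y/g + 1)⁻¹ := by
      rw [← h3]; exact mul_le_mul_of_nonneg_left h2 hY.le
    have h5 : Y * (4*a*Y/g + 1)⁻¹ ≤ g / (4*a) := by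
      rw [inv_eq_one_div, mul_one_div, div_le_div_iff₀ (by linarith) (by positivity)]
      have e : g * (4*a*Y/g + 1) = 4*a*Y + g := by field_simp
      rw [e]; nlinarith
    linarith
  have xlower : ∀ s u, Ts ≤ s → s ≤ u → (∀ v, s ≤ v → v ≤ u → x v ≤ ε) →
      x s * Real.exp (-C * (u - s)) ≤ x u := by
    intro s u hs hsu hreg
    exact exp_lower hsu (fun v hv => hdx v (hs.trans hv.1))
      (fun v hv => hfx1' v (hs.trans hv.1) (hreg v hv.1 hv.2))
  have xgrow : ∀ s u, Ts ≤ s → s ≤ u →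
      (∀ v, s ≤ v → v ≤ u → x v ≤ ε ∧ y v ≤ g/(4*a)) →
      x s * Real.exp ((g/4) * (u - s)) ≤ x u := by
    intro s u hs hsu hreg
    exact exp_lower hsu (fun v hv => hdx v (hs.trans hv.1))
      (fun v hv => hfx2 v (hs.trans hv.1) (hreg v hv.1 hv.2).1 (hreg v hv.1 hv.2).2)
  have hexp1 : (1:ℝ) < Real.exp 1 := by
    have := Real.exp_lt_exp.2 (zero_lt_one (α := ℝ))
    rwa [Real.exp_zero] at this
  -- Step 1 : the solution reaches level ε
  have hreach : ∃ t3, Ts ≤ t3 ∧ ε ≤ x t3 := by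
    by_contra hcon
    push_neg at hcon
    have hall : ∀ u, Ts ≤ u → x u ≤ ε := fun u hu => (hcon u hu).le
    obtain ⟨T4, hT4⟩ : ∃ T4 : ℝ, T4 = Ts + T0 := ⟨_, rfl⟩
    have hT4Ts : Ts ≤ T4 := by rw [hT4]; linarith
    have hy4 : ∀ u, T4 ≤ u → y u ≤ g / (4*a) := by
      intro u hu
      rw [hT4] at hu
      exact ysmall Ts u le_rfl hu (fun v hv hvu => hall v hv)
    have hx4 : 0 < x T4 := hx T4 hT4Ts
    have hx4e : x T4 < ε := hcon T4 hT4Ts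
    have hrat : (1:ℝ) < ε / x T4 := (one_lt_div hx4).2 hx4e
    obtain ⟨u, hu⟩ : ∃ u : ℝ, u = T4 + (4/g) * (Real.log (ε / x T4) + 1) := ⟨_, rfl⟩
    have hlogpos : 0 < Real.log (ε / x T4) := Real.log_pos hrat
    have hT4u : T4 ≤ u := by
      rw [hu]
      have : 0 ≤ (4/g) * (Real.log (ε / x T4) + 1) := by positivity
      linarith
    have hgrow := xgrow T4 u hT4Ts hT4u
      (fun v hv hvu => ⟨hall v (hT4Ts.trans hv), hy4 v hv⟩)
    have he : (g/4) * (u - T4) = Real.log (ε / x T4) + 1 := by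
      rw [hu]; field_simp; ring
    rw [he, Real.exp_add, Real.exp_log (by positivity), ← mul_assoc] at hgrow
    have hxx : x T4 * (ε / x T4) = ε := by field_simp
    rw [hxx] at hgrow
    have hcu : x u < ε := hcon u (hT4Ts.trans hT4u)
    nlinarith
  obtain ⟨t3, ht3Ts, ht3x⟩ := hreach
  -- Step 2 : from time t3 on, x stays above the bound
  have hmain : ∀ t, t3 ≤ t →
      ε * Real.exp (-(C * (T0 + T1))) ≤ x t := by
    intro t htt3
    have htTs : Ts ≤ t := ht3Ts.trans htt3
    by_cases hxt : ε ≤ x t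
    · have h1 : Real.exp (-(C * (T0 + T1))) ≤ 1 := by
        rw [Real.exp_le_one_iff]
        nlinarith
      nlinarith
    push_neg at hxt
    obtain ⟨s, ht3s, hst, hxs, hafter⟩ := last_crossing htt3
      (fun u hu => (hdx u (ht3Ts.trans hu.1)).continuousAt) ht3x hxt
    have hsTs : Ts ≤ s := ht3Ts.trans ht3s
    have hreg : ∀ v, s ≤ v → v ≤ t → x v ≤ ε := by
      intro v h1 h2
      rcases eq_or_lt_of_le h1 with h | h
      · rw [← h]; exact le_of_eq hxs
      · exact (hafter v h h2).le
    by_cases hlen : t - s ≤ T0 + T1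
    · have h1 := xlower s t hsTs hst.le hreg
      rw [hxs] at h1
      have h2 : Real.exp (-(C * (T0 + T1))) ≤ Real.exp (-C * (t - s)) := by
        apply Real.exp_le_exp.2
        nlinarith
      calc ε * Real.exp (-(C * (T0 + T1))) ≤ ε * Real.exp (-C * (t - s)) :=
            mul_le_mul_of_nonneg_left h2 hε.le
        _ ≤ x t := h1
    · push_neg at hlen
      obtain ⟨m2, hm2⟩ : ∃ m2 : ℝ, m2 = s + T0 := ⟨_, rfl⟩
      obtain ⟨m, hm⟩ : ∃ m : ℝ, m = s + T0 + T1 := ⟨_, rfl⟩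
      have hsm : s < m := by rw [hm]; linarith
      have hmt : m ≤ t := by rw [hm]; linarith
      have hxm : x m < ε := hafter m hsm hmt
      have hym : ∀ v, m2 ≤ v → v ≤ m → y v ≤ g / (4*a) := by
        intro v h1 h2
        rw [hm2] at h1
        rw [hm] at h2
        exact ysmall s v hsTs h1
          (fun w hw hwv => hreg w hw (by linarith))
      have hxm2 : ε * Real.exp (-C * T0) ≤ x m2 := by
        have h1 := xlower s m2 hsTs (by rw [hm2]; linarith)
          (fun w hw hwv => hreg w hw (by rw [hm2] at hwv; linarith))
        rw [hxs] at h1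
        have e : m2 - s = T0 := by rw [hm2]; ring
        rwa [e] at h1
      have hgrow := xgrow m2 m (by rw [hm2]; linarith) (by rw [hm2, hm]; linarith)
        (fun v hv hvm => ⟨hreg v (by rw [hm2] at hv; linarith)
          (by rw [hm] at hvm; linarith), hym v hv hvm⟩)
      have e2 : (g/4) * (m - m2) = C * T0 + 1 := by
        rw [hm, hm2, hT1]; field_simp; ring
      rw [e2] at hgrow
      have h3 : ε * Real.exp (-C * T0) * Real.exp (C * T0 + 1) ≤ x m :=
        le_trans (mul_le_mul_of_nonneg_right hxm2 (Real.exp_pos _).le) hgrow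
      rw [mul_assoc, ← Real.exp_add] at h3
      have e3 : -C * T0 + (C * T0 + 1) = 1 := by ring
      rw [e3] at h3
      nlinarith
  have efinal : ε * Real.exp (-(a * Y * ((2/d) * Real.log (4*a*Y/g + 1) +
      (4/g) * (a * Y * ((2/d) * Real.log (4*a*Y/g + 1)) + 1))))
      = ε * Real.exp (-(C * (T0 + T1))) := by
    rw [hC, hT0, hT1, hC, hT0]
  rw [efinal]
  filter_upwards [eventually_ge_atTop t3] with t ht
  exact hmain t ht

end Persist

section Assembly

variable {r a1 a2 K1 K2 d1 d2 ρ1 ρ2 : ℝ}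

set_option maxHeartbeats 1000000 in
lemma patch1_final
    (hr : 0 < r) (ha1 : 0 < a1) (ha2 : 0 < a2) (hK1 : 0 < K1) (hK2 : 0 < K2)
    (hd1 : 0 < d1) (hd2 : 0 < d2) (hρ1 : 0 ≤ ρ1) (hρ2 : 0 ≤ ρ2)
    {Y1 Y2 : ℝ} (hY1 : 0 < Y1) (hY2 : 0 < Y2)
    (hYb : ∀ x1 y1 x2 y2 : ℝ → ℝ, IsSol r a1 a2 K1 K2 d1 d2 ρ1 ρ2 x1 y1 x2 y2 →
      (∀ t : ℝ, 0 ≤ t → 0 ≤ x1 t ∧ 0 ≤ y1 t ∧ 0 ≤ x2 t ∧ 0 ≤ y2 t) →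
      (∀ᶠ t in atTop, y1 t ≤ Y1 ∧ y2 t ≤ Y2)) :
    ∃ b B : ℝ, 0 < b ∧ b < B ∧
      ∀ x1 y1 x2 y2 : ℝ → ℝ, IsSol r a1 a2 K1 K2 d1 d2 ρ1 ρ2 x1 y1 x2 y2 →
        0 < x1 0 → 0 ≤ y1 0 → 0 ≤ x2 0 → 0 ≤ y2 0 →
        b ≤ liminf x1 atTop ∧ limsup x1 atTop ≤ K1 + 1 := by
  obtain ⟨ε, hεdef⟩ : ∃ ε : ℝ, ε = min (K1/2) (d1/(2*a1*(1+ρ1*Y2))) := ⟨_, rfl⟩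
  have hεpos : 0 < ε := by rw [hεdef]; exact lt_min (by positivity) (by positivity)
  have hε1 : ε ≤ K1/2 := hεdef ▸ min_le_left _ _
  have hε2 : ε ≤ d1/(2*a1*(1+ρ1*Y2)) := hεdef ▸ min_le_right _ _
  have hεd : ε * (2*a1*(1+ρ1*Y2)) ≤ d1 := by
    rw [← le_div_iff₀ (by positivity)]; exact hε2
  obtain ⟨b, hbdef⟩ : ∃ b : ℝ,
      b = ε * Real.exp (-(a1 * Y1 * ((2/d1) * Real.log (4*a1*Y1/1 + 1) +
        (4/1) * (a1 * Y1 * ((2/d1) * Real.log (4*a1*Y1/1 + 1)) + 1)))) := ⟨_, rfl⟩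
  have hbpos : 0 < b := by rw [hbdef]; positivity
  have hbB : b < K1 + 1 := by
    have hlog : 0 < Real.log (4*a1*Y1/1 + 1) := by
      apply Real.log_pos
      have : (0:ℝ) < 4*a1*Y1/1 := by positivity
      linarith
    have hexp : Real.exp (-(a1 * Y1 * ((2/d1) * Real.log (4*a1*Y1/1 + 1) +
        (4/1) * (a1 * Y1 * ((2/d1) * Real.log (4*a1*Y1/1 + 1)) + 1)))) ≤ 1 := by
      rw [Real.exp_le_one_iff]
      have h1 : 0 < (2/d1) * Real.log (4*a1*Y1/1 + 1) := by positivity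
      nlinarith [mul_pos (mul_pos ha1 hY1) h1,
        mul_pos (mul_pos (mul_pos ha1 hY1) ha1) (mul_pos hY1 h1),
        mul_pos ha1 hY1]
    rw [hbdef]
    nlinarith [hεpos, hε1, hK1]
  refine ⟨b, K1 + 1, hbpos, hbB, ?_⟩
  intro x1 y1 x2 y2 hsol hx10 hy10 hx20 hy20
  obtain ⟨hdx1, hdy1, hdx2, hdy2⟩ := hsol
  have hnn := sys_nonneg hdx1 hdy1 hdx2 hdy2 hx10.le hy10 hx20 hy20
  have hdx1' : ∀ t : ℝ, 0 ≤ t → HasDerivAt x1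
      (1 * x1 t * (1 - x1 t / K1) - a1 * x1 t * y1 t / (1 + x1 t)) t := by
    intro t ht
    have h := hdx1 t ht
    rwa [show x1 t * (1 - x1 t / K1) = 1 * x1 t * (1 - x1 t / K1) by ring] at h
  have hx1pos : ∀ t : ℝ, 0 ≤ t → 0 < x1 t :=
    prey_pos hdx1' (fun t ht => (hdy1 t ht).continuousAt)
      (fun t ht => (hnn t ht).1) (fun t ht => (hnn t ht).2.1) hx10
  have hupper : ∀ᶠ t in atTop, x1 t ≤ K1 + 1 :=
    prey_upper one_pos hK1 hdx1' (fun t ht => (hnn t ht).1)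
      (fun t ht => (hnn t ht).2.1) ha1
  have hev := hYb x1 y1 x2 y2 ⟨hdx1, hdy1, hdx2, hdy2⟩ hnn
  obtain ⟨T, hT⟩ := eventually_atTop.1 hev
  have hTs0 : (0:ℝ) ≤ max T 0 := le_max_right _ _
  have hfacts : ∀ t, max T 0 ≤ t → (0 ≤ t ∧ y1 t ≤ Y1 ∧ y2 t ≤ Y2) :=
    fun t ht => ⟨hTs0.trans ht, hT t ((le_max_left _ _).trans ht)⟩
  have hfy : ∀ t, max T 0 ≤ t → x1 t ≤ ε →
      (a1 * x1 t * y1 t / (1 + x1 t) - d1 * y1 t +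
        ρ1 * (a1 * x1 t * y1 t * y2 t / (1 + x1 t) -
              a2 * x2 t * y1 t * y2 t / (1 + x2 t))) ≤ -(d1/2) * y1 t := by
    intro t ht hxε
    obtain ⟨ht0, hy1Y, hy2Y⟩ := hfacts t ht
    obtain ⟨hx1n, hy1n, hx2n, hy2n⟩ := hnn t ht0
    have hA : a1 * x1 t * y1 t / (1 + x1 t) ≤ a1 * x1 t * y1 t :=
      div_le_self (by positivity) (by linarith)
    have hAe : a1 * x1 t * y1 t ≤ a1 * ε * y1 t := by
      nlinarith [mul_le_mul_of_nonneg_left hxε (mul_nonneg ha1.le hy1n)]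
    have hP : a1 * x1 t * y1 t * y2 t / (1 + x1 t) ≤ a1 * x1 t * y1 t * y2 t :=
      div_le_self (by positivity) (by linarith)
    have hPe : a1 * x1 t * y1 t * y2 t ≤ a1 * ε * y1 t * Y2 := by
      nlinarith [mul_nonneg (mul_nonneg ha1.le hx1n) hy1n,
        mul_nonneg hy1n hy2n]
    have hQ : (0:ℝ) ≤ a2 * x2 t * y1 t * y2 t / (1 + x2 t) :=
      div_nonneg (by positivity) (by linarith)
    have hρP : ρ1 * (a1 * x1 t * y1 t * y2 t / (1 + x1 t)) ≤
        ρ1 * (a1 * ε * y1 t * Y2) :=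
      mul_le_mul_of_nonneg_left (le_trans hP hPe) hρ1
    have hρQ : 0 ≤ ρ1 * (a2 * x2 t * y1 t * y2 t / (1 + x2 t)) :=
      mul_nonneg hρ1 hQ
    have hkey := mul_le_mul_of_nonneg_left hεd hy1n
    nlinarith [hA, hAe, hρP, hρQ, hkey]
  have hfx1 : ∀ t, max T 0 ≤ t → x1 t ≤ ε →
      -(a1*Y1) * x1 t ≤ 1 * x1 t * (1 - x1 t / K1) - a1 * x1 t * y1 t / (1 + x1 t) := by
    intro t ht hxε
    obtain ⟨ht0, hy1Y, _⟩ := hfacts t ht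
    obtain ⟨hx1n, hy1n, _, _⟩ := hnn t ht0
    have hA : a1 * x1 t * y1 t / (1 + x1 t) ≤ a1 * x1 t * y1 t :=
      div_le_self (by positivity) (by linarith)
    have hAe : a1 * x1 t * y1 t ≤ a1 * x1 t * Y1 := by
      nlinarith [mul_nonneg ha1.le hx1n]
    have hlog : 0 ≤ 1 * x1 t * (1 - x1 t / K1) := by
      have h1 : x1 t / K1 ≤ 1 := by
        rw [div_le_one hK1]; linarith
      nlinarith
    nlinarith [hA, hAe]
  have hfx2 : ∀ t, max T 0 ≤ t → x1 t ≤ ε → y1 t ≤ 1/(4*a1) →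
      (1/4) * x1 t ≤ 1 * x1 t * (1 - x1 t / K1) - a1 * x1 t * y1 t / (1 + x1 t) := by
    intro t ht hxε hy14
    obtain ⟨ht0, _, _⟩ := hfacts t ht
    obtain ⟨hx1n, hy1n, _, _⟩ := hnn t ht0
    have hA : a1 * x1 t * y1 t / (1 + x1 t) ≤ a1 * x1 t * y1 t :=
      div_le_self (by positivity) (by linarith)
    have hAe : a1 * x1 t * y1 t ≤ x1 t / 4 := by
      have h1 : a1 * x1 t * y1 t ≤ a1 * x1 t * (1/(4*a1)) := by
        nlinarith [mul_nonneg ha1.le hx1n]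
      have h2 : a1 * x1 t * (1/(4*a1)) = x1 t / 4 := by field_simp
      linarith [h1, h2.le, h2.ge]
    have hx1K : x1 t / K1 ≤ 1/2 := by
      rw [div_le_iff₀ hK1]
      nlinarith
    nlinarith [hA, hAe, hx1pos t ht0]
  have hcore := persist_core (x := x1) (y := y1)
    (fx := fun t => 1 * x1 t * (1 - x1 t / K1) - a1 * x1 t * y1 t / (1 + x1 t))
    (fy := fun t => a1 * x1 t * y1 t / (1 + x1 t) - d1 * y1 t +
      ρ1 * (a1 * x1 t * y1 t * y2 t / (1 + x1 t) -
            a2 * x2 t * y1 t * y2 t / (1 + x2 t)))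
    (g := 1) (a := a1) (d := d1) (Y := Y1) (ε := ε) (Ts := max T 0)
    one_pos ha1 hd1 hY1 hεpos hTs0
    (fun t ht => hdx1' t (hfacts t ht).1)
    (fun t ht => hdy1 t (hfacts t ht).1)
    (fun t ht => hx1pos t (hfacts t ht).1)
    (fun t ht => (hnn t (hfacts t ht).1).2.1)
    (fun t ht => (hfacts t ht).2.1)
    hfy hfx1 hfx2
  have hblow : ∀ᶠ t in atTop, b ≤ x1 t := by
    rw [hbdef]
    exact hcore
  constructor
  · have hcob : Filter.IsCoboundedUnder (· ≥ ·) atTop x1 :=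
      Filter.IsBoundedUnder.isCoboundedUnder_ge ⟨K1 + 1, by
        rw [Filter.eventually_map]; exact hupper⟩
    exact Filter.le_liminf_of_le hcob hblow
  · have hcob : Filter.IsCoboundedUnder (· ≤ ·) atTop x1 :=
      Filter.IsBoundedUnder.isCoboundedUnder_le ⟨b, by
        rw [Filter.eventually_map]; exact hblow⟩
    exact Filter.limsup_le_of_le hcob hupper

set_option maxHeartbeats 1000000 in
lemma patch2_final
    (hr : 0 < r) (ha1 : 0 < a1) (ha2 : 0 < a2) (hK1 : 0 < K1) (hK2 : 0 < K2)
    (hd1 : 0 < d1) (hd2 : 0 < d2) (hρ1 : 0 ≤ ρ1) (hρ2 : 0 ≤ ρ2)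
    {Y1 Y2 : ℝ} (hY1 : 0 < Y1) (hY2 : 0 < Y2)
    (hYb : ∀ x1 y1 x2 y2 : ℝ → ℝ, IsSol r a1 a2 K1 K2 d1 d2 ρ1 ρ2 x1 y1 x2 y2 →
      (∀ t : ℝ, 0 ≤ t → 0 ≤ x1 t ∧ 0 ≤ y1 t ∧ 0 ≤ x2 t ∧ 0 ≤ y2 t) →
      (∀ᶠ t in atTop, y1 t ≤ Y1 ∧ y2 t ≤ Y2)) :
    ∃ b B : ℝ, 0 < b ∧ b < B ∧
      ∀ x1 y1 x2 y2 : ℝ → ℝ, IsSol r a1 a2 K1 K2 d1 d2 ρ1 ρ2 x1 y1 x2 y2 →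
        0 ≤ x1 0 → 0 ≤ y1 0 → 0 < x2 0 → 0 ≤ y2 0 →
        b ≤ liminf x2 atTop ∧ limsup x2 atTop ≤ K2 + 1 := by
  obtain ⟨ε, hεdef⟩ : ∃ ε : ℝ, ε = min (K2/2) (d2/(2*a2*(1+ρ2*Y1))) := ⟨_, rfl⟩
  have hεpos : 0 < ε := by rw [hεdef]; exact lt_min (by positivity) (by positivity)
  have hε1 : ε ≤ K2/2 := hεdef ▸ min_le_left _ _
  have hε2 : ε ≤ d2/(2*a2*(1+ρ2*Y1)) := hεdef ▸ min_le_right _ _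
  have hεd : ε * (2*a2*(1+ρ2*Y1)) ≤ d2 := by
    rw [← le_div_iff₀ (by positivity)]; exact hε2
  obtain ⟨b, hbdef⟩ : ∃ b : ℝ,
      b = ε * Real.exp (-(a2 * Y2 * ((2/d2) * Real.log (4*a2*Y2/r + 1) +
        (4/r) * (a2 * Y2 * ((2/d2) * Real.log (4*a2*Y2/r + 1)) + 1)))) := ⟨_, rfl⟩
  have hbpos : 0 < b := by rw [hbdef]; positivity
  have hbB : b < K2 + 1 := by
    have hlog : 0 < Real.log (4*a2*Y2/r + 1) := by
      apply Real.log_pos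
      have : (0:ℝ) < 4*a2*Y2/r := by positivity
      linarith
    have hexp : Real.exp (-(a2 * Y2 * ((2/d2) * Real.log (4*a2*Y2/r + 1) +
        (4/r) * (a2 * Y2 * ((2/d2) * Real.log (4*a2*Y2/r + 1)) + 1)))) ≤ 1 := by
      rw [Real.exp_le_one_iff]
      have h1 : 0 < (2/d2) * Real.log (4*a2*Y2/r + 1) := by positivity
      have h2 : 0 < (4/r) := by positivity
      nlinarith [mul_pos (mul_pos ha2 hY2) h1,
        mul_pos (mul_pos (mul_pos ha2 hY2) h2) (mul_pos (mul_pos ha2 hY2) h1),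
        mul_pos (mul_pos ha2 hY2) h2]
    rw [hbdef]
    nlinarith [hεpos, hε1, hK2]
  refine ⟨b, K2 + 1, hbpos, hbB, ?_⟩
  intro x1 y1 x2 y2 hsol hx10 hy10 hx20 hy20
  obtain ⟨hdx1, hdy1, hdx2, hdy2⟩ := hsol
  have hnn := sys_nonneg hdx1 hdy1 hdx2 hdy2 hx10 hy10 hx20.le hy20
  have hx2pos : ∀ t : ℝ, 0 ≤ t → 0 < x2 t :=
    prey_pos hdx2 (fun t ht => (hdy2 t ht).continuousAt)
      (fun t ht => (hnn t ht).2.2.1) (fun t ht => (hnn t ht).2.2.2) hx20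
  have hupper : ∀ᶠ t in atTop, x2 t ≤ K2 + 1 :=
    prey_upper hr hK2 hdx2 (fun t ht => (hnn t ht).2.2.1)
      (fun t ht => (hnn t ht).2.2.2) ha2
  have hev := hYb x1 y1 x2 y2 ⟨hdx1, hdy1, hdx2, hdy2⟩ hnn
  obtain ⟨T, hT⟩ := eventually_atTop.1 hev
  have hTs0 : (0:ℝ) ≤ max T 0 := le_max_right _ _
  have hfacts : ∀ t, max T 0 ≤ t → (0 ≤ t ∧ y1 t ≤ Y1 ∧ y2 t ≤ Y2) :=
    fun t ht => ⟨hTs0.trans ht, hT t ((le_max_left _ _).trans ht)⟩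
  have hfy : ∀ t, max T 0 ≤ t → x2 t ≤ ε →
      (a2 * x2 t * y2 t / (1 + x2 t) - d2 * y2 t +
        ρ2 * (a2 * x2 t * y1 t * y2 t / (1 + x2 t) -
              a1 * x1 t * y1 t * y2 t / (1 + x1 t))) ≤ -(d2/2) * y2 t := by
    intro t ht hxε
    obtain ⟨ht0, hy1Y, hy2Y⟩ := hfacts t ht
    obtain ⟨hx1n, hy1n, hx2n, hy2n⟩ := hnn t ht0
    have hA : a2 * x2 t * y2 t / (1 + x2 t) ≤ a2 * x2 t * y2 t :=
      div_le_self (by positivity) (by linarith)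
    have hAe : a2 * x2 t * y2 t ≤ a2 * ε * y2 t := by
      nlinarith [mul_le_mul_of_nonneg_left hxε (mul_nonneg ha2.le hy2n)]
    have hP : a2 * x2 t * y1 t * y2 t / (1 + x2 t) ≤ a2 * x2 t * y1 t * y2 t :=
      div_le_self (by positivity) (by linarith)
    have hPe : a2 * x2 t * y1 t * y2 t ≤ a2 * ε * Y1 * y2 t := by
      nlinarith [mul_nonneg (mul_nonneg ha2.le hx2n) hy2n,
        mul_nonneg hy1n hy2n]
    have hQ : (0:ℝ) ≤ a1 * x1 t * y1 t * y2 t / (1 + x1 t) :=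
      div_nonneg (by positivity) (by linarith)
    have hρP : ρ2 * (a2 * x2 t * y1 t * y2 t / (1 + x2 t)) ≤
        ρ2 * (a2 * ε * Y1 * y2 t) :=
      mul_le_mul_of_nonneg_left (le_trans hP hPe) hρ2
    have hρQ : 0 ≤ ρ2 * (a1 * x1 t * y1 t * y2 t / (1 + x1 t)) :=
      mul_nonneg hρ2 hQ
    have hkey := mul_le_mul_of_nonneg_left hεd hy2n
    nlinarith [hA, hAe, hρP, hρQ, hkey]
  have hfx1 : ∀ t, max T 0 ≤ t → x2 t ≤ ε →
      -(a2*Y2) * x2 t ≤ r * x2 t * (1 - x2 t / K2) - a2 * x2 t * y2 t / (1 + x2 t) := by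
    intro t ht hxε
    obtain ⟨ht0, _, hy2Y⟩ := hfacts t ht
    obtain ⟨_, _, hx2n, hy2n⟩ := hnn t ht0
    have hA : a2 * x2 t * y2 t / (1 + x2 t) ≤ a2 * x2 t * y2 t :=
      div_le_self (by positivity) (by linarith)
    have hAe : a2 * x2 t * y2 t ≤ a2 * x2 t * Y2 := by
      nlinarith [mul_nonneg ha2.le hx2n]
    have hlog : 0 ≤ r * x2 t * (1 - x2 t / K2) := by
      have h1 : x2 t / K2 ≤ 1 := by
        rw [div_le_one hK2]; linarith
      exact mul_nonneg (mul_nonneg hr.le hx2n) (by linarith)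
    nlinarith [hA, hAe]
  have hfx2 : ∀ t, max T 0 ≤ t → x2 t ≤ ε → y2 t ≤ r/(4*a2) →
      (r/4) * x2 t ≤ r * x2 t * (1 - x2 t / K2) - a2 * x2 t * y2 t / (1 + x2 t) := by
    intro t ht hxε hy24
    obtain ⟨ht0, _, _⟩ := hfacts t ht
    obtain ⟨_, _, hx2n, hy2n⟩ := hnn t ht0
    have hA : a2 * x2 t * y2 t / (1 + x2 t) ≤ a2 * x2 t * y2 t :=
      div_le_self (by positivity) (by linarith)
    have hAe : a2 * x2 t * y2 t ≤ r * x2 t / 4 := by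
      have h1 : a2 * x2 t * y2 t ≤ a2 * x2 t * (r/(4*a2)) := by
        nlinarith [mul_nonneg ha2.le hx2n]
      have h2 : a2 * x2 t * (r/(4*a2)) = r * x2 t / 4 := by field_simp
      linarith [h1, h2.le, h2.ge]
    have hx2K : x2 t / K2 ≤ 1/2 := by
      rw [div_le_iff₀ hK2]
      nlinarith
    nlinarith [hA, hAe, hx2pos t ht0, mul_pos hr (hx2pos t ht0)]
  have hcore := persist_core (x := x2) (y := y2)
    (fx := fun t => r * x2 t * (1 - x2 t / K2) - a2 * x2 t * y2 t / (1 + x2 t))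
    (fy := fun t => a2 * x2 t * y2 t / (1 + x2 t) - d2 * y2 t +
      ρ2 * (a2 * x2 t * y1 t * y2 t / (1 + x2 t) -
            a1 * x1 t * y1 t * y2 t / (1 + x1 t)))
    (g := r) (a := a2) (d := d2) (Y := Y2) (ε := ε) (Ts := max T 0)
    hr ha2 hd2 hY2 hεpos hTs0
    (fun t ht => hdx2 t (hfacts t ht).1)
    (fun t ht => hdy2 t (hfacts t ht).1)
    (fun t ht => hx2pos t (hfacts t ht).1)
    (fun t ht => (hnn t (hfacts t ht).1).2.2.2)
    (fun t ht => (hfacts t ht).2.2)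
    hfy hfx1 hfx2
  have hblow : ∀ᶠ t in atTop, b ≤ x2 t := by
    rw [hbdef]
    exact hcore
  constructor
  · have hcob : Filter.IsCoboundedUnder (· ≥ ·) atTop x2 :=
      Filter.IsBoundedUnder.isCoboundedUnder_ge ⟨K2 + 1, by
        rw [Filter.eventually_map]; exact hupper⟩
    exact Filter.le_liminf_of_le hcob hblow
  · have hcob : Filter.IsCoboundedUnder (· ≤ ·) atTop x2 :=
      Filter.IsBoundedUnder.isCoboundedUnder_le ⟨b, by
        rw [Filter.eventually_map]; exact hblow⟩
    exact Filter.limsup_le_of_le hcob hupper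

end Assembly



/-- **Persistence of both prey in Model (1).**
For each `i = 1, 2`, there exist constants `0 < b < B`, depending only on the
parameters, such that every solution of Model (1) with `xᵢ(0) > 0` and the
other components nonnegative at `t = 0` satisfies
`b ≤ liminf_{t→∞} xᵢ(t) ≤ limsup_{t→∞} xᵢ(t) ≤ B`. -/
theorem model1_prey_persistent
    (r a1 a2 K1 K2 d1 d2 ρ1 ρ2 : ℝ)
    (hr : 0 < r) (ha1 : 0 < a1) (ha2 : 0 < a2) (hK1 : 0 < K1) (hK2 : 0 < K2)
    (hd1 : 0 < d1) (hd2 : 0 < d2) (hρ1 : 0 ≤ ρ1) (hρ2 : 0 ≤ ρ2) :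
    (∃ b B : ℝ, 0 < b ∧ b < B ∧
      ∀ x1 y1 x2 y2 : ℝ → ℝ,
        (∀ t : ℝ, 0 ≤ t → HasDerivAt x1
          (x1 t * (1 - x1 t / K1) - a1 * x1 t * y1 t / (1 + x1 t)) t) →
        (∀ t : ℝ, 0 ≤ t → HasDerivAt y1
          (a1 * x1 t * y1 t / (1 + x1 t) - d1 * y1 t +
            ρ1 * (a1 * x1 t * y1 t * y2 t / (1 + x1 t) -
                  a2 * x2 t * y1 t * y2 t / (1 + x2 t))) t) →
        (∀ t : ℝ, 0 ≤ t → HasDerivAt x2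
          (r * x2 t * (1 - x2 t / K2) - a2 * x2 t * y2 t / (1 + x2 t)) t) →
        (∀ t : ℝ, 0 ≤ t → HasDerivAt y2
          (a2 * x2 t * y2 t / (1 + x2 t) - d2 * y2 t +
            ρ2 * (a2 * x2 t * y1 t * y2 t / (1 + x2 t) -
                  a1 * x1 t * y1 t * y2 t / (1 + x1 t))) t) →
        0 < x1 0 → 0 ≤ y1 0 → 0 ≤ x2 0 → 0 ≤ y2 0 →
        b ≤ liminf x1 atTop ∧ limsup x1 atTop ≤ B) ∧
    (∃ b B : ℝ, 0 < b ∧ b < B ∧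
      ∀ x1 y1 x2 y2 : ℝ → ℝ,
        (∀ t : ℝ, 0 ≤ t → HasDerivAt x1
          (x1 t * (1 - x1 t / K1) - a1 * x1 t * y1 t / (1 + x1 t)) t) →
        (∀ t : ℝ, 0 ≤ t → HasDerivAt y1
          (a1 * x1 t * y1 t / (1 + x1 t) - d1 * y1 t +
            ρ1 * (a1 * x1 t * y1 t * y2 t / (1 + x1 t) -
                  a2 * x2 t * y1 t * y2 t / (1 + x2 t))) t) →
        (∀ t : ℝ, 0 ≤ t → HasDerivAt x2
          (r * x2 t * (1 - x2 t / K2) - a2 * x2 t * y2 t / (1 + x2 t)) t) →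
        (∀ t : ℝ, 0 ≤ t → HasDerivAt y2
          (a2 * x2 t * y2 t / (1 + x2 t) - d2 * y2 t +
            ρ2 * (a2 * x2 t * y1 t * y2 t / (1 + x2 t) -
                  a1 * x1 t * y1 t * y2 t / (1 + x1 t))) t) →
        0 ≤ x1 0 → 0 ≤ y1 0 → 0 < x2 0 → 0 ≤ y2 0 →
        b ≤ liminf x2 atTop ∧ limsup x2 atTop ≤ B) := by
  obtain ⟨Y1, Y2, hY1, hY2, hYb⟩ :=
    ybounds_exist hr ha1 ha2 hK1 hK2 hd1 hd2 hρ1 hρ2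
  constructor
  · obtain ⟨b, B', hb, hbB', hmain⟩ :=
      patch1_final hr ha1 ha2 hK1 hK2 hd1 hd2 hρ1 hρ2 hY1 hY2 hYb
    refine ⟨b, max B' (K1 + 1), hb, lt_of_lt_of_le hbB' (le_max_left _ _), ?_⟩
    intro x1 y1 x2 y2 h1 h2 h3 h4 i1 i2 i3 i4
    have h := hmain x1 y1 x2 y2 ⟨h1, h2, h3, h4⟩ i1 i2 i3 i4
    exact ⟨h.1, h.2.trans (le_max_right _ _)⟩
  · obtain ⟨b, B', hb, hbB', hmain⟩ :=
      patch2_final hr ha1 ha2 hK1 hK2 hd1 hd2 hρ1 hρ2 hY1 hY2 hYb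
    refine ⟨b, max B' (K2 + 1), hb, lt_of_lt_of_le hbB' (le_max_left _ _), ?_⟩
    intro x1 y1 x2 y2 h1 h2 h3 h4 i1 i2 i3 i4
    have h := hmain x1 y1 x2 y2 ⟨h1, h2, h3, h4⟩ i1 i2 i3 i4
    exact ⟨h.1, h.2.trans (le_max_right _ _)⟩
end

section
/- Let a_1, a_2, d_1, d_2, K_1, K_2 be strictly positive real numbers with a_1 > d_1, a_2 > d_2, a_1 > d_2, and a_2 > d_1. Then it is impossible that both chains of inequalities d_1/(a_1 − d_1) < K_1 < d_2/(a_1 − d_2) and d_2/(a_2 − d_2) < K_2 < d_1/(a_2 − d_1) hold simultaneously. (Consequently, the two boundary equilibria E_{12}^b = (μ_1, ν_1, K_2, 0) and E_{22}^b = (K_1, 0, μ_2, ν_2) of Model (1) cannot be locally asymptotically stable at the same time.) -/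
/-- **The two predator-free boundary equilibria cannot both be stable.**
For strictly positive parameters with `a₁ > d₁`, `a₂ > d₂`, `a₁ > d₂`,
`a₂ > d₁`, it is impossible that both
`d₁/(a₁ − d₁) < K₁ < d₂/(a₁ − d₂)` and `d₂/(a₂ − d₂) < K₂ < d₁/(a₂ − d₁)`
hold simultaneously.  (Hence `E₁₂ᵇ` and `E₂₂ᵇ` of Model (1) cannot be
locally asymptotically stable at the same time.) -/
theorem boundary_equilibria_not_both_stable
    (a1 a2 d1 d2 K1 K2 : ℝ)
    (ha1 : 0 < a1) (ha2 : 0 < a2) (hd1 : 0 < d1) (hd2 : 0 < d2)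
    (hK1 : 0 < K1) (hK2 : 0 < K2)
    (h11 : d1 < a1) (h22 : d2 < a2) (h12 : d2 < a1) (h21 : d1 < a2) :
    ¬ ((d1 / (a1 - d1) < K1 ∧ K1 < d2 / (a1 - d2)) ∧
       (d2 / (a2 - d2) < K2 ∧ K2 < d1 / (a2 - d1))) := by
  rintro ⟨⟨h1, h2⟩, ⟨h3, h4⟩⟩
  have hA : d1 / (a1 - d1) < d2 / (a1 - d2) := h1.trans h2
  have hB : d2 / (a2 - d2) < d1 / (a2 - d1) := h3.trans h4
  rw [div_lt_div_iff₀ (by linarith) (by linarith)] at hA hB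
  nlinarith
end

section
/- Suppose (i, j) = (1, 2) or (i, j) = (2, 1), a_i > a_j, d_i > a_i, and ρ_i < 4K_j·a_j(a_i − a_j)(d_i − a_i)/(r_j(K_j·a_i − K_j·a_j + a_i)²), where r_1 = 1 and r_2 = r. Then Model (1) has no interior equilibrium: there is no point (x_1, y_1, x_2, y_2) with all four coordinates strictly positive at which all four right-hand sides of Model (1) vanish. -/
set_option maxHeartbeats 800000 in
lemma aux_no_eq (s a b K d ρ u v w z : ℝ)
    (hs : 0 < s) (ha : 0 < a) (hb : 0 < b) (hK : 0 < K)
    (hρ : 0 ≤ ρ) (hab : b < a) (hd : a < d)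
    (hρlt : ρ < 4 * K * b * (a - b) * (d - a) / (s * (K * a - K * b + a) ^ 2))
    (hu : 0 < u) (hv : 0 < v) (hw : 0 < w) (hz : 0 < z)
    (heqprey : s * w * (1 - w / K) - b * w * z / (1 + w) = 0)
    (heqpred : a * u * v / (1 + u) - d * v +
      ρ * (a * u * v * z / (1 + u) - b * w * v * z / (1 + w)) = 0) :
    False := by
  have h1u : (0:ℝ) < 1 + u := by linarith
  have h1w : (0:ℝ) < 1 + w := by linarith
  obtain ⟨f, hfdef⟩ : ∃ f : ℝ, f = a * u / (1 + u) := ⟨_, rfl⟩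
  obtain ⟨g, hgdef⟩ : ∃ g : ℝ, g = b * w / (1 + w) := ⟨_, rfl⟩
  have hf1 : f * (1 + u) = a * u := by rw [hfdef]; field_simp
  have hg1 : g * (1 + w) = b * w := by rw [hgdef]; field_simp
  have hfa : f < a := by nlinarith
  have hg0 : 0 < g := by nlinarith
  -- prey equation cleared
  have e3 : s * (K - w) * (1 + w) = K * b * z := by
    have h : w * (s * (K - w) * (1 + w) - K * b * z) = 0 := by
      field_simp at heqprey
      nlinarith [heqprey]
    rcases mul_eq_zero.mp h with h' | h'
    · exact absurd h' (ne_of_gt hw)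
    · linarith
  have hwK : w < K := by nlinarith [mul_pos (mul_pos hK hb) hz, mul_pos hs h1w]
  -- predator equation divided by v
  have e2 : f - d + ρ * (f * z - g * z) = 0 := by
    have h : v * (f - d + ρ * (f * z - g * z)) = 0 := by
      rw [hfdef, hgdef]
      linear_combination heqpred
    rcases mul_eq_zero.mp h with h' | h'
    · exact absurd h' (ne_of_gt hv)
    · exact h'
  -- bound on z*(f-g)
  have hab' : (0:ℝ) < a - b := by linarith
  have hden : 0 < 4 * K * b * (a - b) := by positivity
  have hKa : 0 < K * a - K * b + a := by nlinarith
  have key : 4 * ((a - b) * (K - w)) * (a + (a - b) * w) ≤ (K * a - K * b + a) ^ 2 := by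
    linarith [sq_nonneg ((a - b) * (K - w) - (a + (a - b) * w)), sq_nonneg (K * a - K * b + a)]
  have hsub : K * b * (z * (a - g)) = s * ((K - w) * (a + (a - b) * w)) := by
    linear_combination (g - a) * e3 - s * (K - w) * hg1
  have step2 : 4 * K * b * (a - b) * (z * (a - g)) ≤ s * (K * a - K * b + a) ^ 2 := by
    nlinarith [mul_le_mul_of_nonneg_left key hs.le]
  have step1 : 4 * K * b * (a - b) * (z * (f - g)) < 4 * K * b * (a - b) * (z * (a - g)) := by
    have : z * (f - g) < z * (a - g) := by nlinarith
    nlinarith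
  obtain ⟨B, hB⟩ : ∃ B : ℝ, B = s * (K * a - K * b + a) ^ 2 / (4 * K * b * (a - b)) := ⟨_, rfl⟩
  have hzfg : z * (f - g) < B := by
    rw [hB, lt_div_iff₀ hden]
    nlinarith
  have hBpos : 0 < B := by rw [hB]; positivity
  have h5 : ρ * (z * (f - g)) ≤ ρ * B := mul_le_mul_of_nonneg_left hzfg.le hρ
  have h6 : ρ * B < d - a := by
    have h := mul_lt_mul_of_pos_right hρlt hBpos
    have heq : 4 * K * b * (a - b) * (d - a) / (s * (K * a - K * b + a) ^ 2) * B = d - a := by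
      rw [hB]
      field_simp
    rw [heq] at h
    exact h
  -- conclude
  have h7 : d - f = ρ * (z * (f - g)) := by linear_combination -e2
  linarith



/-- **Nonexistence of interior equilibria of Model (1) (asymmetric predation
rates, small dispersal).**  Suppose `(i,j) = (1,2)` or `(i,j) = (2,1)`, with
`aᵢ > aⱼ`, `dᵢ > aᵢ` and
`ρᵢ < 4Kⱼaⱼ(aᵢ − aⱼ)(dᵢ − aᵢ)/(rⱼ(Kⱼaᵢ − Kⱼaⱼ + aᵢ)²)` (where `r₁ = 1`,
`r₂ = r`).  Then Model (1) has no interior equilibrium. -/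
theorem model1_no_interior_equilibrium_asymmetric
    (r a1 a2 K1 K2 d1 d2 ρ1 ρ2 : ℝ)
    (hr : 0 < r) (ha1 : 0 < a1) (ha2 : 0 < a2) (hK1 : 0 < K1) (hK2 : 0 < K2)
    (hd1 : 0 < d1) (hd2 : 0 < d2) (hρ1 : 0 ≤ ρ1) (hρ2 : 0 ≤ ρ2)
    (hcase :
      (a1 > a2 ∧ d1 > a1 ∧
        ρ1 < 4 * K2 * a2 * (a1 - a2) * (d1 - a1) /
              (r * (K2 * a1 - K2 * a2 + a1) ^ 2)) ∨
      (a2 > a1 ∧ d2 > a2 ∧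
        ρ2 < 4 * K1 * a1 * (a2 - a1) * (d2 - a2) /
              (1 * (K1 * a2 - K1 * a1 + a2) ^ 2))) :
    ¬ ∃ x1 y1 x2 y2 : ℝ, 0 < x1 ∧ 0 < y1 ∧ 0 < x2 ∧ 0 < y2 ∧
        x1 * (1 - x1 / K1) - a1 * x1 * y1 / (1 + x1) = 0 ∧
        a1 * x1 * y1 / (1 + x1) - d1 * y1 +
          ρ1 * (a1 * x1 * y1 * y2 / (1 + x1) - a2 * x2 * y1 * y2 / (1 + x2)) = 0 ∧
        r * x2 * (1 - x2 / K2) - a2 * x2 * y2 / (1 + x2) = 0 ∧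
        a2 * x2 * y2 / (1 + x2) - d2 * y2 +
          ρ2 * (a2 * x2 * y1 * y2 / (1 + x2) - a1 * x1 * y1 * y2 / (1 + x1)) = 0 := by
  rintro ⟨x1, y1, x2, y2, hx1, hy1, hx2, hy2, e1, e2, e3, e4⟩
  rcases hcase with ⟨ha, hd, hρ⟩ | ⟨ha, hd, hρ⟩
  · exact aux_no_eq r a1 a2 K2 d1 ρ1 x1 y1 x2 y2 hr ha1 ha2 hK2 hρ1 ha hd hρ
      hx1 hy1 hx2 hy2 e3 e2
  · refine aux_no_eq 1 a2 a1 K1 d2 ρ2 x2 y2 x1 y1 one_pos ha2 ha1 hK1 hρ2 ha hd hρ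
      hx2 hy2 hx1 hy1 ?_ ?_
    · linear_combination e1
    · linear_combination e4
end

section
/- Suppose a_1 = a_2 = a > 0 and either d_1 > a + r·ρ_1 or d_2 > a + ρ_2. Then Model (1) has no interior equilibrium: there is no point (x_1, y_1, x_2, y_2) with all four coordinates strictly positive at which all four right-hand sides of Model (1) vanish. -/
/-- **Nonexistence of interior equilibria of Model (1) (equal predation
rates, large death rates).**  Suppose `a₁ = a₂ = a > 0` and either
`d₁ > a + r·ρ₁` or `d₂ > a + ρ₂`.  Then Model (1) has no interior
equilibrium. -/
theorem model1_no_interior_equilibrium_equal_a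
    (r a K1 K2 d1 d2 ρ1 ρ2 : ℝ)
    (hr : 0 < r) (ha : 0 < a) (hK1 : 0 < K1) (hK2 : 0 < K2)
    (hd1 : 0 < d1) (hd2 : 0 < d2) (hρ1 : 0 ≤ ρ1) (hρ2 : 0 ≤ ρ2)
    (hcase : d1 > a + r * ρ1 ∨ d2 > a + ρ2) :
    ¬ ∃ x1 y1 x2 y2 : ℝ, 0 < x1 ∧ 0 < y1 ∧ 0 < x2 ∧ 0 < y2 ∧
        x1 * (1 - x1 / K1) - a * x1 * y1 / (1 + x1) = 0 ∧
        a * x1 * y1 / (1 + x1) - d1 * y1 +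
          ρ1 * (a * x1 * y1 * y2 / (1 + x1) - a * x2 * y1 * y2 / (1 + x2)) = 0 ∧
        r * x2 * (1 - x2 / K2) - a * x2 * y2 / (1 + x2) = 0 ∧
        a * x2 * y2 / (1 + x2) - d2 * y2 +
          ρ2 * (a * x2 * y1 * y2 / (1 + x2) - a * x1 * y1 * y2 / (1 + x1)) = 0 := by
  rintro ⟨x1, y1, x2, y2, hx1, hy1, hx2, hy2, e1, e2, e3, e4⟩
  have h1 : (1:ℝ) + x1 ≠ 0 := by positivity
  have h2 : (1:ℝ) + x2 ≠ 0 := by positivity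
  have h1' : (0:ℝ) < 1 + x1 := by positivity
  have h2' : (0:ℝ) < 1 + x2 := by positivity
  field_simp at e1 e2 e3 e4
  -- from e1 : x1 * (K1 - x1) * (1 + x1) - K1 * (a * x1 * y1) = 0
  have hE1 : (K1 - x1) * (1 + x1) = a * y1 * K1 := by
    have h : x1 * ((K1 - x1) * (1 + x1) - a * y1 * K1) = 0 := by linear_combination e1
    have := (mul_eq_zero.mp h).resolve_left hx1.ne'
    linarith
  have hx1K : x1 < K1 := by
    by_contra h; push_neg at h
    nlinarith [mul_nonneg (sub_nonneg.mpr h) h1'.le, mul_pos (mul_pos ha hy1) hK1]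
  have hE3 : r * (K2 - x2) * (1 + x2) = a * y2 * K2 := by
    have h : x2 * (r * (K2 - x2) * (1 + x2) - a * y2 * K2) = 0 := by linear_combination e3
    have := (mul_eq_zero.mp h).resolve_left hx2.ne'
    linarith
  have hx2K : x2 < K2 := by
    by_contra h; push_neg at h
    nlinarith [mul_nonneg (mul_nonneg hr.le (sub_nonneg.mpr h)) h2'.le,
      mul_pos (mul_pos ha hy2) hK2]
  -- cancel y1*(1+x1) in e2
  have hF1 : (a * x1 - (1 + x1) * d1) * (1 + x2) + ρ1 * (a * y2) * (x1 - x2) = 0 := by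
    have h : (y1 * (1 + x1)) *
        ((a * x1 - (1 + x1) * d1) * (1 + x2) + ρ1 * (a * y2) * (x1 - x2)) = 0 := by
      linear_combination (1 + x1) * e2
    exact (mul_eq_zero.mp h).resolve_left (by positivity)
  -- cancel y2*(1+x2) in e4
  have hF2 : (a * x2 - (1 + x2) * d2) * (1 + x1) + ρ2 * (a * y1) * (x2 - x1) = 0 := by
    have h : (y2 * (1 + x2)) *
        ((a * x2 - (1 + x2) * d2) * (1 + x1) + ρ2 * (a * y1) * (x2 - x1)) = 0 := by
      linear_combination (1 + x2) * e4
    exact (mul_eq_zero.mp h).resolve_left (by positivity)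
  rcases hcase with hc | hc
  · -- multiply hF1 by K2, substitute a*y2*K2, divide by (1+x2)
    have hG1 : (a * x1 - (1 + x1) * d1) * K2 + ρ1 * r * (K2 - x2) * (x1 - x2) = 0 := by
      have h : (1 + x2) *
          ((a * x1 - (1 + x1) * d1) * K2 + ρ1 * r * (K2 - x2) * (x1 - x2)) = 0 := by
        linear_combination K2 * hF1 + ρ1 * (x1 - x2) * hE3
      exact (mul_eq_zero.mp h).resolve_left h2
    clear e1 e2 e3 e4 hF1 hF2 hE1 hE3
    nlinarith [mul_nonneg (mul_nonneg hρ1 hr.le) (mul_pos hx2 (sub_pos.mpr hx2K)).le,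
      mul_nonneg (mul_nonneg hρ1 hr.le) (mul_pos hx1 hx2).le,
      mul_nonneg (mul_nonneg hρ1 hr.le) hK2.le,
      mul_pos (sub_pos.mpr hc) (mul_pos h1' hK2)]
  · have hG2 : (a * x2 - (1 + x2) * d2) * K1 + ρ2 * (K1 - x1) * (x2 - x1) = 0 := by
      have h : (1 + x1) *
          ((a * x2 - (1 + x2) * d2) * K1 + ρ2 * (K1 - x1) * (x2 - x1)) = 0 := by
        linear_combination K1 * hF2 + ρ2 * (x2 - x1) * hE1
      exact (mul_eq_zero.mp h).resolve_left h1
    clear e1 e2 e3 e4 hF1 hF2 hE1 hE3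
    nlinarith [mul_nonneg hρ2 (mul_pos hx1 (sub_pos.mpr hx1K)).le,
      mul_nonneg hρ2 (mul_pos hx1 hx2).le,
      mul_nonneg hρ2 hK1.le,
      mul_pos (sub_pos.mpr hc) (mul_pos h2' hK1)]
end

section
/- Suppose d_1 = d_2 = d > 0 with a_1 > d and a_2 > d, and set μ_1 = d/(a_1 − d), μ_2 = d/(a_2 − d), ν_1 = (K_1 − μ_1)(1 + μ_1)/(a_1K_1), ν_2 = r(K_2 − μ_2)(1 + μ_2)/(a_2K_2). If 0 < μ_i < K_i for both i = 1 and i = 2, then E^i = (μ_1, ν_1, μ_2, ν_2) is an interior equilibrium of Model (1): all four coordinates are strictly positive and all four right-hand sides of Model (1) vanish at E^i. -/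
/-- **An explicit interior equilibrium of Model (1) when `d₁ = d₂ = d`.**
With `μᵢ = d/(aᵢ − d)`, `ν₁ = (K₁ − μ₁)(1 + μ₁)/(a₁K₁)`,
`ν₂ = r(K₂ − μ₂)(1 + μ₂)/(a₂K₂)`, if `0 < μᵢ < Kᵢ` for `i = 1, 2` then
`Eⁱ = (μ₁, ν₁, μ₂, ν₂)` is an interior equilibrium of Model (1). -/
theorem model1_symmetric_death_interior_equilibrium
    (r a1 a2 K1 K2 d ρ1 ρ2 : ℝ)
    (hr : 0 < r) (ha1 : 0 < a1) (ha2 : 0 < a2) (hK1 : 0 < K1) (hK2 : 0 < K2)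
    (hd : 0 < d) (hρ1 : 0 ≤ ρ1) (hρ2 : 0 ≤ ρ2)
    (ha1d : a1 > d) (ha2d : a2 > d)
    (μ1 μ2 ν1 ν2 : ℝ)
    (hμ1 : μ1 = d / (a1 - d)) (hμ2 : μ2 = d / (a2 - d))
    (hν1 : ν1 = (K1 - μ1) * (1 + μ1) / (a1 * K1))
    (hν2 : ν2 = r * (K2 - μ2) * (1 + μ2) / (a2 * K2))
    (h1 : 0 < μ1 ∧ μ1 < K1) (h2 : 0 < μ2 ∧ μ2 < K2) :
    (0 < μ1 ∧ 0 < ν1 ∧ 0 < μ2 ∧ 0 < ν2) ∧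
    μ1 * (1 - μ1 / K1) - a1 * μ1 * ν1 / (1 + μ1) = 0 ∧
    a1 * μ1 * ν1 / (1 + μ1) - d * ν1 +
      ρ1 * (a1 * μ1 * ν1 * ν2 / (1 + μ1) - a2 * μ2 * ν1 * ν2 / (1 + μ2)) = 0 ∧
    r * μ2 * (1 - μ2 / K2) - a2 * μ2 * ν2 / (1 + μ2) = 0 ∧
    a2 * μ2 * ν2 / (1 + μ2) - d * ν2 +
      ρ2 * (a2 * μ2 * ν1 * ν2 / (1 + μ2) - a1 * μ1 * ν1 * ν2 / (1 + μ1)) = 0 := by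
  obtain ⟨hμ1pos, hμ1K⟩ := h1
  obtain ⟨hμ2pos, hμ2K⟩ := h2
  have h1ne : (1 : ℝ) + μ1 ≠ 0 := by positivity
  have h2ne : (1 : ℝ) + μ2 ≠ 0 := by positivity
  have hsub1 : a1 - d ≠ 0 := by linarith
  have hsub2 : a2 - d ≠ 0 := by linarith
  have hd1 : a1 * μ1 = d * (1 + μ1) := by
    rw [hμ1]; field_simp; ring
  have hd2 : a2 * μ2 = d * (1 + μ2) := by
    rw [hμ2]; field_simp; ring
  have hq1 : a1 * μ1 / (1 + μ1) = d := by
    rw [hd1, mul_div_assoc, div_self h1ne, mul_one]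
  have hq2 : a2 * μ2 / (1 + μ2) = d := by
    rw [hd2, mul_div_assoc, div_self h2ne, mul_one]
  have hν1pos : 0 < ν1 := by
    rw [hν1]
    have : 0 < K1 - μ1 := by linarith
    positivity
  have hν2pos : 0 < ν2 := by
    rw [hν2]
    have : 0 < K2 - μ2 := by linarith
    positivity
  refine ⟨⟨hμ1pos, hν1pos, hμ2pos, hν2pos⟩, ?_, ?_, ?_, ?_⟩
  · rw [hν1]
    field_simp
    ring
  · have e1 : a1 * μ1 * ν1 / (1 + μ1) = d * ν1 := by
      rw [show a1 * μ1 * ν1 = (a1 * μ1 / (1 + μ1)) * ν1 * (1 + μ1) by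
        field_simp, hq1]
      field_simp
    have e2 : a1 * μ1 * ν1 * ν2 / (1 + μ1) = d * ν1 * ν2 := by
      rw [show a1 * μ1 * ν1 * ν2 = (a1 * μ1 / (1 + μ1)) * ν1 * ν2 * (1 + μ1) by
        field_simp, hq1]
      field_simp
    have e3 : a2 * μ2 * ν1 * ν2 / (1 + μ2) = d * ν1 * ν2 := by
      rw [show a2 * μ2 * ν1 * ν2 = (a2 * μ2 / (1 + μ2)) * ν1 * ν2 * (1 + μ2) by
        field_simp, hq2]
      field_simp
    rw [e1, e2, e3]; ring
  · rw [hν2]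
    field_simp
    ring
  · have e1 : a2 * μ2 * ν2 / (1 + μ2) = d * ν2 := by
      rw [show a2 * μ2 * ν2 = (a2 * μ2 / (1 + μ2)) * ν2 * (1 + μ2) by
        field_simp, hq2]
      field_simp
    have e2 : a1 * μ1 * ν1 * ν2 / (1 + μ1) = d * ν1 * ν2 := by
      rw [show a1 * μ1 * ν1 * ν2 = (a1 * μ1 / (1 + μ1)) * ν1 * ν2 * (1 + μ1) by
        field_simp, hq1]
      field_simp
    have e3 : a2 * μ2 * ν1 * ν2 / (1 + μ2) = d * ν1 * ν2 := by
      rw [show a2 * μ2 * ν1 * ν2 = (a2 * μ2 / (1 + μ2)) * ν1 * ν2 * (1 + μ2) by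
        field_simp, hq2]
      field_simp
    rw [e1, e2, e3]; ring
end

section
/- Suppose d_1 = d_2 = d > 0 with a_1 > d and a_2 > d, and set μ_i = d/(a_i − d), ν_1 = (K_1 − μ_1)(1 + μ_1)/(a_1K_1), ν_2 = r(K_2 − μ_2)(1 + μ_2)/(a_2K_2). If (K_i − 1)/2 < μ_i < K_i for both i = 1 and i = 2, then every complex root of the characteristic polynomial of the Jacobian matrix of the right-hand side of Model (1) evaluated at the interior equilibrium E^i = (μ_1, ν_1, μ_2, ν_2) has strictly negative real part (so E^i is locally asymptotically stable). -/
open Polynomial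

/-- The right-hand side of Model (1), as a vector field on `ℝ⁴`,
with coordinates `p = (x₁, y₁, x₂, y₂)`. -/
noncomputable def model1RHS (r a1 a2 K1 K2 d1 d2 ρ1 ρ2 : ℝ)
    (p : Fin 4 → ℝ) : Fin 4 → ℝ :=
  ![p 0 * (1 - p 0 / K1) - a1 * p 0 * p 1 / (1 + p 0),
    a1 * p 0 * p 1 / (1 + p 0) - d1 * p 1 +
      ρ1 * (a1 * p 0 * p 1 * p 3 / (1 + p 0) - a2 * p 2 * p 1 * p 3 / (1 + p 2)),
    r * p 2 * (1 - p 2 / K2) - a2 * p 2 * p 3 / (1 + p 2),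
    a2 * p 2 * p 3 / (1 + p 2) - d2 * p 3 +
      ρ2 * (a2 * p 2 * p 1 * p 3 / (1 + p 2) - a1 * p 0 * p 1 * p 3 / (1 + p 0))]

/-- The Jacobian matrix of the right-hand side of Model (1): the `4 × 4`
matrix of partial derivatives with respect to `(x₁, y₁, x₂, y₂)`. -/
noncomputable def model1Jacobian (r a1 a2 K1 K2 d1 d2 ρ1 ρ2 : ℝ)
    (p : Fin 4 → ℝ) : Matrix (Fin 4) (Fin 4) ℝ :=
  Matrix.of fun i j =>
    fderiv ℝ (fun q : Fin 4 → ℝ => model1RHS r a1 a2 K1 K2 d1 d2 ρ1 ρ2 q i) p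
      (Pi.single j 1)

/-- Quotient rule for Fréchet derivatives of real-valued functions,
with the derivative in unnormalized form. -/
theorem model1_aux_div {E : Type*} [NormedAddCommGroup E] [NormedSpace ℝ E] {A B : E → ℝ}
    {A' B' : E →L[ℝ] ℝ} {x : E} (hA : HasFDerivAt A A' x) (hB : HasFDerivAt B B' x)
    (hB0 : B x ≠ 0) :
    HasFDerivAt (fun y => A y / B y)
      (A x • ((-(B x ^ 2)⁻¹) • B') + (B x)⁻¹ • A') x :=
  hA.mul ((hasDerivAt_inv hB0).comp_hasFDerivAt x hB)

open ContinuousLinearMap in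
set_option maxHeartbeats 2000000 in
/-- Explicit computation of the Jacobian matrix of Model (1). -/
theorem model1_jacobian_eq (r a1 a2 K1 K2 d1 d2 ρ1 ρ2 : ℝ) (hK1 : K1 ≠ 0) (hK2 : K2 ≠ 0)
    (p : Fin 4 → ℝ) (h0 : (1:ℝ) + p 0 ≠ 0) (h2 : (1:ℝ) + p 2 ≠ 0) :
    model1Jacobian r a1 a2 K1 K2 d1 d2 ρ1 ρ2 p =
    !![1 - 2*p 0/K1 - a1*p 1/(1+p 0)^2, -(a1*p 0/(1+p 0)), 0, 0;
       a1*p 1*(1+ρ1*p 3)/(1+p 0)^2,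
         a1*p 0/(1+p 0) - d1 + ρ1*p 3*(a1*p 0/(1+p 0) - a2*p 2/(1+p 2)),
         -(ρ1*a2*p 1*p 3/(1+p 2)^2), ρ1*p 1*(a1*p 0/(1+p 0) - a2*p 2/(1+p 2));
       0, 0, r*(1-2*p 2/K2) - a2*p 3/(1+p 2)^2, -(a2*p 2/(1+p 2));
       -(ρ2*a1*p 1*p 3/(1+p 0)^2), ρ2*p 3*(a2*p 2/(1+p 2) - a1*p 0/(1+p 0)),
         a2*p 3*(1+ρ2*p 1)/(1+p 2)^2,
         a2*p 2/(1+p 2) - d2 + ρ2*p 1*(a2*p 2/(1+p 2) - a1*p 0/(1+p 0))] := by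
  have hp0 : HasFDerivAt (fun q : Fin 4 → ℝ => q 0)
      (proj 0 : (Fin 4 → ℝ) →L[ℝ] ℝ) p := (proj 0 : (Fin 4 → ℝ) →L[ℝ] ℝ).hasFDerivAt
  have hp1 : HasFDerivAt (fun q : Fin 4 → ℝ => q 1)
      (proj 1 : (Fin 4 → ℝ) →L[ℝ] ℝ) p := (proj 1 : (Fin 4 → ℝ) →L[ℝ] ℝ).hasFDerivAt
  have hp2 : HasFDerivAt (fun q : Fin 4 → ℝ => q 2)
      (proj 2 : (Fin 4 → ℝ) →L[ℝ] ℝ) p := (proj 2 : (Fin 4 → ℝ) →L[ℝ] ℝ).hasFDerivAt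
  have hp3 : HasFDerivAt (fun q : Fin 4 → ℝ => q 3)
      (proj 3 : (Fin 4 → ℝ) →L[ℝ] ℝ) p := (proj 3 : (Fin 4 → ℝ) →L[ℝ] ℝ).hasFDerivAt
  have H0 : HasFDerivAt
      (fun q : Fin 4 → ℝ => q 0 * (1 - q 0 / K1) - a1 * q 0 * q 1 / (1 + q 0)) _ p :=
    (hp0.mul ((hasFDerivAt_const 1 p).sub (model1_aux_div hp0 (hasFDerivAt_const K1 p) hK1))).sub
      (model1_aux_div (((hasFDerivAt_const a1 p).mul hp0).mul hp1)
        ((hasFDerivAt_const 1 p).add hp0) h0)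
  have H1 : HasFDerivAt
      (fun q : Fin 4 → ℝ => a1 * q 0 * q 1 / (1 + q 0) - d1 * q 1 +
        ρ1 * (a1 * q 0 * q 1 * q 3 / (1 + q 0) - a2 * q 2 * q 1 * q 3 / (1 + q 2))) _ p :=
    ((model1_aux_div (((hasFDerivAt_const a1 p).mul hp0).mul hp1)
        ((hasFDerivAt_const 1 p).add hp0) h0).sub
      ((hasFDerivAt_const d1 p).mul hp1)).add
      ((hasFDerivAt_const ρ1 p).mul
        ((model1_aux_div ((((hasFDerivAt_const a1 p).mul hp0).mul hp1).mul hp3)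
            ((hasFDerivAt_const 1 p).add hp0) h0).sub
         (model1_aux_div ((((hasFDerivAt_const a2 p).mul hp2).mul hp1).mul hp3)
            ((hasFDerivAt_const 1 p).add hp2) h2)))
  have H2 : HasFDerivAt
      (fun q : Fin 4 → ℝ => r * q 2 * (1 - q 2 / K2) - a2 * q 2 * q 3 / (1 + q 2)) _ p :=
    (((hasFDerivAt_const r p).mul hp2).mul
        ((hasFDerivAt_const 1 p).sub (model1_aux_div hp2 (hasFDerivAt_const K2 p) hK2))).sub
      (model1_aux_div (((hasFDerivAt_const a2 p).mul hp2).mul hp3)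
        ((hasFDerivAt_const 1 p).add hp2) h2)
  have H3 : HasFDerivAt
      (fun q : Fin 4 → ℝ => a2 * q 2 * q 3 / (1 + q 2) - d2 * q 3 +
        ρ2 * (a2 * q 2 * q 1 * q 3 / (1 + q 2) - a1 * q 0 * q 1 * q 3 / (1 + q 0))) _ p :=
    ((model1_aux_div (((hasFDerivAt_const a2 p).mul hp2).mul hp3)
        ((hasFDerivAt_const 1 p).add hp2) h2).sub
      ((hasFDerivAt_const d2 p).mul hp3)).add
      ((hasFDerivAt_const ρ2 p).mul
        ((model1_aux_div ((((hasFDerivAt_const a2 p).mul hp2).mul hp1).mul hp3)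
            ((hasFDerivAt_const 1 p).add hp2) h2).sub
         (model1_aux_div ((((hasFDerivAt_const a1 p).mul hp0).mul hp1).mul hp3)
            ((hasFDerivAt_const 1 p).add hp0) h0)))
  ext i j
  fin_cases i
  · fin_cases j <;>
    · simp only [model1Jacobian, model1RHS, Matrix.of_apply]
      norm_num [Matrix.cons_val_zero, Matrix.cons_val_one, Matrix.head_cons,
        Matrix.cons_val_two, Matrix.cons_val_three, Matrix.tail_cons, Matrix.head_fin_const]
      rw [H0.fderiv]
      simp [ContinuousLinearMap.sub_apply, ContinuousLinearMap.add_apply,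
        ContinuousLinearMap.smul_apply, ContinuousLinearMap.proj_apply, smul_eq_mul,
        ContinuousLinearMap.zero_apply, ContinuousLinearMap.coe_smul', Pi.smul_apply,
        ContinuousLinearMap.coe_sub', Pi.sub_apply, ContinuousLinearMap.coe_add', Pi.add_apply,
        Pi.single_apply]
      try field_simp
      try ring
      try tauto
  · fin_cases j <;>
    · simp only [model1Jacobian, model1RHS, Matrix.of_apply]
      norm_num [Matrix.cons_val_zero, Matrix.cons_val_one, Matrix.head_cons,
        Matrix.cons_val_two, Matrix.cons_val_three, Matrix.tail_cons, Matrix.head_fin_const]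
      rw [H1.fderiv]
      simp [ContinuousLinearMap.sub_apply, ContinuousLinearMap.add_apply,
        ContinuousLinearMap.smul_apply, ContinuousLinearMap.proj_apply, smul_eq_mul,
        ContinuousLinearMap.zero_apply, ContinuousLinearMap.coe_smul', Pi.smul_apply,
        ContinuousLinearMap.coe_sub', Pi.sub_apply, ContinuousLinearMap.coe_add', Pi.add_apply,
        Pi.single_apply]
      try field_simp
      try ring
      try tauto
  · fin_cases j <;>
    · simp only [model1Jacobian, model1RHS, Matrix.of_apply]
      norm_num [Matrix.cons_val_zero, Matrix.cons_val_one, Matrix.head_cons,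
        Matrix.cons_val_two, Matrix.cons_val_three, Matrix.tail_cons, Matrix.head_fin_const]
      rw [H2.fderiv]
      simp [ContinuousLinearMap.sub_apply, ContinuousLinearMap.add_apply,
        ContinuousLinearMap.smul_apply, ContinuousLinearMap.proj_apply, smul_eq_mul,
        ContinuousLinearMap.zero_apply, ContinuousLinearMap.coe_smul', Pi.smul_apply,
        ContinuousLinearMap.coe_sub', Pi.sub_apply, ContinuousLinearMap.coe_add', Pi.add_apply,
        Pi.single_apply]
      try field_simp
      try ring
      try tauto
  · fin_cases j <;>
    · simp only [model1Jacobian, model1RHS, Matrix.of_apply]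
      norm_num [Matrix.cons_val_zero, Matrix.cons_val_one, Matrix.head_cons,
        Matrix.cons_val_two, Matrix.cons_val_three, Matrix.tail_cons, Matrix.head_fin_const]
      rw [H3.fderiv]
      simp [ContinuousLinearMap.sub_apply, ContinuousLinearMap.add_apply,
        ContinuousLinearMap.smul_apply, ContinuousLinearMap.proj_apply, smul_eq_mul,
        ContinuousLinearMap.zero_apply, ContinuousLinearMap.coe_smul', Pi.smul_apply,
        ContinuousLinearMap.coe_sub', Pi.sub_apply, ContinuousLinearMap.coe_add', Pi.add_apply,
        Pi.single_apply]
      try field_simp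
      try ring
      try tauto

set_option maxHeartbeats 2000000 in
/-- If `z` is a root of the (complexified) characteristic polynomial of a matrix of the
displayed shape, then `z` satisfies the corresponding quartic equation. -/
theorem model1_charpoly_root_eq (A1 A2 P Q R S dd : ℝ) (z : ℂ)
    (hz : (((!![A1,-dd,0,0; P,0,-Q,0; 0,0,A2,-dd; -R,0,S,0] :
        Matrix (Fin 4) (Fin 4) ℝ).charpoly).map (algebraMap ℝ ℂ)).IsRoot z) :
    (z^2 - A1*z + dd*P)*(z^2 - A2*z + dd*S) - ((dd^2*Q*R : ℝ) : ℂ) = 0 := by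
  set M : Matrix (Fin 4) (Fin 4) ℝ := !![A1,-dd,0,0; P,0,-Q,0; 0,0,A2,-dd; -R,0,S,0] with hM
  have h0 : Polynomial.eval₂ (algebraMap ℝ ℂ) z M.charpoly = 0 := by
    rwa [Polynomial.IsRoot, Polynomial.eval_map] at hz
  rw [Matrix.charpoly] at h0
  have h1 : Matrix.det ((Polynomial.eval₂RingHom (algebraMap ℝ ℂ) z).mapMatrix
      M.charmatrix) = 0 := by
    rw [← RingHom.map_det]; exact h0
  have h2 : ((Polynomial.eval₂RingHom (algebraMap ℝ ℂ) z).mapMatrix M.charmatrix)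
      = !![z-A1, dd, 0, 0; -P, z, Q, 0; 0, 0, z-A2, dd; R, 0, -S, z] := by
    ext i j
    fin_cases i <;> fin_cases j <;>
      simp [hM, Matrix.charmatrix_apply_eq, Matrix.charmatrix_apply_ne, Matrix.vecHead,
        Matrix.vecTail, Complex.ofReal_neg]
  rw [h2] at h1
  have h3 := h1
  simp only [Matrix.det_succ_row_zero, Fin.sum_univ_succ, Matrix.det_fin_three] at h3
  simp [Matrix.vecHead, Matrix.vecTail, Fin.sum_univ_zero, Matrix.submatrix_apply,
    Fin.succAbove, Fin.lt_def, Fin.castSucc, Fin.castAdd, Fin.castLE, Fin.succ] at h3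
  push_cast
  linear_combination h3

/-- Routh–Hurwitz criterion for a quartic: if all coefficients are positive and
`a*b*c - c^2 - a^2*e > 0`, then every complex root has negative real part. -/
theorem model1_rh4 (a b c e : ℝ) (ha : 0 < a) (hb : 0 < b) (hc : 0 < c) (he : 0 < e)
    (hΔ : 0 < a*b*c - c^2 - a^2*e) (z : ℂ)
    (hz : z^4 + (a:ℂ)*z^3 + (b:ℂ)*z^2 + (c:ℂ)*z + (e:ℂ) = 0) : z.re < 0 := by
  by_contra hcon
  push_neg at hcon
  obtain ⟨x, y⟩ := z
  simp only [Complex.ext_iff, pow_succ, pow_zero, one_mul, Complex.mul_re, Complex.mul_im,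
    Complex.add_re, Complex.add_im, Complex.ofReal_re, Complex.ofReal_im, Complex.zero_re,
    Complex.zero_im] at hz
  obtain ⟨hRe, hIm⟩ := hz
  have hx : 0 ≤ x := hcon
  have hIm' : y * ((4*x^3+3*a*x^2+2*b*x+c) - y^2*(4*x+a)) = 0 := by linear_combination hIm
  rcases mul_eq_zero.mp hIm' with hy | hN
  · rw [hy] at hRe
    nlinarith [pow_nonneg hx 4, pow_nonneg hx 3, pow_nonneg hx 2,
      mul_nonneg (pow_nonneg hx 3) ha.le, mul_nonneg (pow_nonneg hx 2) hb.le,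
      mul_nonneg hx hc.le]
  · set N : ℝ := 4*x^3+3*a*x^2+2*b*x+c with hNdef
    set S : ℝ := 4*x+a with hSdef
    set Q : ℝ := 6*x^2+3*a*x+b with hQdef
    set P : ℝ := x^4+a*x^3+b*x^2+c*x+e with hPdef
    have hRe' : y^4 - Q*y^2 + P = 0 := by rw [hQdef, hPdef]; linear_combination hRe
    have hF : N^2 - Q*N*S + P*S^2 = 0 := by
      linear_combination (N + y^2*S - Q*S) * hN + S^2 * hRe'
    have key : a^2*(N^2 - Q*N*S + P*S^2) =
        -(a*b*c - c^2 - a^2*e)*(4*x+a)^2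
        - (64*a^2*x^6 + 96*a^3*x^5 + (32*a^2*b+48*a^4)*x^4 + (32*a^3*b+8*a^5)*x^3
           + (4*(a*b-2*c)^2 + 4*a^3*c + 8*a^4*b)*x^2 + (2*a*(a*b-2*c)^2 + 2*a^4*c)*x) := by
      rw [hNdef, hSdef, hQdef, hPdef]; ring
    have hS : 0 < 4*x + a := by linarith
    have hD : 0 ≤ 64*a^2*x^6 + 96*a^3*x^5 + (32*a^2*b+48*a^4)*x^4 + (32*a^3*b+8*a^5)*x^3
        + (4*(a*b-2*c)^2 + 4*a^3*c + 8*a^4*b)*x^2 + (2*a*(a*b-2*c)^2 + 2*a^4*c)*x := by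
      have h1 : (0:ℝ) ≤ 64*a^2*x^6 := by positivity
      have h2 : (0:ℝ) ≤ 96*a^3*x^5 := by positivity
      have h3 : (0:ℝ) ≤ (32*a^2*b+48*a^4)*x^4 := by positivity
      have h4 : (0:ℝ) ≤ (32*a^3*b+8*a^5)*x^3 := by positivity
      have h5 : (0:ℝ) ≤ (4*(a*b-2*c)^2 + 4*a^3*c + 8*a^4*b)*x^2 := by positivity
      have h6 : (0:ℝ) ≤ (2*a*(a*b-2*c)^2 + 2*a^4*c)*x := by positivity
      linarith
    have hΔS : 0 < (a*b*c - c^2 - a^2*e)*(4*x+a)^2 := by positivity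
    rw [hF] at key
    linarith

set_option maxHeartbeats 2000000 in
/-- **Local asymptotic stability of the interior equilibrium
`Eⁱ = (μ₁, ν₁, μ₂, ν₂)` when `d₁ = d₂ = d`.**  If `(Kᵢ − 1)/2 < μᵢ < Kᵢ` for
both `i = 1, 2`, then every complex root of the characteristic polynomial of
the Jacobian of Model (1) at `Eⁱ` has strictly negative real part. -/
theorem model1_interior_equilibrium_stable
    (r a1 a2 K1 K2 d ρ1 ρ2 : ℝ)
    (hr : 0 < r) (ha1 : 0 < a1) (ha2 : 0 < a2) (hK1 : 0 < K1) (hK2 : 0 < K2)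
    (hd : 0 < d) (hρ1 : 0 ≤ ρ1) (hρ2 : 0 ≤ ρ2)
    (ha1d : a1 > d) (ha2d : a2 > d)
    (μ1 μ2 ν1 ν2 : ℝ)
    (hμ1 : μ1 = d / (a1 - d)) (hμ2 : μ2 = d / (a2 - d))
    (hν1 : ν1 = (K1 - μ1) * (1 + μ1) / (a1 * K1))
    (hν2 : ν2 = r * (K2 - μ2) * (1 + μ2) / (a2 * K2))
    (h1 : (K1 - 1) / 2 < μ1 ∧ μ1 < K1)
    (h2 : (K2 - 1) / 2 < μ2 ∧ μ2 < K2) :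
    ∀ z : ℂ,
      ((model1Jacobian r a1 a2 K1 K2 d d ρ1 ρ2 ![μ1, ν1, μ2, ν2]).charpoly.map
        (algebraMap ℝ ℂ)).IsRoot z → z.re < 0 := by
  intro z hz
  obtain ⟨h1a, h1b⟩ := h1
  obtain ⟨h2a, h2b⟩ := h2
  have ha1d' : (0:ℝ) < a1 - d := sub_pos.mpr ha1d
  have ha2d' : (0:ℝ) < a2 - d := sub_pos.mpr ha2d
  have hμ1pos : 0 < μ1 := by rw [hμ1]; positivity
  have hμ2pos : 0 < μ2 := by rw [hμ2]; positivity
  have h1μ1 : (0:ℝ) < 1 + μ1 := by linarith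
  have h1μ2 : (0:ℝ) < 1 + μ2 := by linarith
  have hne1 : (1:ℝ) + μ1 ≠ 0 := ne_of_gt h1μ1
  have hne2 : (1:ℝ) + μ2 ≠ 0 := ne_of_gt h1μ2
  have hν1pos : 0 < ν1 := by
    rw [hν1]; exact div_pos (mul_pos (by linarith) h1μ1) (mul_pos ha1 hK1)
  have hν2pos : 0 < ν2 := by
    rw [hν2]; exact div_pos (mul_pos (mul_pos hr (by linarith)) h1μ2) (mul_pos ha2 hK2)
  have hmu1rel : μ1 * (a1 - d) = d := by rw [hμ1]; field_simp
  have hmu2rel : μ2 * (a2 - d) = d := by rw [hμ2]; field_simp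
  have hf1 : a1 * μ1 / (1 + μ1) = d := by
    rw [div_eq_iff hne1]; linear_combination hmu1rel
  have hf2 : a2 * μ2 / (1 + μ2) = d := by
    rw [div_eq_iff hne2]; linear_combination hmu2rel
  -- auxiliary positive constants
  obtain ⟨α1v, hα1v⟩ : ∃ t : ℝ, t = μ1*(2*μ1+1-K1)/(K1*(1+μ1)) := ⟨_, rfl⟩
  obtain ⟨α2v, hα2v⟩ : ∃ t : ℝ, t = r*μ2*(2*μ2+1-K2)/(K2*(1+μ2)) := ⟨_, rfl⟩
  obtain ⟨b1v, hb1v⟩ : ∃ t : ℝ, t = a1*ν1/(1+μ1)^2 := ⟨_, rfl⟩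
  obtain ⟨b2v, hb2v⟩ : ∃ t : ℝ, t = a2*ν2/(1+μ2)^2 := ⟨_, rfl⟩
  obtain ⟨Pv, hPv⟩ : ∃ t : ℝ, t = b1v*(1+ρ1*ν2) := ⟨_, rfl⟩
  obtain ⟨Qv, hQv⟩ : ∃ t : ℝ, t = ρ1*b2v*ν1 := ⟨_, rfl⟩
  obtain ⟨Rv, hRv⟩ : ∃ t : ℝ, t = ρ2*b1v*ν2 := ⟨_, rfl⟩
  obtain ⟨Sv, hSv⟩ : ∃ t : ℝ, t = b2v*(1+ρ2*ν1) := ⟨_, rfl⟩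
  have hα1pos : 0 < α1v := by
    rw [hα1v]; exact div_pos (mul_pos hμ1pos (by linarith)) (mul_pos hK1 h1μ1)
  have hα2pos : 0 < α2v := by
    rw [hα2v]; exact div_pos (mul_pos (mul_pos hr hμ2pos) (by linarith)) (mul_pos hK2 h1μ2)
  have hb1pos : 0 < b1v := by
    rw [hb1v]; exact div_pos (mul_pos ha1 hν1pos) (pow_pos h1μ1 2)
  have hb2pos : 0 < b2v := by
    rw [hb2v]; exact div_pos (mul_pos ha2 hν2pos) (pow_pos h1μ2 2)
  have hρν1 : 0 ≤ ρ1*ν2 := mul_nonneg hρ1 hν2pos.le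
  have hρν2 : 0 ≤ ρ2*ν1 := mul_nonneg hρ2 hν1pos.le
  have hc1pos : (0:ℝ) < 1 + ρ1*ν2 := by linarith
  have hc2pos : (0:ℝ) < 1 + ρ2*ν1 := by linarith
  have hPpos : 0 < Pv := by rw [hPv]; exact mul_pos hb1pos hc1pos
  have hSpos : 0 < Sv := by rw [hSv]; exact mul_pos hb2pos hc2pos
  have hQnn : 0 ≤ Qv := by
    rw [hQv]; exact mul_nonneg (mul_nonneg hρ1 hb2pos.le) hν1pos.le
  have hRnn : 0 ≤ Rv := by
    rw [hRv]; exact mul_nonneg (mul_nonneg hρ2 hb1pos.le) hν2pos.le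
  -- the Jacobian at the equilibrium
  have e0 : (![μ1, ν1, μ2, ν2] : Fin 4 → ℝ) 0 = μ1 := rfl
  have e1 : (![μ1, ν1, μ2, ν2] : Fin 4 → ℝ) 1 = ν1 := rfl
  have e2 : (![μ1, ν1, μ2, ν2] : Fin 4 → ℝ) 2 = μ2 := rfl
  have e3 : (![μ1, ν1, μ2, ν2] : Fin 4 → ℝ) 3 = ν2 := rfl
  have h00 : 1 - 2*μ1/K1 - a1*ν1/(1+μ1)^2 = -α1v := by
    rw [hα1v, hν1]; field_simp; ring
  have hd1 : -(a1*μ1/(1+μ1)) = -d := by rw [hf1]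
  have h10 : a1*ν1*(1+ρ1*ν2)/(1+μ1)^2 = Pv := by rw [hPv, hb1v]; ring
  have h11 : a1*μ1/(1+μ1) - d + ρ1*ν2*(a1*μ1/(1+μ1) - a2*μ2/(1+μ2)) = 0 := by
    rw [hf1, hf2]; ring
  have h12 : -(ρ1*a2*ν1*ν2/(1+μ2)^2) = -Qv := by rw [hQv, hb2v]; ring
  have h13 : ρ1*ν1*(a1*μ1/(1+μ1) - a2*μ2/(1+μ2)) = 0 := by rw [hf1, hf2]; ring
  have h22 : r*(1-2*μ2/K2) - a2*ν2/(1+μ2)^2 = -α2v := by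
    rw [hα2v, hν2]; field_simp; ring
  have hd2 : -(a2*μ2/(1+μ2)) = -d := by rw [hf2]
  have h30 : -(ρ2*a1*ν1*ν2/(1+μ1)^2) = -Rv := by rw [hRv, hb1v]; ring
  have h31 : ρ2*ν2*(a2*μ2/(1+μ2) - a1*μ1/(1+μ1)) = 0 := by rw [hf1, hf2]; ring
  have h32 : a2*ν2*(1+ρ2*ν1)/(1+μ2)^2 = Sv := by rw [hSv, hb2v]; ring
  have h33 : a2*μ2/(1+μ2) - d + ρ2*ν1*(a2*μ2/(1+μ2) - a1*μ1/(1+μ1)) = 0 := by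
    rw [hf1, hf2]; ring
  have hJ2 : model1Jacobian r a1 a2 K1 K2 d d ρ1 ρ2 ![μ1, ν1, μ2, ν2] =
      !![-α1v, -d, 0, 0; Pv, 0, -Qv, 0; 0, 0, -α2v, -d; -Rv, 0, Sv, 0] := by
    rw [model1_jacobian_eq r a1 a2 K1 K2 d d ρ1 ρ2 (ne_of_gt hK1) (ne_of_gt hK2)
      ![μ1, ν1, μ2, ν2] (by rw [e0]; exact hne1) (by rw [e2]; exact hne2)]
    rw [e0, e1, e2, e3, h00, hd1, h10, h11, h12, h13, h22, hd2, h30, h31, h32, h33]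
  rw [hJ2] at hz
  have hroot := model1_charpoly_root_eq (-α1v) (-α2v) Pv Qv Rv Sv d z hz
  -- quartic coefficients
  have hquartic : z^4 + ((α1v+α2v : ℝ) : ℂ)*z^3 + ((α1v*α2v + d*Pv + d*Sv : ℝ) : ℂ)*z^2
      + ((d*(α1v*Sv + α2v*Pv) : ℝ) : ℂ)*z + ((d^2*(Pv*Sv - Qv*Rv) : ℝ) : ℂ) = 0 := by
    push_cast at hroot ⊢
    linear_combination hroot
  have hapos : (0:ℝ) < α1v + α2v := by linarith
  have hbpos : (0:ℝ) < α1v*α2v + d*Pv + d*Sv :=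
    add_pos (add_pos (mul_pos hα1pos hα2pos) (mul_pos hd hPpos)) (mul_pos hd hSpos)
  have hcpos : (0:ℝ) < d*(α1v*Sv + α2v*Pv) :=
    mul_pos hd (add_pos (mul_pos hα1pos hSpos) (mul_pos hα2pos hPpos))
  have hePSQR : Pv*Sv - Qv*Rv = b1v*b2v*(1+ρ1*ν2+ρ2*ν1) := by
    rw [hPv, hSv, hQv, hRv]; ring
  have hepos : (0:ℝ) < d^2*(Pv*Sv - Qv*Rv) := by
    rw [hePSQR]
    exact mul_pos (pow_pos hd 2) (mul_pos (mul_pos hb1pos hb2pos) (by linarith))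
  have hΔpos : (0:ℝ) < (α1v+α2v)*(α1v*α2v + d*Pv + d*Sv)*(d*(α1v*Sv + α2v*Pv))
      - (d*(α1v*Sv + α2v*Pv))^2 - (α1v+α2v)^2*(d^2*(Pv*Sv - Qv*Rv)) := by
    have keyΔ : (α1v+α2v)*(α1v*α2v + d*Pv + d*Sv)*(d*(α1v*Sv + α2v*Pv))
        - (d*(α1v*Sv + α2v*Pv))^2 - (α1v+α2v)^2*(d^2*(Pv*Sv - Qv*Rv))
        = d*α1v*α2v*(α1v+α2v)*(α1v*Sv+α2v*Pv) + d^2*α1v*α2v*(Pv-Sv)^2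
          + d^2*(α1v+α2v)^2*(Qv*Rv) := by ring
    have t1 : (0:ℝ) < d*α1v*α2v*(α1v+α2v)*(α1v*Sv+α2v*Pv) :=
      mul_pos (mul_pos (mul_pos (mul_pos hd hα1pos) hα2pos) hapos)
        (add_pos (mul_pos hα1pos hSpos) (mul_pos hα2pos hPpos))
    have t2 : (0:ℝ) ≤ d^2*α1v*α2v*(Pv-Sv)^2 := by positivity
    have t3 : (0:ℝ) ≤ d^2*(α1v+α2v)^2*(Qv*Rv) :=
      mul_nonneg (by positivity) (mul_nonneg hQnn hRnn)
    linarith [keyΔ]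
  exact model1_rh4 (α1v+α2v) (α1v*α2v + d*Pv + d*Sv) (d*(α1v*Sv + α2v*Pv))
    (d^2*(Pv*Sv - Qv*Rv)) hapos hbpos hcpos hepos hΔpos z hquartic
end
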